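/- arXiv:2005.09799 — 7 statements merged into one kernel-verified Lean document; each statement's English description precedes it below -/
import Mathlib

section
/- Let (W,S) be a Coxeter system with W finite, σ a length-preserving automorphism of W, and w₀ the longest element. For every x ∈ W with x ≤ σ(x)w₀ in the Bruhat order, one has ℓ_R(x w₀ σ(x)⁻¹) ≤ ℓ(w₀) − 2ℓ(x). Consequently ℓ_R(O) ≤ ℓ(w₀) − 2·max{ℓ(x) : x ≤ σ(x)w₀}, where O is the σ-conjugacy class of w₀. -/
set_option linter.unusedSectionVars false
set_option maxHeartbeats 1000000

open List

namespace S3Aux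

variable {B W : Type*} [Group W] {M : CoxeterMatrix B} (cs : CoxeterSystem M W)

open CoxeterSystem

noncomputable def ind (t x : W) : ZMod 2 := by
  classical exact if x = t then 1 else 0

theorem ind_pos {t x : W} (h : x = t) : ind t x = 1 := by simp [ind, h]

theorem ind_neg {t x : W} (h : x ≠ t) : ind t x = 0 := by simp [ind, h]

theorem ind_congr {t t' x y : W} (h : x = t ↔ y = t') : ind t x = ind t' y := by
  by_cases hx : x = t
  · rw [ind_pos hx, ind_pos (h.mp hx)]
  · rw [ind_neg hx, ind_neg (fun hy => hx (h.mpr hy))]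

noncomputable def cnt (t : W) (l : List W) : ZMod 2 := (l.map (ind t)).sum

@[simp] theorem cnt_nil (t : W) : cnt t ([] : List W) = 0 := rfl

theorem cnt_cons (t x : W) (l : List W) : cnt t (x :: l) = ind t x + cnt t l := by
  simp [cnt]

theorem cnt_append (t : W) (l l' : List W) : cnt t (l ++ l') = cnt t l + cnt t l' := by
  simp [cnt]

theorem mem_of_cnt_ne_zero {t : W} {l : List W} (h : cnt t l ≠ 0) : t ∈ l := by
  induction l with
  | nil => simp at h
  | cons x l ih =>
    by_cases hx : x = t
    · simp [hx]
    · rw [cnt_cons, ind_neg hx, zero_add] at h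
      exact mem_cons_of_mem x (ih h)

/-! ### The permutation action on `W × ZMod 2` -/

noncomputable def etaFun (i : B) : W × ZMod 2 → W × ZMod 2 :=
  fun p => (cs.simple i * p.1 * cs.simple i, p.2 + ind (cs.simple i) p.1)

theorem etaFun_involutive (i : B) : Function.Involutive (etaFun cs i) := by
  intro p
  unfold etaFun
  have h1 : cs.simple i * (cs.simple i * p.1 * cs.simple i) * cs.simple i = p.1 := by
    rw [← mul_assoc, ← mul_assoc, cs.simple_mul_simple_self, one_mul, mul_assoc,
      cs.simple_mul_simple_self, mul_one]
  have h2 : ind (cs.simple i) (cs.simple i * p.1 * cs.simple i) = ind (cs.simple i) p.1 := by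
    apply ind_congr
    constructor
    · intro h
      have := congrArg (fun z => cs.simple i * z * cs.simple i) h
      simpa [h1] using this
    · intro h
      rw [h, cs.simple_mul_simple_self, one_mul]
  refine Prod.ext h1 ?_
  show p.2 + ind (cs.simple i) p.1 + ind (cs.simple i) (cs.simple i * p.1 * cs.simple i) = p.2
  rw [h2]
  have : ∀ a b : ZMod 2, a + b + b = a := by decide
  exact this _ _

noncomputable def eta (i : B) : Equiv.Perm (W × ZMod 2) :=
  (etaFun_involutive cs i).toPerm

theorem eta_apply (i : B) (p : W × ZMod 2) :
    eta cs i p = (cs.simple i * p.1 * cs.simple i, p.2 + ind (cs.simple i) p.1) := rfl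

theorem prod_eta (ω : List B) (t : W) (ε : ZMod 2) :
    ((ω.map (eta cs)).prod) (t, ε) =
      (cs.wordProd ω * t * (cs.wordProd ω)⁻¹, ε + cnt t (cs.rightInvSeq ω)) := by
  induction ω generalizing ε with
  | nil => simp [cs.wordProd_nil]
  | cons i ω ih =>
    rw [map_cons, prod_cons, Equiv.Perm.mul_apply, ih, eta_apply]
    have hris : cs.rightInvSeq (i :: ω) =
        ((cs.wordProd ω)⁻¹ * cs.simple i * cs.wordProd ω) :: cs.rightInvSeq ω := rfl
    rw [hris, cnt_cons]
    refine Prod.ext ?_ ?_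
    · show cs.simple i * (cs.wordProd ω * t * (cs.wordProd ω)⁻¹) * cs.simple i =
        cs.wordProd (i :: ω) * t * (cs.wordProd (i :: ω))⁻¹
      rw [cs.wordProd_cons]
      rw [mul_inv_rev, cs.inv_simple]
      group
    · show ε + cnt t (cs.rightInvSeq ω) +
        ind (cs.simple i) (cs.wordProd ω * t * (cs.wordProd ω)⁻¹) =
        ε + (ind t ((cs.wordProd ω)⁻¹ * cs.simple i * cs.wordProd ω) + cnt t (cs.rightInvSeq ω))
      have : ind (cs.simple i) (cs.wordProd ω * t * (cs.wordProd ω)⁻¹) =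
          ind t ((cs.wordProd ω)⁻¹ * cs.simple i * cs.wordProd ω) := by
        apply ind_congr
        constructor
        · intro h
          rw [← h]; group
        · intro h
          rw [← h]; group
      rw [this]; ring


/-! ### Inversion sequences of alternating words -/

theorem simple_conj_pow (i i' : B) (a : ℤ) :
    cs.simple i' * (cs.simple i * cs.simple i') ^ a =
      (cs.simple i * cs.simple i') ^ (-a) * cs.simple i' := by
  have key : cs.simple i' * (cs.simple i * cs.simple i') * (cs.simple i')⁻¹ =
      (cs.simple i * cs.simple i')⁻¹ := by
    rw [cs.inv_simple, mul_inv_rev, cs.inv_simple, cs.inv_simple, ← mul_assoc, mul_assoc,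
      cs.simple_mul_simple_self, mul_one]
  have h2 : cs.simple i' * (cs.simple i * cs.simple i') ^ a * (cs.simple i')⁻¹ =
      (cs.simple i * cs.simple i') ^ (-a) := by
    have := map_zpow (MulAut.conj (cs.simple i')) (cs.simple i * cs.simple i') a
    simp only [MulAut.conj_apply] at this
    rw [this, key, ← zpow_neg_one, ← zpow_mul]
    ring_nf
  calc cs.simple i' * (cs.simple i * cs.simple i') ^ a
      = cs.simple i' * (cs.simple i * cs.simple i') ^ a * (cs.simple i')⁻¹ * cs.simple i' := by
        group
    _ = (cs.simple i * cs.simple i') ^ (-a) * cs.simple i' := by rw [h2]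

theorem getD_ris_alternatingWord (i i' : B) (N : ℕ) :
    ∀ j : ℕ, j < N → (cs.rightInvSeq (alternatingWord i i' N)).getD j 1 =
      (cs.simple i * cs.simple i') ^ ((j : ℤ) + 1 - N) * cs.simple i' := by
  induction N with
  | zero => intro j hj; omega
  | succ N ih =>
    intro j hj
    rw [alternatingWord_succ']
    have hris : cs.rightInvSeq ((if Even N then i' else i) :: alternatingWord i i' N) =
        ((cs.wordProd (alternatingWord i i' N))⁻¹ * cs.simple (if Even N then i' else i)
          * cs.wordProd (alternatingWord i i' N)) :: cs.rightInvSeq (alternatingWord i i' N) :=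
      rfl
    rw [hris]
    match j with
    | 0 =>
      rw [List.getD_cons_zero]
      rw [cs.prod_alternatingWord_eq_mul_pow]
      rcases Nat.even_or_odd N with hN | hN
      · have hN' := hN
        obtain ⟨k, hk⟩ := hN'
        have hk2 : N / 2 = k := by omega
        simp only [if_pos hN, hk2, one_mul]
        rw [mul_assoc, ← zpow_natCast (cs.simple i * cs.simple i') k,
          simple_conj_pow cs i i', ← zpow_neg, ← mul_assoc, ← zpow_add]
        have hexp : (-(k:ℤ)) + (-(k:ℤ)) = ((0:ℕ):ℤ) + 1 - ((N+1 : ℕ):ℤ) := by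
          push_cast
          omega
        rw [hexp]
      · have hNe : ¬ Even N := Nat.not_even_iff_odd.mpr hN
        obtain ⟨k, hk⟩ := hN
        have hk2 : N / 2 = k := by omega
        simp only [if_neg hNe, hk2]
        have hq : cs.simple i' * cs.simple i = (cs.simple i * cs.simple i')⁻¹ := by
          rw [mul_inv_rev, cs.inv_simple, cs.inv_simple]
        calc (cs.simple i' * (cs.simple i * cs.simple i') ^ k)⁻¹ * cs.simple i *
              (cs.simple i' * (cs.simple i * cs.simple i') ^ k)
            = ((cs.simple i * cs.simple i') ^ (k:ℤ))⁻¹ *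
              ((cs.simple i' * cs.simple i) *
                (cs.simple i' * (cs.simple i * cs.simple i') ^ (k:ℤ))) := by
              rw [zpow_natCast, mul_inv_rev, cs.inv_simple]
              group
          _ = ((cs.simple i * cs.simple i') ^ (k:ℤ))⁻¹ *
              ((cs.simple i * cs.simple i')⁻¹ *
                ((cs.simple i * cs.simple i') ^ (-(k:ℤ)) * cs.simple i')) := by
              rw [hq, simple_conj_pow]
          _ = (cs.simple i * cs.simple i') ^ (-(k:ℤ) + (-1) + (-(k:ℤ))) * cs.simple i' := by
              rw [← zpow_neg, ← zpow_neg_one (cs.simple i * cs.simple i'), ← mul_assoc,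
                ← mul_assoc, ← zpow_add, ← zpow_add]
          _ = (cs.simple i * cs.simple i') ^ (((0:ℕ):ℤ) + 1 - ((N+1 : ℕ):ℤ)) *
              cs.simple i' := by
              have hexp : (-(k:ℤ)) + (-1) + (-(k:ℤ)) = ((0:ℕ):ℤ) + 1 - ((N+1 : ℕ):ℤ) := by
                push_cast
                omega
              rw [hexp]
    | (j+1) =>
      rw [List.getD_cons_succ, ih j (by omega)]
      congr 1
      congr 1
      push_cast
      ring


theorem ris_alternatingWord (i i' : B) (N : ℕ) :
    cs.rightInvSeq (alternatingWord i i' N) =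
      (List.range N).map
        (fun j : ℕ => (cs.simple i * cs.simple i') ^ ((j : ℤ) + 1 - (N : ℤ)) * cs.simple i') := by
  apply List.ext_getElem
  · simp
  · intro j h1 h2
    have hj : j < N := by simpa using h2
    have := getD_ris_alternatingWord cs i i' N j hj
    rw [List.getD_eq_getElem _ _ h1] at this
    rw [this]
    simp

theorem prod_map_alternatingWord {G : Type*} [Monoid G] (f : B → G) (i i' : B) (N : ℕ) :
    ((alternatingWord i i' N).map f).prod =
      (if Even N then 1 else f i') * (f i * f i') ^ (N / 2) := by
  induction N with
  | zero => simp [alternatingWord]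
  | succ N ih =>
    rw [alternatingWord_succ', map_cons, prod_cons, ih]
    rcases Nat.even_or_odd N with hN | hN
    · have hNe : ¬ Even (N + 1) := by simp [Nat.even_add_one, hN]
      have hdiv : (N + 1) / 2 = N / 2 := by
        obtain ⟨k, hk⟩ := hN
        omega
      simp only [if_pos hN, if_neg hNe, hdiv, one_mul]
    · have hNe : ¬ Even N := Nat.not_even_iff_odd.mpr hN
      have hNe2 : Even (N + 1) := by simp [Nat.even_add_one, hNe]
      have hdiv : (N + 1) / 2 = N / 2 + 1 := by
        obtain ⟨k, hk⟩ := hN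
        omega
      simp only [if_neg hNe, if_pos hNe2, hdiv, one_mul, pow_succ']
      simp [mul_assoc]

theorem cnt_ris_braidWord (i i' : B) (t : W) :
    cnt t (cs.rightInvSeq (alternatingWord i i' (2 * M i i'))) = 0 := by
  rw [ris_alternatingWord]
  have hsplit : List.range (2 * M i i') = List.range (M i i') ++
      (List.range (M i i')).map (fun j => M i i' + j) := by
    rw [two_mul, List.range_add]
  rw [hsplit, List.map_append, cnt_append, List.map_map]
  have hmapeq : ((List.range (M i i')).map
        ((fun j : ℕ => (cs.simple i * cs.simple i') ^ ((j : ℤ) + 1 - ((2 * M i i' : ℕ) : ℤ)) *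
          cs.simple i') ∘ (fun j : ℕ => M i i' + j))) =
      ((List.range (M i i')).map
        (fun j : ℕ => (cs.simple i * cs.simple i') ^ ((j : ℤ) + 1 - ((2 * M i i' : ℕ) : ℤ)) *
          cs.simple i')) := by
    apply List.map_congr_left
    intro j hj
    simp only [Function.comp_apply]
    congr 1
    have hpow : (cs.simple i * cs.simple i') ^ ((M i i' : ℤ)) = 1 := by
      rw [zpow_natCast, cs.simple_mul_simple_pow]
    have : ((M i i' + j : ℕ) : ℤ) + 1 - ((2 * M i i' : ℕ) : ℤ) =
        ((M i i' : ℤ)) + ((j : ℤ) + 1 - ((2 * M i i' : ℕ) : ℤ)) := by push_cast; ring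
    rw [this, zpow_add, hpow, one_mul]
  rw [hmapeq]
  have : ∀ a : ZMod 2, a + a = 0 := by decide
  exact this _

theorem eta_liftable : M.IsLiftable (eta cs) := by
  intro i i'
  have hprod : (eta cs i * eta cs i') ^ M i i' =
      ((alternatingWord i i' (2 * M i i')).map (eta cs)).prod := by
    rw [prod_map_alternatingWord]
    have he : Even (2 * M i i') := ⟨M i i', by ring⟩
    have hd : 2 * M i i' / 2 = M i i' := by omega
    rw [if_pos he, hd, one_mul]
  rw [hprod]
  apply Equiv.ext
  rintro ⟨t, ε⟩
  rw [prod_eta]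
  have hπ : cs.wordProd (alternatingWord i i' (2 * M i i')) = 1 := by
    rw [cs.prod_alternatingWord_eq_mul_pow]
    have he : Even (2 * M i i') := ⟨M i i', by ring⟩
    have hd : 2 * M i i' / 2 = M i i' := by omega
    rw [if_pos he, hd, one_mul, cs.simple_mul_simple_pow]
  rw [hπ, cnt_ris_braidWord]
  simp

/-! ### The cocycle `nn` -/

noncomputable def phi : W →* Equiv.Perm (W × ZMod 2) := cs.lift ⟨eta cs, eta_liftable cs⟩

theorem phi_simple (i : B) : phi cs (cs.simple i) = eta cs i :=
  cs.lift_apply_simple (eta_liftable cs) i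

theorem phi_wordProd (ω : List B) : phi cs (cs.wordProd ω) = ((ω.map (eta cs)).prod) := by
  induction ω with
  | nil => simp [cs.wordProd_nil]
  | cons i ω ih => rw [cs.wordProd_cons, map_mul, phi_simple, map_cons, prod_cons, ih]

noncomputable def nn (w t : W) : ZMod 2 := (phi cs w (t, 0)).2

theorem nn_wordProd (ω : List B) (t : W) : nn cs (cs.wordProd ω) t = cnt t (cs.rightInvSeq ω) := by
  unfold nn
  rw [phi_wordProd, prod_eta]
  simp

theorem phi_apply (w t : W) (ε : ZMod 2) :
    phi cs w (t, ε) = (w * t * w⁻¹, ε + nn cs w t) := by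
  obtain ⟨ω, _, rfl⟩ := cs.exists_reduced_word w
  rw [phi_wordProd, prod_eta, nn_wordProd]

theorem nn_mul (w₁ w₂ t : W) :
    nn cs (w₁ * w₂) t = nn cs w₁ (w₂ * t * w₂⁻¹) + nn cs w₂ t := by
  have h : phi cs (w₁ * w₂) (t, 0) = ((w₁ * w₂) * t * (w₁ * w₂)⁻¹, 0 + nn cs (w₁ * w₂) t) :=
    phi_apply cs (w₁ * w₂) t 0
  have h' : phi cs (w₁ * w₂) (t, 0) = phi cs w₁ (phi cs w₂ (t, 0)) := by
    rw [map_mul]; rfl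
  rw [phi_apply cs w₂ t 0, phi_apply cs w₁ _ _] at h'
  have h2 := congrArg Prod.snd (h.symm.trans h')
  simp only at h2
  rw [zero_add] at h2
  rw [h2, zero_add]
  ring

theorem nn_one (t : W) : nn cs 1 t = 0 := by
  unfold nn
  rw [map_one]
  rfl

theorem nn_inv (w x : W) : nn cs w⁻¹ x = nn cs w (w⁻¹ * x * w) := by
  have h := nn_mul cs w w⁻¹ x
  rw [mul_inv_cancel, nn_one] at h
  have : ∀ a b : ZMod 2, 0 = a + b → b = a := by decide
  have h3 := this _ _ h
  rw [h3]
  congr 2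
  rw [inv_inv]

theorem nn_simple_self (i : B) : nn cs (cs.simple i) (cs.simple i) = 1 := by
  unfold nn
  rw [phi_simple, eta_apply]
  simp [ind_pos rfl]

theorem nn_reflection_self {t : W} (ht : cs.IsReflection t) : nn cs t t = 1 := by
  obtain ⟨u, i, rfl⟩ := ht
  have h1 : u * cs.simple i * u⁻¹ = u * (cs.simple i * u⁻¹) := by group
  rw [h1, nn_mul]
  have e1 : cs.simple i * u⁻¹ * (u * (cs.simple i * u⁻¹)) * (cs.simple i * u⁻¹)⁻¹
      = cs.simple i := by group
  rw [e1, nn_mul cs (cs.simple i) u⁻¹]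
  have e2 : u⁻¹ * (u * (cs.simple i * u⁻¹)) * u⁻¹⁻¹ = cs.simple i := by group
  rw [e2, nn_simple_self, nn_inv]
  have e3 : u⁻¹ * (u * (cs.simple i * u⁻¹)) * u = cs.simple i := by group
  rw [e3]
  have : ∀ a : ZMod 2, a + (1 + a) = 1 := by decide
  exact this _


/-! ### Inversions vs the cocycle -/

theorem isRightInversion_of_nn {w t : W} (ht : cs.IsReflection t) (h : nn cs w t = 1) :
    cs.IsRightInversion w t := by
  obtain ⟨ω, hlen, rfl⟩ := cs.exists_reduced_word w
  refine ⟨ht, ?_⟩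
  have hc : cnt t (cs.rightInvSeq ω) = 1 := by rw [← nn_wordProd]; exact h
  have hmem : t ∈ cs.rightInvSeq ω := mem_of_cnt_ne_zero (by rw [hc]; exact one_ne_zero)
  obtain ⟨j, hj, hget⟩ := List.mem_iff_getElem.mp hmem
  have hj' : j < ω.length := by simpa using hj
  have hgetD : (cs.rightInvSeq ω).getD j 1 = t := by rw [List.getD_eq_getElem _ _ hj, hget]
  have hmul : cs.wordProd ω * t = cs.wordProd (ω.eraseIdx j) := by
    rw [← hgetD]; exact cs.wordProd_mul_getD_rightInvSeq ω j
  rw [hmul]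
  calc cs.length (cs.wordProd (ω.eraseIdx j)) ≤ (ω.eraseIdx j).length :=
        cs.length_wordProd_le _
    _ < ω.length := by rw [← List.length_eraseIdx_add_one hj']; omega
    _ = cs.length (cs.wordProd ω) := (show cs.length (cs.wordProd ω) = ω.length from hlen).symm

theorem nn_eq_one_of_isRightInversion {w t : W} (h : cs.IsRightInversion w t) :
    nn cs w t = 1 := by
  rcases (show ∀ a : ZMod 2, a = 0 ∨ a = 1 by decide) (nn cs w t) with h0 | h1
  · exfalso
    have ht := h.1
    have hnn : nn cs (w * t) t = 1 := by
      rw [nn_mul, mul_inv_cancel_right, h0, nn_reflection_self cs ht, zero_add]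
    have hinv := isRightInversion_of_nn cs ht hnn
    have hwtt : w * t * t = w := by rw [mul_assoc, ht.mul_self, mul_one]
    have h2 := hinv.2
    rw [hwtt] at h2
    have h3 := h.2
    omega
  · exact h1

theorem exists_inversion_finset (w : W) :
    ∃ F : Finset W, F.card = cs.length w ∧ ∀ t, t ∈ F ↔ cs.IsRightInversion w t := by
  classical
  obtain ⟨ω, hlen, rfl⟩ := cs.exists_reduced_word w
  have hred : cs.IsReduced ω := hlen
  refine ⟨(cs.rightInvSeq ω).toFinset, ?_, ?_⟩
  · rw [List.toFinset_card_of_nodup hred.nodup_rightInvSeq, cs.length_rightInvSeq, ← (show cs.length (cs.wordProd ω) = ω.length from hlen)]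
  · intro t
    rw [List.mem_toFinset]
    constructor
    · exact cs.isRightInversion_of_mem_rightInvSeq hred
    · intro h
      apply mem_of_cnt_ne_zero
      rw [← nn_wordProd, nn_eq_one_of_isRightInversion cs h]
      exact one_ne_zero

/-! ### Duality with respect to the longest element -/

theorem length_mul_longest (w₀ : W) (hw₀ : ∀ w, cs.length w ≤ cs.length w₀) (u : W) :
    cs.length (u * w₀) + cs.length u ≤ cs.length w₀ := by
  classical
  have hinv0 : ∀ t : W, cs.IsReflection t → cs.IsRightInversion w₀ t := fun t ht =>
    ⟨ht, lt_of_le_of_ne (hw₀ _) (ht.length_mul_left_ne w₀)⟩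
  have hnn0 : ∀ t : W, cs.IsReflection t → nn cs w₀ t = 1 := fun t ht =>
    nn_eq_one_of_isRightInversion cs (hinv0 t ht)
  obtain ⟨Fz, hFzcard, hFz⟩ := exists_inversion_finset cs (u * w₀)
  obtain ⟨Fu, hFucard, hFu⟩ := exists_inversion_finset cs u
  obtain ⟨F0, hF0card, hF0⟩ := exists_inversion_finset cs w₀
  have hcinj : Function.Injective (fun t : W => w₀ * t * w₀⁻¹) := by
    intro a b hab
    simpa [mul_assoc] using congrArg (fun z => w₀⁻¹ * z * w₀) hab
  have hsub1 : Fz.image (fun t : W => w₀ * t * w₀⁻¹) ⊆ F0 := by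
    intro r hr
    obtain ⟨t, htFz, rfl⟩ := Finset.mem_image.mp hr
    have htinv := (hFz t).mp htFz
    exact (hF0 _).mpr (hinv0 _ (htinv.1.conj w₀))
  have hsub2 : Fu ⊆ F0 := fun r hr => (hF0 r).mpr (hinv0 r ((hFu r).mp hr).1)
  have hdisj : Disjoint (Fz.image (fun t : W => w₀ * t * w₀⁻¹)) Fu := by
    rw [Finset.disjoint_left]
    intro r hr hrFu
    obtain ⟨t, htFz, rfl⟩ := Finset.mem_image.mp hr
    have htinv := (hFz t).mp htFz
    have h1 : nn cs (u * w₀) t = 1 := nn_eq_one_of_isRightInversion cs htinv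
    have h2 : nn cs u (w₀ * t * w₀⁻¹) = 1 :=
      nn_eq_one_of_isRightInversion cs ((hFu _).mp hrFu)
    rw [nn_mul, h2, hnn0 t htinv.1] at h1
    exact absurd h1 (by decide)
  have hcard : (Fz.image (fun t : W => w₀ * t * w₀⁻¹)).card + Fu.card ≤ F0.card := by
    rw [← Finset.card_union_of_disjoint hdisj]
    exact Finset.card_le_card (Finset.union_subset hsub1 hsub2)
  rw [Finset.card_image_of_injective _ hcinj, hFzcard, hFucard, hF0card] at hcard
  exact hcard

theorem longest_mul_self (w₀ : W) (hw₀ : ∀ w, cs.length w ≤ cs.length w₀) : w₀ * w₀ = 1 := by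
  have h := length_mul_longest cs w₀ hw₀ w₀
  have h0 : cs.length (w₀ * w₀) = 0 := by omega
  exact cs.length_eq_zero_iff.mp h0


end S3Aux

/-- The Bruhat order on a Coxeter group: `u ≤ v` iff one can pass from `u` to `v` by
successively multiplying on the right by reflections, increasing the length at each step. -/
def BruhatLE {B W : Type*} [Group W] {M : CoxeterMatrix B} (cs : CoxeterSystem M W)
    (u v : W) : Prop :=
  Relation.ReflTransGen
    (fun a b => ∃ t : W, cs.IsReflection t ∧ b = a * t ∧ cs.length a < cs.length b) u v

/-- The reflection length `ℓ_R(w)` of `w`: the minimal number of reflections whose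
product is `w`. -/
noncomputable def reflLength {B W : Type*} [Group W] {M : CoxeterMatrix B}
    (cs : CoxeterSystem M W) (w : W) : ℕ :=
  sInf {n | ∃ l : List W, (∀ t ∈ l, cs.IsReflection t) ∧ l.length = n ∧ l.prod = w}

/-- The reflection length of a subset: `ℓ_R(O) = min {ℓ_R(w) : w ∈ O}`. -/
noncomputable def reflLengthSet {B W : Type*} [Group W] {M : CoxeterMatrix B}
    (cs : CoxeterSystem M W) (O : Set W) : ℕ :=
  sInf (reflLength cs '' O)

namespace S3Aux

variable {B W : Type*} [Group W] {M : CoxeterMatrix B} (cs : CoxeterSystem M W)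

theorem reflLength_le {w : W} (l : List W) (hl : ∀ t ∈ l, cs.IsReflection t)
    (hp : l.prod = w) : reflLength cs w ≤ l.length :=
  Nat.sInf_le ⟨l, hl, rfl, hp⟩

theorem exists_reflLength_list (w : W) :
    ∃ l : List W, (∀ t ∈ l, cs.IsReflection t) ∧ l.length = reflLength cs w ∧ l.prod = w := by
  have hne : {n | ∃ l : List W, (∀ t ∈ l, cs.IsReflection t) ∧ l.length = n ∧
      l.prod = w}.Nonempty := by
    obtain ⟨ω, _, rfl⟩ := cs.exists_reduced_word w
    refine ⟨ω.length, ω.map cs.simple, ?_, by simp, rfl⟩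
    intro t htl
    obtain ⟨i, _, rfl⟩ := List.mem_map.mp htl
    exact cs.isReflection_simple i
  exact Nat.sInf_mem hne

theorem reflLength_le_length (w : W) : reflLength cs w ≤ cs.length w := by
  obtain ⟨ω, hlen, rfl⟩ := cs.exists_reduced_word w
  calc reflLength cs (cs.wordProd ω) ≤ (ω.map cs.simple).length := by
        refine reflLength_le cs _ ?_ rfl
        intro t htl
        obtain ⟨i, _, rfl⟩ := List.mem_map.mp htl
        exact cs.isReflection_simple i
    _ = ω.length := List.length_map _
    _ = cs.length (cs.wordProd ω) := (show cs.length (cs.wordProd ω) = ω.length from hlen).symm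

theorem prod_reverse_of_reflections {l : List W} (hl : ∀ t ∈ l, cs.IsReflection t) :
    l.reverse.prod = l.prod⁻¹ := by
  induction l with
  | nil => simp
  | cons x l ih =>
    simp only [List.reverse_cons, List.prod_append, List.prod_cons, List.prod_nil, mul_one]
    rw [mul_inv_rev, ih (fun t ht => hl t (List.mem_cons_of_mem x ht)),
      (hl x List.mem_cons_self).inv]

theorem reflLength_inv_le (w : W) : reflLength cs w⁻¹ ≤ reflLength cs w := by
  obtain ⟨l, hl, hlen, hp⟩ := exists_reflLength_list cs w
  have hrev : l.reverse.prod = w⁻¹ := by rw [prod_reverse_of_reflections cs hl, hp]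
  have h := reflLength_le cs l.reverse (fun t ht => hl t (List.mem_reverse.mp ht)) hrev
  rw [List.length_reverse, hlen] at h
  exact h

theorem conj_prod (g : W) (l : List W) :
    (l.map (fun t => g * t * g⁻¹)).prod = g * l.prod * g⁻¹ := by
  induction l with
  | nil => simp
  | cons x l ih =>
    rw [List.map_cons, List.prod_cons, List.prod_cons, ih]
    group

theorem reflLength_conj_le (g w : W) : reflLength cs (g * w * g⁻¹) ≤ reflLength cs w := by
  obtain ⟨l, hl, hlen, hp⟩ := exists_reflLength_list cs w
  have hcp : (l.map (fun t => g * t * g⁻¹)).prod = g * w * g⁻¹ := by rw [conj_prod, hp]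
  have h := reflLength_le cs (l.map (fun t => g * t * g⁻¹)) ?_ hcp
  · rw [List.length_map, hlen] at h
    exact h
  · intro t ht
    obtain ⟨x, hx, rfl⟩ := List.mem_map.mp ht
    exact (hl x hx).conj g

theorem bruhatLE_chain {u v : W} (h : BruhatLE cs u v) :
    ∃ l : List W, (∀ t ∈ l, cs.IsReflection t) ∧ u * l.prod = v ∧
      l.length + cs.length u ≤ cs.length v := by
  induction h with
  | refl => exact ⟨[], by simp, by simp, by simp⟩
  | tail hab hbc ih =>
    obtain ⟨t, ht, rfl, hlt⟩ := hbc
    obtain ⟨l, hl, hprod, hlen⟩ := ih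
    refine ⟨l ++ [t], ?_, ?_, ?_⟩
    · intro x hx
      rcases List.mem_append.mp hx with h1 | h2
      · exact hl x h1
      · rw [List.mem_singleton.mp h2]; exact ht
    · rw [List.prod_append, List.prod_singleton, ← mul_assoc, hprod]
    · rw [List.length_append, List.length_singleton]
      omega

end S3Aux

/-- Let `(W, S)` be a Coxeter system with `W` finite, `σ` a length-preserving
automorphism, and `w₀` the longest element.  For every `x ∈ W` with `x ≤ σ(x) w₀` one
has `ℓ_R(x w₀ σ(x)⁻¹) ≤ ℓ(w₀) - 2 ℓ(x)`; consequently
`ℓ_R(O) ≤ ℓ(w₀) - 2 · max {ℓ(x) : x ≤ σ(x) w₀}` for `O` the `σ`-conjugacy class of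
`w₀`. -/
theorem statement3 {B W : Type*} [Group W] [Finite W] {M : CoxeterMatrix B}
    (cs : CoxeterSystem M W)
    (σ : W ≃* W) (hσ : ∀ w, cs.length (σ w) = cs.length w)
    (w₀ : W) (hw₀ : ∀ w, cs.length w ≤ cs.length w₀) :
    (∀ x : W, BruhatLE cs x (σ x * w₀) →
      (reflLength cs (x * w₀ * (σ x)⁻¹) : ℤ) ≤ (cs.length w₀ : ℤ) - 2 * cs.length x) ∧
    (reflLengthSet cs {w | ∃ x : W, w = x * w₀ * (σ x)⁻¹} : ℤ) ≤
      (cs.length w₀ : ℤ) -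
        2 * ((sSup {n : ℕ | ∃ x : W, BruhatLE cs x (σ x * w₀) ∧ cs.length x = n} : ℕ) : ℤ) := by
  classical
  have hw2 : w₀ * w₀ = 1 := S3Aux.longest_mul_self cs w₀ hw₀
  have hw0inv : w₀⁻¹ = w₀ := inv_eq_of_mul_eq_one_left hw2
  have key : ∀ x : W, BruhatLE cs x (σ x * w₀) →
      (reflLength cs (x * w₀ * (σ x)⁻¹) : ℤ) ≤ (cs.length w₀ : ℤ) - 2 * cs.length x := by
    intro x hx
    obtain ⟨l, hl, hprod, hlen⟩ := S3Aux.bruhatLE_chain cs hx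
    have hdual := S3Aux.length_mul_longest cs w₀ hw₀ (σ x)
    have hσx : cs.length (σ x) = cs.length x := hσ x
    have heq : x * w₀ * (σ x)⁻¹ = x * (l.prod)⁻¹ * x⁻¹ := by
      have h1 : l.prod = x⁻¹ * (σ x * w₀) := by rw [← hprod]; group
      rw [h1, mul_inv_rev, mul_inv_rev, inv_inv, hw0inv]
      group
    have c1 : reflLength cs (x * w₀ * (σ x)⁻¹) ≤ reflLength cs (l.prod)⁻¹ := by
      rw [heq]; exact S3Aux.reflLength_conj_le cs x _
    have c2 : reflLength cs (l.prod)⁻¹ ≤ reflLength cs l.prod :=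
      S3Aux.reflLength_inv_le cs _
    have c3 : reflLength cs l.prod ≤ l.length := S3Aux.reflLength_le cs l hl rfl
    have hA : reflLength cs (x * w₀ * (σ x)⁻¹) ≤ l.length := le_trans c1 (le_trans c2 c3)
    omega
  refine ⟨key, ?_⟩
  have hw₀O : w₀ ∈ {w | ∃ x : W, w = x * w₀ * (σ x)⁻¹} := ⟨1, by simp⟩
  by_cases hS : {n : ℕ | ∃ x : W, BruhatLE cs x (σ x * w₀) ∧ cs.length x = n}.Nonempty
  · have hbdd : BddAbove {n : ℕ | ∃ x : W, BruhatLE cs x (σ x * w₀) ∧ cs.length x = n} := by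
      refine ⟨cs.length w₀, ?_⟩
      rintro n ⟨x, -, rfl⟩
      exact hw₀ x
    obtain ⟨x₀, hx₀, hx₀len⟩ := Nat.sSup_mem hS hbdd
    have h1 : reflLengthSet cs {w | ∃ x : W, w = x * w₀ * (σ x)⁻¹} ≤
        reflLength cs (x₀ * w₀ * (σ x₀)⁻¹) :=
      Nat.sInf_le ⟨x₀ * w₀ * (σ x₀)⁻¹, ⟨x₀, rfl⟩, rfl⟩
    have h2 := key x₀ hx₀
    rw [hx₀len] at h2
    omega
  · rw [Set.not_nonempty_iff_eq_empty] at hS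
    rw [hS]
    have h1 : reflLengthSet cs {w | ∃ x : W, w = x * w₀ * (σ x)⁻¹} ≤ reflLength cs w₀ :=
      Nat.sInf_le ⟨w₀, hw₀O, rfl⟩
    have h2 : reflLength cs w₀ ≤ cs.length w₀ := S3Aux.reflLength_le_length cs w₀
    have h3 : sSup (∅ : Set ℕ) = 0 := by
      rw [csSup_empty]
      rfl
    rw [h3]
    push_cast
    omega
end

section
/- Let Φ be a finite crystallographic root system with Weyl group W₀, longest element w₀, and quantum Bruhat graph Γ_Φ, and let σ be an automorphism of W₀ induced by a bijection of the simple roots Δ preserving the Cartan pairings. Then for every x ∈ W₀, ℓ_R(x w₀ σ(x)⁻¹) ≤ d_Γ(x, σ(x)w₀), where ℓ_R(w) is the minimal number of reflections s_β (β ∈ Φ⁺) whose product is w. -/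
namespace QBGAux

open List CoxeterSystem

variable {B W : Type*} [Group W] {M : CoxeterMatrix B} (cs : CoxeterSystem M W)

local prefix:100 "s" => cs.simple
local prefix:100 "π" => cs.wordProd
local prefix:100 "ℓ" => cs.length
local prefix:100 "ris" => cs.rightInvSeq

/-- Product of an even alternating word in any monoid. -/
theorem prod_map_alternatingWord_even {G : Type*} [Monoid G] (g : B → G) (i i' : B) (n : ℕ) :
    (List.map g (alternatingWord i i' (2 * n))).prod = (g i * g i') ^ n := by
  induction n with
  | zero => simp [alternatingWord]
  | succ n ih =>
    have h2 : 2 * (n + 1) = (2 * n + 1) + 1 := by ring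
    have e1 : ¬ Even (2 * n + 1) := by simp [parity_simps]
    have e2 : Even (2 * n) := by simp [parity_simps]
    rw [h2, alternatingWord_succ', if_neg e1, alternatingWord_succ', if_pos e2,
      List.map_cons, List.map_cons, List.prod_cons, List.prod_cons, ih,
      pow_succ', mul_assoc]

theorem getD_rightInvSeq_alternatingWord (n : ℕ) :
    ∀ (i i' : B) (k : ℕ), k < n →
      (ris (alternatingWord i i' n)).getD k 1 = (s i' * s i) ^ (n - 1 - k) * s i' := by
  induction n with
  | zero => omega
  | succ n ih =>
    intro i i' k hk
    rw [alternatingWord_succ, cs.rightInvSeq_concat]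
    rcases Nat.lt_or_ge k n with h | h
    · rw [List.concat_eq_append, List.getD_append _ _ _ _ (by simpa using h),
        (by simp : (1 : W) = (MulAut.conj (s i')) 1), List.getD_map, ih i' i k h]
      simp only [MulAut.conj_apply, cs.inv_simple]
      have hsemi : s i' * (s i * s i') ^ (n - 1 - k) = (s i' * s i) ^ (n - 1 - k) * s i' :=
        (SemiconjBy.pow_right (by simp [SemiconjBy, mul_assoc]) _)
      calc s i' * ((s i * s i') ^ (n - 1 - k) * s i) * s i'
          = (s i' * (s i * s i') ^ (n - 1 - k)) * (s i * s i') := by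
            simp [mul_assoc]
        _ = (s i' * s i) ^ (n - 1 - k) * s i' * (s i * s i') := by rw [hsemi]
        _ = (s i' * s i) ^ (n - 1 - k + 1) * s i' := by rw [pow_succ]; group
        _ = (s i' * s i) ^ (n + 1 - 1 - k) * s i' := by congr 2; omega
    · have hkn : k = n := by omega
      subst hkn
      rw [List.concat_eq_append, List.getD_append_right _ _ _ _ (by simp)]
      simp

open scoped Classical in
/-- The right inversion sequence of the doubled braid word consists of two equal halves. -/
theorem rightInvSeq_alternatingWord_eq_append (i i' : B) (m : ℕ)
    (hrel : (s i' * s i) ^ m = 1) :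
    ∃ X : List W, ris (alternatingWord i i' (2 * m)) = X ++ X := by
  refine ⟨List.ofFn (fun k : Fin m => (s i' * s i) ^ (m - 1 - (k : ℕ)) * s i'), ?_⟩
  apply List.ext_getElem
  · simp [length_alternatingWord]; omega
  · intro k hk1 hk2
    have hk : k < 2 * m := by
      simpa [length_alternatingWord] using hk1
    rw [← List.getD_eq_getElem _ 1 hk1,
      getD_rightInvSeq_alternatingWord cs (2 * m) i i' k hk]
    rcases Nat.lt_or_ge k m with h | h
    · rw [List.getElem_append_left (by simpa using h)]
      simp only [List.getElem_ofFn]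
      have h2 : 2 * m - 1 - k = m + (m - 1 - k) := by omega
      rw [h2, pow_add, hrel, one_mul]
    · rw [List.getElem_append_right (by simpa using h)]
      simp only [List.getElem_ofFn]
      have h2 : 2 * m - 1 - k = m - 1 - (k - m) := by omega
      rw [h2]
      congr 2
      simp

open scoped Classical

/-- The sign-representation permutation attached to a simple reflection. -/
noncomputable def sgnPerm (i : B) : Equiv.Perm (W × ℤˣ) :=
  Function.Involutive.toPerm
    (fun p => (s i * p.1 * s i, if p.1 = s i then -p.2 else p.2))
    (by
      rintro ⟨p1, p2⟩
      dsimp only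
      by_cases h : p1 = s i
      · simp [h, cs.simple_mul_simple_self, mul_assoc]
      · have h2 : s i * p1 * s i ≠ s i := by
          intro hc
          apply h
          have h3 := congrArg (fun z => s i * z * s i) hc
          have h1 := cs.simple_mul_simple_self i
          calc p1 = (s i * s i) * p1 * (s i * s i) := by rw [h1]; group
            _ = s i * (s i * p1 * s i) * s i := by group
            _ = s i * s i * s i := by rw [hc]
            _ = s i := by rw [h1, one_mul]
        have h4 : s i * (s i * p1 * s i) * s i = p1 := by
          have h1 := cs.simple_mul_simple_self i
          calc s i * (s i * p1 * s i) * s i = (s i * s i) * p1 * (s i * s i) := by group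
            _ = p1 := by rw [h1]; group
        simp [h, h2, h4])

theorem sgnPerm_apply (i : B) (p : W × ℤˣ) :
    sgnPerm cs i p = (s i * p.1 * s i, if p.1 = s i then -p.2 else p.2) := rfl

/-- Action of a product of `sgnPerm`s: conjugation plus inversion-counting sign. -/
theorem prod_map_sgnPerm_apply (ω : List B) (p : W × ℤˣ) :
    (List.map (sgnPerm cs) ω).prod p =
      (π ω * p.1 * (π ω)⁻¹,
        if Even ((ris ω).count p.1) then p.2 else -p.2) := by
  induction ω generalizing p with
  | nil => simp
  | cons i ω ih =>
    rw [List.map_cons, List.prod_cons, Equiv.Perm.mul_apply, ih p, sgnPerm_apply]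
    have hris : ris (i :: ω) = ((π ω)⁻¹ * s i * π ω) :: ris ω := rfl
    have hcond : (π ω * p.1 * (π ω)⁻¹ = s i) ↔ (p.1 = (π ω)⁻¹ * s i * π ω) := by
      constructor
      · intro h
        rw [← h]; group
      · intro h
        rw [h]; group
    have hfst : s i * (π ω * p.1 * (π ω)⁻¹) * s i = π (i :: ω) * p.1 * (π (i :: ω))⁻¹ := by
      rw [cs.wordProd_cons]
      simp [mul_assoc, cs.inv_simple]
    rw [hris, Prod.ext_iff]
    constructor
    · simpa using hfst
    · simp only [List.count_cons]
      by_cases h : p.1 = (π ω)⁻¹ * s i * π ω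
      · have hb : (((π ω)⁻¹ * s i * π ω) == p.1) = true := by
          simp [h]
        rw [if_pos (hcond.mpr h), hb]
        by_cases he : Even ((ris ω).count p.1)
        · rw [if_pos he, if_neg (by simpa [Nat.even_add_one] using he)]
        · rw [if_neg he, if_pos (by simpa [Nat.even_add_one] using he), neg_neg]
      · have hb : (((π ω)⁻¹ * s i * π ω) == p.1) = false := by
          rw [beq_eq_false_iff_ne]
          exact fun hc => h hc.symm
        rw [if_neg (fun hc => h (hcond.mp hc)), hb]
        simp

theorem sgnPerm_liftable : M.IsLiftable (sgnPerm cs) := by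
  intro i i'
  have hprod : (sgnPerm cs i * sgnPerm cs i') ^ M i i' =
      (List.map (sgnPerm cs) (alternatingWord i i' (2 * M i i'))).prod :=
    (prod_map_alternatingWord_even (sgnPerm cs) i i' (M i i')).symm
  rw [hprod]
  apply Equiv.ext
  intro p
  rw [show ((1 : Equiv.Perm (W × ℤˣ))) p = p from rfl]
  obtain ⟨X, hX⟩ := rightInvSeq_alternatingWord_eq_append cs i i' (M i i')
      (cs.simple_mul_simple_pow' i i')
  have hπ : π (alternatingWord i i' (2 * M i i')) = 1 := by
      have := prod_map_alternatingWord_even cs.simple i i' (M i i')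
      rw [CoxeterSystem.wordProd, this, cs.simple_mul_simple_pow]
  rw [prod_map_sgnPerm_apply, hπ, hX]
  have : Even ((X ++ X).count p.1) := by
    rw [List.count_append]
    exact ⟨X.count p.1, rfl⟩
  rw [if_pos this]
  simp

/-- The sign representation of the Coxeter group. -/
noncomputable def sgnRep : W →* Equiv.Perm (W × ℤˣ) :=
  cs.lift ⟨sgnPerm cs, sgnPerm_liftable cs⟩

theorem sgnRep_wordProd (ω : List B) :
    sgnRep cs (π ω) = (List.map (sgnPerm cs) ω).prod := by
  induction ω with
  | nil => rw [cs.wordProd_nil, List.map_nil, List.prod_nil, map_one]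
  | cons i ω ih =>
    rw [cs.wordProd_cons, List.map_cons, List.prod_cons, map_mul, ih, sgnRep,
      cs.lift_apply_simple]

theorem sgnRep_apply_of_wordProd (ω : List B) (p : W × ℤˣ) :
    sgnRep cs (π ω) p =
      (π ω * p.1 * (π ω)⁻¹,
        if Even ((ris ω).count p.1) then p.2 else -p.2) := by
  rw [sgnRep_wordProd, prod_map_sgnPerm_apply]

theorem sgnRep_apply (w : W) (t : W) (ε : ℤˣ) :
    sgnRep cs w (t, ε) = (w * t * w⁻¹, ε * (sgnRep cs w (t, 1)).2) := by
  obtain ⟨ω, -, rfl⟩ := cs.exists_reduced_word' w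
  rw [sgnRep_apply_of_wordProd, sgnRep_apply_of_wordProd]
  by_cases he : Even ((ris ω).count t)
  · rw [if_pos he, if_pos he, Prod.ext_iff]
    exact ⟨rfl, by simp⟩
  · rw [if_neg he, if_neg he, Prod.ext_iff]
    exact ⟨rfl, by simp⟩

/-- Key computation: the sign representation detects reflections. -/
theorem sgnRep_apply_self_of_isReflection {t : W} (ht : cs.IsReflection t) (ε : ℤˣ) :
    sgnRep cs t (t, ε) = (t, -ε) := by
  obtain ⟨u, i, rfl⟩ := ht
  set t := u * s i * u⁻¹ with hts
  set c := (sgnRep cs u (s i, 1)).2 with hc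
  have h1 : sgnRep cs u (s i, ε * c⁻¹) = (t, ε) := by
    rw [sgnRep_apply cs u (s i) (ε * c⁻¹), ← hc]
    rw [Prod.ext_iff]
    exact ⟨rfl, by rw [inv_mul_cancel_right]⟩
  have h2 : sgnRep cs u (s i, -(ε * c⁻¹)) = (t, -ε) := by
    rw [sgnRep_apply cs u (s i) (-(ε * c⁻¹)), ← hc]
    rw [Prod.ext_iff]
    exact ⟨rfl, by rw [neg_mul, inv_mul_cancel_right]⟩
  have hinv : (sgnRep cs u)⁻¹ (t, ε) = (s i, ε * c⁻¹) := by
    rw [← h1]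
    exact (Equiv.symm_apply_apply _ _)
  have hmid : sgnRep cs (s i) (s i, ε * c⁻¹) = (s i, -(ε * c⁻¹)) := by
    rw [sgnRep, cs.lift_apply_simple, sgnPerm_apply]
    simp
  calc sgnRep cs t (t, ε)
      = (sgnRep cs u * sgnRep cs (s i) * (sgnRep cs u)⁻¹) (t, ε) := by
        rw [← map_inv, ← map_mul, ← map_mul]
    _ = sgnRep cs u (sgnRep cs (s i) ((sgnRep cs u)⁻¹ (t, ε))) := rfl
    _ = (t, -ε) := by rw [hinv, hmid, h2]

/-- The strong exchange property. -/
theorem mem_rightInvSeq_of_isRightInversion {w t : W} (ht : cs.IsReflection t)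
    (hlt : ℓ (w * t) < ℓ w) {ω : List B} (hred : cs.IsReduced ω) (hw : w = π ω) :
    t ∈ ris ω := by
  set v := w * t with hv
  -- the sign of `t` in `sgnRep v` is `+1`
  have hc' : (sgnRep cs v (t, 1)).2 = 1 := by
    obtain ⟨τ, hτred, hτ⟩ := cs.exists_reduced_word' v
    rw [hτ, sgnRep_apply_of_wordProd]
    by_contra hne
    have hodd : ¬ Even ((ris τ).count t) := by
      intro he
      rw [if_pos he] at hne
      exact hne rfl
    have hmem : t ∈ ris τ := by
      rcases Nat.eq_zero_or_pos ((ris τ).count t) with h0 | hpos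
      · rw [h0] at hodd
        exact absurd Even.zero hodd
      · exact List.count_pos_iff.mp hpos
    -- then ℓ (v * t) < ℓ v, contradiction with ℓ (v * t) = ℓ w > ℓ v
    have hvt : ℓ (v * t) < ℓ v := by
      rw [hτ]
      exact (cs.isRightInversion_of_mem_rightInvSeq hτred hmem).2
    have hw' : v * t = w := by
      rw [hv, mul_assoc, ht.mul_self, mul_one]
    rw [hw'] at hvt
    omega
  have hsgn : sgnRep cs w (t, 1) = (w * t * w⁻¹, -1) := by
    have hwvt : w = v * t := by rw [hv, mul_assoc, ht.mul_self, mul_one]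
    have hconj : v * t * v⁻¹ = w * t * w⁻¹ := by
      rw [hv, mul_inv_rev, ht.inv]
      have hm := ht.mul_self
      calc w * t * t * (t * w⁻¹) = w * t * (t * t) * w⁻¹ := by group
        _ = w * t * w⁻¹ := by rw [hm, mul_one]
    calc sgnRep cs w (t, 1)
        = sgnRep cs (v * t) (t, 1) := by rw [← hwvt]
      _ = sgnRep cs v (sgnRep cs t (t, 1)) := by rw [map_mul]; rfl
      _ = sgnRep cs v (t, -1) := by rw [sgnRep_apply_self_of_isReflection cs ht 1]
      _ = (v * t * v⁻¹, (-1) * (sgnRep cs v (t, 1)).2) := sgnRep_apply cs v t (-1)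
      _ = (w * t * w⁻¹, -1) := by rw [hconj, hc', mul_one]
  rw [hw, sgnRep_apply_of_wordProd] at hsgn
  have hsnd : (if Even ((ris ω).count t) then (1:ℤˣ) else -1) = -1 := by
    have := congrArg Prod.snd hsgn
    simpa using this
  have hodd : ¬ Even ((ris ω).count t) := by
    intro he
    rw [if_pos he] at hsnd
    exact absurd hsnd (by decide)
  rcases Nat.eq_zero_or_pos ((ris ω).count t) with h0 | hpos
  · rw [h0] at hodd
    exact absurd Even.zero hodd
  · exact List.count_pos_iff.mp hpos

/-- The inversion set of `w`, as a finset. -/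
noncomputable def invF (w : W) : Finset W :=
  ((cs.exists_reduced_word' w).choose |> cs.rightInvSeq).toFinset

theorem mem_invF {w t : W} : t ∈ invF cs w ↔ cs.IsRightInversion w t := by
  obtain ⟨hred, hw⟩ := (cs.exists_reduced_word' w).choose_spec
  rw [invF, List.mem_toFinset]
  constructor
  · intro h
    have := cs.isRightInversion_of_mem_rightInvSeq hred h
    rwa [← hw] at this
  · intro ⟨ht, hlt⟩
    exact mem_rightInvSeq_of_isRightInversion cs ht hlt hred hw

theorem card_invF (w : W) : (invF cs w).card = ℓ w := by
  obtain ⟨hred, hw⟩ := (cs.exists_reduced_word' w).choose_spec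
  rw [invF, List.toFinset_card_of_nodup (hred.nodup_rightInvSeq),
    cs.length_rightInvSeq]
  have h2 : ℓ (π (cs.exists_reduced_word' w).choose) = (cs.exists_reduced_word' w).choose.length := hred
  rw [← hw] at h2
  exact h2.symm

theorem invF_mul_simple {w : W} {i : B} (hi : ℓ (w * s i) < ℓ w) :
    invF cs (w * s i) = ((invF cs w).erase (s i)).image (fun t => s i * t * s i) := by
  have hsub : invF cs (w * s i) ⊆ ((invF cs w).erase (s i)).image (fun t => s i * t * s i) := by
    intro t' ht'
    obtain ⟨ht'refl, ht'lt⟩ := (mem_invF cs).mp ht'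
    set t := s i * t' * s i with htdef
    have ht'val : t' = s i * t * s i := by
      rw [htdef]
      have h1 := cs.simple_mul_simple_self i
      calc t' = (s i * s i) * t' * (s i * s i) := by rw [h1]; group
        _ = s i * (s i * t' * s i) * s i := by group
    have htrefl : cs.IsReflection t := by
      have := ht'refl.conj (s i)
      rwa [cs.inv_simple] at this
    have hwt : w * t = w * s i * t' * s i := by rw [htdef]; group
    have hlt2 : ℓ (w * t) < ℓ w := by
      rw [hwt]
      calc ℓ (w * s i * t' * s i) ≤ ℓ (w * s i * t') + 1 := by
            have := cs.length_mul_simple (w * s i * t') i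
            rcases this with h | h <;> omega
        _ ≤ ℓ (w * s i) := by omega
        _ < ℓ w := hi
    have htne : t ≠ s i := by
      intro hc
      have ht'eq : t' = s i := by
        rw [ht'val, hc, cs.simple_mul_simple_self, one_mul]
      rw [ht'eq, mul_assoc, cs.simple_mul_simple_self, mul_one] at ht'lt
      omega
    refine Finset.mem_image.mpr ⟨t, Finset.mem_erase.mpr ⟨htne, (mem_invF cs).mpr ⟨htrefl, hlt2⟩⟩, ?_⟩
    exact ht'val.symm
  apply Finset.eq_of_subset_of_card_le hsub
  calc (((invF cs w).erase (s i)).image (fun t => s i * t * s i)).card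
      ≤ ((invF cs w).erase (s i)).card := Finset.card_image_le
    _ = (invF cs w).card - 1 := by
        rw [Finset.card_erase_of_mem ((mem_invF cs).mpr ⟨cs.isReflection_simple i, hi⟩)]
    _ = ℓ w - 1 := by rw [card_invF]
    _ ≤ ℓ (w * s i) := by
        have := cs.length_mul_simple w i
        rcases this with h | h <;> omega
    _ = (invF cs (w * s i)).card := (card_invF cs _).symm

/-- The inversion set determines the element. -/
theorem eq_of_invF_eq : ∀ (x y : W), invF cs x = invF cs y → x = y := by
  suffices H : ∀ (n : ℕ) (x y : W), ℓ x = n → invF cs x = invF cs y → x = y by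
    exact fun x y h => H (ℓ x) x y rfl h
  intro n
  induction n using Nat.strong_induction_on with
  | _ n ih =>
    intro x y hn h
    rcases Nat.eq_zero_or_pos n with h0 | hpos
    · subst h0
      have hx : x = 1 := cs.length_eq_zero_iff.mp hn
      have hcy : (invF cs y).card = 0 := by
        rw [← h, card_invF, hn]
      have hy : y = 1 := by
        rw [card_invF] at hcy
        exact cs.length_eq_zero_iff.mp hcy
      rw [hx, hy]
    · have hx1 : x ≠ 1 := by
        intro hc
        rw [hc, cs.length_one] at hn
        omega
      obtain ⟨i, hdesc⟩ := cs.exists_rightDescent_of_ne_one hx1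
      have hdx : ℓ (x * s i) < ℓ x := hdesc
      have hsi : s i ∈ invF cs x := (mem_invF cs).mpr ⟨cs.isReflection_simple i, hdx⟩
      have hdy : ℓ (y * s i) < ℓ y := ((mem_invF cs).mp (h ▸ hsi)).2
      have hinv2 : invF cs (x * s i) = invF cs (y * s i) := by
        rw [invF_mul_simple cs hdx, invF_mul_simple cs hdy, h]
      have := ih (ℓ (x * s i)) (by omega) (x * s i) (y * s i) rfl hinv2
      exact mul_right_cancel this

/-- A maximal-length element of a finite Coxeter group is an involution. -/
theorem maximal_inv_eq_self (w₀ : W) (hw₀ : ∀ w, ℓ w ≤ ℓ w₀) : w₀⁻¹ = w₀ := by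
  have hmem : ∀ (w : W), (∀ u, ℓ u ≤ ℓ w) → ∀ t, t ∈ invF cs w ↔ cs.IsReflection t := by
    intro w hw t
    rw [mem_invF]
    constructor
    · exact fun h => h.1
    · intro ht
      refine ⟨ht, ?_⟩
      have h1 : ℓ (w * t) ≠ ℓ w := ht.length_mul_left_ne w
      have h2 : ℓ (w * t) ≤ ℓ w := hw _
      omega
  have hw₀' : ∀ w, ℓ w ≤ ℓ w₀⁻¹ := by
    intro w
    rw [cs.length_inv]
    exact hw₀ w
  apply eq_of_invF_eq cs
  ext t
  rw [hmem w₀⁻¹ hw₀' t, hmem w₀ hw₀ t]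

end QBGAux





/-- Data of (the positive roots and coroots of) a finite crystallographic root system
underlying its Weyl group `W`, presented as a Coxeter system `cs`.  The positive roots
`α ∈ Φ⁺` are identified with the corresponding reflections `t = s_α` of `W` (for a
crystallographic root system this correspondence is bijective, and the reflections of
the Coxeter system are exactly the reflections `s_β`, `β ∈ Φ⁺`); `coroot t` is the
coroot `α^∨` of the positive root `α` with `s_α = t`, living in the coweight lattice
`X`, and `pairRho` is the pairing `⟨·, ρ⟩` with the half-sum `ρ` of the positive roots.
For a simple root `α` one has `⟨α^∨, ρ⟩ = 1`, and `⟨α^∨, ρ⟩ > 0` for every positive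
root `α`. -/
structure QBGSetup (B W X : Type*) [Group W] [AddCommGroup X] (M : CoxeterMatrix B) where
  cs : CoxeterSystem M W
  coroot : W → X
  pairRho : X →+ ℤ
  pairRho_simple : ∀ i : B, pairRho (coroot (cs.simple i)) = 1
  pairRho_pos : ∀ t : W, cs.IsReflection t → 0 < pairRho (coroot t)

namespace QBGSetup

variable {B W X : Type*} [Group W] [AddCommGroup X] {M : CoxeterMatrix B}

/-- `Q.EdgeStep w t` says that there is an edge `w → w * t` in the quantum Bruhat graph
`Γ_Φ`: `t` is a reflection `s_α` (`α ∈ Φ⁺`) and either `ℓ(w s_α) = ℓ(w) + 1` (an upward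
edge) or `ℓ(w s_α) = ℓ(w) - ⟨α^∨, 2ρ⟩ + 1` (a downward edge). -/
def EdgeStep (Q : QBGSetup B W X M) (w t : W) : Prop :=
  Q.cs.IsReflection t ∧
    (Q.cs.length (w * t) = Q.cs.length w + 1 ∨
      (Q.cs.length (w * t) : ℤ) = (Q.cs.length w : ℤ) - 2 * Q.pairRho (Q.coroot t) + 1)

/-- `Q.IsPath x y ts` says that the list of reflections `ts` describes a directed path
from `x` to `y` in the quantum Bruhat graph `Γ_Φ`. -/
def IsPath (Q : QBGSetup B W X M) : W → W → List W → Prop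
  | x, y, [] => x = y
  | x, y, t :: ts => Q.EdgeStep x t ∧ Q.IsPath (x * t) y ts

/-- The weight of the edge `w → w * t`: `0` if it is an upward edge, and the coroot
`α^∨` (where `t = s_α`) if it is a downward edge. -/
noncomputable def stepWeight (Q : QBGSetup B W X M) (w t : W) : X :=
  if Q.cs.length (w * t) = Q.cs.length w + 1 then 0 else Q.coroot t

/-- The weight of a directed path: the sum of the weights of its edges. -/
noncomputable def pathWeight (Q : QBGSetup B W X M) : W → List W → X
  | _, [] => 0
  | w, t :: ts => Q.stepWeight w t + Q.pathWeight (w * t) ts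

/-- `d_Γ(x, y)`: the minimal number of edges in a directed path from `x` to `y` in the
quantum Bruhat graph `Γ_Φ`. -/
noncomputable def dist (Q : QBGSetup B W X M) (x y : W) : ℕ :=
  sInf {n | ∃ ts : List W, Q.IsPath x y ts ∧ ts.length = n}

end QBGSetup

/-- Let `Φ` be a finite crystallographic root system with Weyl group `W₀`, longest
element `w₀`, and quantum Bruhat graph `Γ_Φ`, and let `σ` be an automorphism of `W₀`
induced by a bijection `π` of the simple roots preserving the Cartan pairings.  Then for
every `x ∈ W₀`, `ℓ_R(x w₀ σ(x)⁻¹) ≤ d_Γ(x, σ(x) w₀)`. -/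
theorem statement4 {B W X : Type*} [Group W] [AddCommGroup X] [Finite W]
    {M : CoxeterMatrix B} (Q : QBGSetup B W X M)
    (w₀ : W) (hw₀ : ∀ w, Q.cs.length w ≤ Q.cs.length w₀)
    (σ : W ≃* W) (π : B ≃ B) (hσ : ∀ i : B, σ (Q.cs.simple i) = Q.cs.simple (π i))
    (hσpair : ∀ t : W, Q.cs.IsReflection t →
      Q.pairRho (Q.coroot (σ t)) = Q.pairRho (Q.coroot t))
    (hconn : ∀ x y : W, ∃ ts : List W, Q.IsPath x y ts)
    (x : W) :
    reflLength Q.cs (x * w₀ * (σ x)⁻¹) ≤ Q.dist x (σ x * w₀) := by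
  classical
  -- the set of path lengths from `x` to `σ x * w₀` is nonempty
  have hS : {n | ∃ ts : List W, Q.IsPath x (σ x * w₀) ts ∧ ts.length = n}.Nonempty := by
    obtain ⟨ts, h⟩ := hconn x (σ x * w₀)
    exact ⟨ts.length, ts, h, rfl⟩
  have hmem := Nat.sInf_mem hS
  obtain ⟨ts, hpath, hlen⟩ := hmem
  -- extract the data of the path
  have key : ∀ (ts : List W) (x' : W), Q.IsPath x' (σ x * w₀) ts →
      (∀ t ∈ ts, Q.cs.IsReflection t) ∧ x' * ts.prod = σ x * w₀ := by
    intro ts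
    induction ts with
    | nil =>
      intro x' h
      exact ⟨by simp, by rw [List.prod_nil, mul_one]; exact h⟩
    | cons t ts ih =>
      intro x' h
      obtain ⟨⟨htrefl, -⟩, hrest⟩ := h
      obtain ⟨h1, h2⟩ := ih (x' * t) hrest
      refine ⟨?_, ?_⟩
      · intro u hu
        rcases List.mem_cons.mp hu with h | h
        · rw [h]; exact htrefl
        · exact h1 u h
      · rw [List.prod_cons, ← mul_assoc]
        exact h2
  obtain ⟨hrefl, hprod⟩ := key ts x hpath
  -- `w₀` is an involution
  have hw₀inv : w₀⁻¹ = w₀ := QBGAux.maximal_inv_eq_self Q.cs w₀ hw₀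
  have hw₀sq : w₀ * w₀ = 1 := by
    nth_rw 1 [← hw₀inv]
    exact inv_mul_cancel w₀
  -- the target element is `x * (ts.prod)⁻¹ * x⁻¹`
  have hσx : σ x = x * ts.prod * w₀⁻¹ := by
    rw [hprod, mul_assoc, mul_inv_cancel, mul_one]
  have htarget : x * w₀ * (σ x)⁻¹ = x * ts.prod⁻¹ * x⁻¹ := by
    rw [hσx]
    calc x * w₀ * (x * ts.prod * w₀⁻¹)⁻¹
        = x * (w₀ * w₀) * ts.prod⁻¹ * x⁻¹ := by group
      _ = x * ts.prod⁻¹ * x⁻¹ := by rw [hw₀sq, mul_one]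
  -- reverse of a list of reflections has product the inverse
  have hrevprod : ∀ (l : List W), (∀ t ∈ l, Q.cs.IsReflection t) →
      l.reverse.prod = l.prod⁻¹ := by
    intro l
    induction l with
    | nil => simp
    | cons t l ih =>
      intro h
      have ht : Q.cs.IsReflection t := h t List.mem_cons_self
      rw [List.reverse_cons, List.prod_append, List.prod_cons, List.prod_cons,
        ih (fun u hu => h u (List.mem_cons_of_mem t hu)), List.prod_nil, mul_one,
        mul_inv_rev, ht.inv]
  have hconjprod : ∀ (l : List W),
      (List.map (fun t => x * t * x⁻¹) l).prod = x * l.prod * x⁻¹ := by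
    intro l
    induction l with
    | nil => simp
    | cons t l ih =>
      rw [List.map_cons, List.prod_cons, List.prod_cons, ih]
      group
  -- the witness list of reflections
  set l : List W := (ts.reverse).map (fun t => x * t * x⁻¹) with hl
  have h1 : ∀ u ∈ l, Q.cs.IsReflection u := by
    intro u hu
    rw [hl] at hu
    obtain ⟨t, ht, rfl⟩ := List.mem_map.mp hu
    have := (hrefl t (List.mem_reverse.mp ht)).conj x
    exact this
  have h2 : l.length = Q.dist x (σ x * w₀) := by
    rw [hl, List.length_map, List.length_reverse, hlen]
    rfl
  have h3 : l.prod = x * w₀ * (σ x)⁻¹ := by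
    rw [hl, hconjprod, hrevprod ts hrefl, htarget]
  exact Nat.sInf_le ⟨l, h1, h2, h3⟩
end

section
/- Let Φ be a finite crystallographic root system with Weyl group W₀, longest element w₀, and quantum Bruhat graph Γ_Φ. Let x, y ∈ W₀ and let λ be the total weight of any directed path from x to y in Γ_Φ of minimal length (i.e., with d_Γ(x,y) edges). Then ⟨λ, 2ρ⟩ = ℓ(x) − ℓ(y) + d_Γ(x, y), and in particular ⟨λ, ρ⟩ ≤ ℓ(w₀). -/
namespace QBGSetup

variable {B W X : Type*} [Group W] [AddCommGroup X] {M : CoxeterMatrix B}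

theorem pairRho_path (Q : QBGSetup B W X M) :
    ∀ (ts : List W) (x y : W), Q.IsPath x y ts →
      2 * Q.pairRho (Q.pathWeight x ts) =
        (Q.cs.length x : ℤ) - (Q.cs.length y : ℤ) + ts.length := by
  intro ts
  induction ts with
  | nil =>
    intro x y h
    cases h
    simp [pathWeight]
  | cons t ts ih =>
    intro x y h
    obtain ⟨⟨_, hlen⟩, htail⟩ := h
    have ih' := ih (x * t) y htail
    simp only [pathWeight, stepWeight, List.length_cons, map_add]
    by_cases hup : Q.cs.length (x * t) = Q.cs.length x + 1
    · rw [if_pos hup]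
      have : (Q.cs.length (x * t) : ℤ) = Q.cs.length x + 1 := by exact_mod_cast hup
      simp only [map_zero]
      push_cast
      linarith [ih']
    · rw [if_neg hup]
      have hdown : (Q.cs.length (x * t) : ℤ) =
          (Q.cs.length x : ℤ) - 2 * Q.pairRho (Q.coroot t) + 1 := hlen.resolve_left hup
      push_cast
      linarith [ih']

theorem simple_path (Q : QBGSetup B W X M) :
    ∀ (ω : List B) (x : W), Q.IsPath x (x * Q.cs.wordProd ω) (ω.map Q.cs.simple) := by
  intro ω
  induction ω with
  | nil => intro x; simp [IsPath]
  | cons i ω ih =>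
    intro x
    refine ⟨⟨Q.cs.isReflection_simple i, ?_⟩, ?_⟩
    · rcases Q.cs.length_mul_simple x i with h | h
      · exact Or.inl h
      · right
        rw [Q.pairRho_simple i]
        omega
    · have := ih (x * Q.cs.simple i)
      rwa [mul_assoc, ← Q.cs.wordProd_cons] at this

theorem dist_le (Q : QBGSetup B W X M) (x y : W) :
    Q.dist x y ≤ Q.cs.length (x⁻¹ * y) := by
  obtain ⟨ω, hω, hprod⟩ := Q.cs.exists_reduced_word (x⁻¹ * y)
  have hpath := Q.simple_path ω x
  rw [← hprod, mul_inv_cancel_left] at hpath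
  have : Q.cs.length (x⁻¹ * y) ∈ {n | ∃ ts : List W, Q.IsPath x y ts ∧ ts.length = n} :=
    ⟨ω.map Q.cs.simple, hpath, by simp only [List.length_map]; rw [hprod]; exact Eq.symm hω⟩
  exact Nat.sInf_le this

end QBGSetup

/-- Let `Φ` be a finite crystallographic root system with Weyl group `W₀`, longest
element `w₀`, and quantum Bruhat graph `Γ_Φ`.  Let `x, y ∈ W₀` and let `λ` be the
total weight of any directed path from `x` to `y` in `Γ_Φ` of minimal length (i.e.,
with `d_Γ(x, y)` edges).  Then `⟨λ, 2ρ⟩ = ℓ(x) - ℓ(y) + d_Γ(x, y)`, and in particular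
`⟨λ, ρ⟩ ≤ ℓ(w₀)`. -/
theorem statement8 {B W X : Type*} [Group W] [AddCommGroup X]
    {M : CoxeterMatrix B} (Q : QBGSetup B W X M)
    (w₀ : W) (hw₀ : ∀ w, Q.cs.length w ≤ Q.cs.length w₀)
    (x y : W) (ts : List W) (hpath : Q.IsPath x y ts) (hmin : ts.length = Q.dist x y) :
    2 * Q.pairRho (Q.pathWeight x ts) =
        (Q.cs.length x : ℤ) - (Q.cs.length y : ℤ) + (Q.dist x y : ℤ) ∧
      Q.pairRho (Q.pathWeight x ts) ≤ (Q.cs.length w₀ : ℤ) := by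
  have key := Q.pairRho_path ts x y hpath
  rw [hmin] at key
  refine ⟨key, ?_⟩
  have hd : (Q.dist x y : ℤ) ≤ (Q.cs.length w₀ : ℤ) := by
    exact_mod_cast (Q.dist_le x y).trans (hw₀ _)
  have hxy : (Q.cs.length x : ℤ) - (Q.cs.length y : ℤ) ≤ (Q.cs.length w₀ : ℤ) := by
    have h1 : Q.cs.length x ≤ Q.cs.length y + Q.cs.length (y⁻¹ * x) := by
      have := Q.cs.length_mul_le y (y⁻¹ * x)
      rwa [mul_inv_cancel_left] at this
    have h2 : Q.cs.length (y⁻¹ * x) ≤ Q.cs.length w₀ := hw₀ _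
    omega
  linarith
end

section
/- Let (W', S') be a finite Coxeter system with longest element w₀', let τ be a length-preserving automorphism of W', let l be a positive even integer, and let W = (W')^l with the automorphism σ(w₁, w₂, …, w_l) = (τ(w_l), w₁, …, w_{l−1}). Let w₀ = (w₀', …, w₀') be the longest element of W and O its σ-conjugacy class. Then the identity element lies in O (so ℓ_R(O) = 0), and max{ℓ(x) : x ∈ W, x ≤ σ(x)w₀} = ℓ(w₀)/2, where ≤ is the Bruhat order of W. -/
/-- The length function of the product Coxeter system `(W')^l`: the sum of the factor
lengths. -/
noncomputable def pLen {B' W' : Type*} [Group W'] {M' : CoxeterMatrix B'}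
    (cs' : CoxeterSystem M' W') (l : ℕ) (x : Fin l → W') : ℕ :=
  ∑ i, cs'.length (x i)

/-- A reflection of the product Coxeter system `(W')^l`: a reflection of one factor,
embedded in the product. -/
def PIsReflection {B' W' : Type*} [Group W'] {M' : CoxeterMatrix B'}
    (cs' : CoxeterSystem M' W') (l : ℕ) (r : Fin l → W') : Prop :=
  ∃ (i : Fin l) (t : W'), cs'.IsReflection t ∧ r = Pi.mulSingle i t

/-- The Bruhat order of the product Coxeter system `(W')^l`: `u ≤ v` iff one can pass
from `u` to `v` by successively multiplying on the right by reflections of the product,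
increasing the length at each step. -/
def PBruhatLE {B' W' : Type*} [Group W'] {M' : CoxeterMatrix B'}
    (cs' : CoxeterSystem M' W') (l : ℕ) (u v : Fin l → W') : Prop :=
  Relation.ReflTransGen
    (fun a b => ∃ r : Fin l → W',
      PIsReflection cs' l r ∧ b = a * r ∧ pLen cs' l a < pLen cs' l b) u v

/-- The reflection length in the product Coxeter system `(W')^l`. -/
noncomputable def pReflLength {B' W' : Type*} [Group W'] {M' : CoxeterMatrix B'}
    (cs' : CoxeterSystem M' W') (l : ℕ) (w : Fin l → W') : ℕ :=
  sInf {n | ∃ L : List (Fin l → W'),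
    (∀ r ∈ L, PIsReflection cs' l r) ∧ L.length = n ∧ L.prod = w}

/-- `ℓ_R(O) = min {ℓ_R(w) : w ∈ O}` in the product Coxeter system `(W')^l`. -/
noncomputable def pReflLengthSet {B' W' : Type*} [Group W'] {M' : CoxeterMatrix B'}
    (cs' : CoxeterSystem M' W') (l : ℕ) (O : Set (Fin l → W')) : ℕ :=
  sInf (pReflLength cs' l '' O)

/-- The automorphism `σ(w₁, w₂, …, w_l) = (τ(w_l), w₁, …, w_{l-1})` of `(W')^l`
(indices in `Fin l`, with cyclic subtraction, so that entry `0` is `τ` applied to the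
last entry of `x`). -/
def cyclicShift {W' : Type*} (l : ℕ) [NeZero l] (τ : W' → W') (x : Fin l → W') :
    Fin l → W' :=
  fun i => if i = 0 then τ (x (i - 1)) else x (i - 1)

section StrongExchangeDev
open CoxeterSystem List
open scoped Classical
set_option linter.unusedSectionVars false


variable {B W : Type*} [Group W] {M : CoxeterMatrix B} (cs : CoxeterSystem M W)

/-- Auxiliary map for the sign representation used to prove the strong exchange property. -/
noncomputable def seMap (i : B) : W × ℤˣ → W × ℤˣ :=
  fun p => (cs.simple i * p.1 * cs.simple i, if p.1 = cs.simple i then -p.2 else p.2)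

lemma seMap_apply (i : B) (w : W) (e : ℤˣ) :
    seMap cs i (w, e) =
      (cs.simple i * w * cs.simple i, if w = cs.simple i then -e else e) := rfl

lemma seMap_fst_eq (i : B) (w : W) :
    cs.simple i * (cs.simple i * w * cs.simple i) * cs.simple i = w := by
  have h : cs.simple i * (cs.simple i * w * cs.simple i) * cs.simple i =
      (cs.simple i * cs.simple i) * w * (cs.simple i * cs.simple i) := by group
  rw [h, cs.simple_mul_simple_self, one_mul, mul_one]

lemma seMap_cond_iff (i : B) (w : W) :
    cs.simple i * w * cs.simple i = cs.simple i ↔ w = cs.simple i := by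
  constructor
  · intro hc
    have h2 := congrArg (fun z => cs.simple i * z * cs.simple i) hc
    rw [seMap_fst_eq] at h2
    rw [h2, cs.simple_mul_simple_self, one_mul]
  · intro hc
    rw [hc, cs.simple_mul_simple_self, one_mul]

lemma seMap_involutive (i : B) : Function.Involutive (seMap cs i) := by
  rintro ⟨w, e⟩
  rw [seMap_apply, seMap_apply]
  by_cases h : w = cs.simple i
  · rw [if_pos h, if_pos ((seMap_cond_iff cs i w).mpr h), neg_neg, seMap_fst_eq]
  · rw [if_neg h, if_neg (fun hc => h ((seMap_cond_iff cs i w).mp hc)), seMap_fst_eq]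

/-- The sign permutation attached to a simple generator. -/
noncomputable def sePerm (i : B) : Equiv.Perm (W × ℤˣ) :=
  Function.Involutive.toPerm _ (seMap_involutive cs i)

lemma sePerm_apply (i : B) (p : W × ℤˣ) : sePerm cs i p = seMap cs i p := rfl

/-- sign of a list relative to x : (-1)^(number of occurrences of x) -/
noncomputable def seSgn (x : W) : List W → ℤˣ
  | [] => 1
  | c :: L => (if c = x then (-1 : ℤˣ) else 1) * seSgn x L

lemma seSgn_nil (x : W) : seSgn x [] = 1 := rfl

lemma seSgn_cons (x c : W) (L : List W) :
    seSgn x (c :: L) = (if c = x then (-1 : ℤˣ) else 1) * seSgn x L := rfl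

lemma seSgn_append (x : W) (L₁ L₂ : List W) :
    seSgn x (L₁ ++ L₂) = seSgn x L₁ * seSgn x L₂ := by
  induction L₁ with
  | nil => simp [seSgn_nil]
  | cons c L ih => rw [cons_append, seSgn_cons, seSgn_cons, ih, mul_assoc]

lemma seSgn_of_not_mem {x : W} {L : List W} (h : x ∉ L) : seSgn x L = 1 := by
  induction L with
  | nil => rfl
  | cons c L ih =>
    rw [seSgn_cons, if_neg (fun hc => h (by rw [← hc]; exact mem_cons_self)),
      ih (fun hm => h (mem_cons_of_mem c hm)), one_mul]

lemma alt_two_mul_succ (i i' : B) (m : ℕ) :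
    alternatingWord i i' (2 * (m + 1)) =
      i :: i' :: alternatingWord i i' (2 * m) := by
  have h1 : 2 * (m + 1) = (2 * m + 1) + 1 := by ring
  rw [h1, alternatingWord_succ', if_neg (by simp [Nat.even_add_one, parity_simps]),
    alternatingWord_succ', if_pos (by simp)]

lemma alt_drop (i i' : B) : ∀ (n k : ℕ), k ≤ n →
    (alternatingWord i i' n).drop k = alternatingWord i i' (n - k) := by
  intro n
  induction n with
  | zero => intro k hk; interval_cases k; simp
  | succ n ih =>
    intro k hk
    match k with
    | 0 => simp
    | (k' + 1) =>
      rw [alternatingWord_succ', drop_succ_cons, ih k' (by omega)]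
      congr 1
      omega

lemma alt_get? (i i' : B) : ∀ (n j : ℕ), j < n →
    (alternatingWord i i' n)[j]? =
      some (if Even (n - j) then i else i') := by
  intro n
  induction n with
  | zero => omega
  | succ n ih =>
    intro j hj
    rw [alternatingWord_succ']
    match j with
    | 0 =>
      simp only [getElem?_cons_zero, Nat.sub_zero]
      congr 1
      rcases Nat.even_or_odd n with h | h
      · rw [if_pos h, if_neg (by simp [Nat.even_add_one, h])]
      · rw [if_neg (Nat.not_even_iff_odd.mpr h), if_pos (by simp [Nat.even_add_one, Nat.not_even_iff_odd.mpr h])]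
    | (j' + 1) =>
      rw [getElem?_cons_succ, ih j' (by omega)]
      have h2 : n + 1 - (j' + 1) = n - j' := by omega
      rw [h2]

lemma ris_cons (i : B) (ω : List B) :
    cs.rightInvSeq (i :: ω) =
      ((cs.wordProd ω)⁻¹ * cs.simple i * cs.wordProd ω) :: cs.rightInvSeq ω := rfl

/-- The composite of the sign maps along a word. -/
noncomputable def sePhi : List B → (W × ℤˣ → W × ℤˣ)
  | [] => id
  | i :: ω => seMap cs i ∘ sePhi ω

lemma sePhi_eq (ω : List B) (p : W × ℤˣ) :
    sePhi cs ω p = (cs.wordProd ω * p.1 * (cs.wordProd ω)⁻¹,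
      seSgn p.1 (cs.rightInvSeq ω) * p.2) := by
  induction ω with
  | nil => simp [sePhi, seSgn_nil, wordProd_nil]
  | cons i ω ih =>
    show seMap cs i (sePhi cs ω p) = _
    rw [ih, seMap_apply, ris_cons, seSgn_cons, wordProd_cons]
    have hiff : cs.wordProd ω * p.1 * (cs.wordProd ω)⁻¹ = cs.simple i ↔
        (cs.wordProd ω)⁻¹ * cs.simple i * cs.wordProd ω = p.1 := by
      constructor
      · intro h; rw [← h]; group
      · intro h; rw [← h]; group
    have hfst : cs.simple i * (cs.wordProd ω * p.1 * (cs.wordProd ω)⁻¹) * cs.simple i =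
        cs.simple i * cs.wordProd ω * p.1 * (cs.simple i * cs.wordProd ω)⁻¹ := by
      rw [mul_inv_rev, cs.inv_simple]; group
    by_cases h : (cs.wordProd ω)⁻¹ * cs.simple i * cs.wordProd ω = p.1
    · rw [if_pos (hiff.mpr h), if_pos h, hfst]
      congr 1
      rw [neg_mul, one_mul, neg_mul]
    · rw [if_neg (fun hc => h (hiff.mp hc)), if_neg h, hfst, one_mul]

section grp
variable {G : Type*} [Group G]

lemma inv_of_sq {g : G} (h : g * g = 1) : g⁻¹ = g :=
  (eq_inv_of_mul_eq_one_right h).symm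

lemma conj_pow_inv {g p : G} (hg : g * g = 1) (hc : g * p * g = p⁻¹) (k : ℕ) :
    g * p ^ k * g = (p ^ k)⁻¹ := by
  induction k with
  | zero => simpa using hg
  | succ k ih =>
    have h1 : g * p ^ (k + 1) * g = (g * p ^ k * g) * (g * p * g) := by
      rw [pow_succ, show (g * p ^ k * g) * (g * p * g) = g * p ^ k * (g * g) * p * g from
        by group, hg]
      group
    rw [h1, ih, hc, pow_succ', mul_inv_rev]

variable {a b p : G} (ha : a * a = 1) (hb : b * b = 1) (hpdef : p = a * b)

include ha hb hpdef in
lemma b_p_b : b * p * b = p⁻¹ := by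
  rw [hpdef, mul_inv_rev, inv_of_sq ha, inv_of_sq hb]
  calc b * (a * b) * b = (b * a) * (b * b) := by group
  _ = b * a := by rw [hb, mul_one]

include ha hb hpdef in
lemma a_p_a : a * p * a = p⁻¹ := by
  rw [hpdef, mul_inv_rev, inv_of_sq ha, inv_of_sq hb]
  calc a * (a * b) * a = (a * a) * (b * a) := by group
  _ = b * a := by rw [ha, one_mul]

include ha hb hpdef in
lemma seCC_red {m : ℕ} (hm : p^m = 1) (n : ℕ) :
    (p^((n+m)/2))⁻¹ * (if Even (n+m) then b else b*a*b) * p^((n+m)/2) =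
      (p^(n/2))⁻¹ * (if Even n then b else b*a*b) * p^(n/2) := by
  have hbp : ∀ k, b * p ^ k * b = (p ^ k)⁻¹ := fun k => conj_pow_inv hb (b_p_b ha hb hpdef) k
  have hap : ∀ k, a * p ^ k * a = (p ^ k)⁻¹ := fun k => conj_pow_inv ha (a_p_a ha hb hpdef) k
  have hPb : ∀ k, (p ^ k)⁻¹ * b = b * p ^ k := by
    intro k
    calc (p ^ k)⁻¹ * b = (b * p ^ k * b) * b := by rw [hbp]
    _ = b * p ^ k * (b * b) := by group
    _ = b * p ^ k := by rw [hb, mul_one]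
  have hPa : ∀ k, p ^ k * a = a * (p ^ k)⁻¹ := by
    intro k
    calc p ^ k * a = (a * a) * (p ^ k * a) := by rw [ha, one_mul]
    _ = a * (a * p ^ k * a) := by group
    _ = a * (p ^ k)⁻¹ := by rw [hap]
  rcases Nat.even_or_odd m with hme | hmo
  · -- m even
    obtain ⟨u, hu⟩ := hme
    have hEv : Even (n + m) ↔ Even n := by
      simp only [Nat.even_iff]
      omega
    have hhalf : (n + m) / 2 = n / 2 + u := by omega
    have hcc : p ^ u * p ^ u = 1 := by rw [← pow_add, show u + u = m by omega, hm]
    have hcb : (p ^ u)⁻¹ * b * p ^ u = b := by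
      calc (p ^ u)⁻¹ * b * p ^ u = b * (p ^ u * p ^ u) := by rw [hPb]; group
      _ = b := by rw [hcc, mul_one]
    have hca : (p ^ u)⁻¹ * a * p ^ u = a := by
      rw [inv_of_sq hcc]
      calc p ^ u * a * p ^ u = a * ((p ^ u)⁻¹ * p ^ u) := by rw [hPa]; group
      _ = a := by rw [inv_mul_cancel, mul_one]
    have hcX : (p ^ u)⁻¹ * (if Even n then b else b*a*b) * p ^ u =
        (if Even n then b else b*a*b) := by
      rcases Nat.even_or_odd n with h | h
      · rw [if_pos h]
        exact hcb
      · rw [if_neg (Nat.not_even_iff_odd.mpr h)]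
        calc (p ^ u)⁻¹ * (b * a * b) * p ^ u
            = ((p ^ u)⁻¹ * b * p ^ u) * ((p ^ u)⁻¹ * a * p ^ u) * ((p ^ u)⁻¹ * b * p ^ u) := by
              group
        _ = b * a * b := by rw [hcb, hca]
    simp only [hhalf, hEv]
    calc (p ^ (n/2 + u))⁻¹ * (if Even n then b else b*a*b) * p ^ (n/2 + u)
        = (p ^ (n/2))⁻¹ * ((p ^ u)⁻¹ * (if Even n then b else b*a*b) * p ^ u) * p ^ (n/2) := by
          rw [pow_add, mul_inv_rev]; group
    _ = (p ^ (n/2))⁻¹ * (if Even n then b else b*a*b) * p ^ (n/2) := by rw [hcX]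
  · -- m odd
    obtain ⟨u, hu⟩ := hmo
    have hp2u : p ^ (u + u) = p⁻¹ := by
      have h1 : p * p ^ (u + u) = 1 := by
        rw [← pow_succ', show u + u + 1 = m from by omega, hm]
      calc p ^ (u+u) = p⁻¹ * (p * p ^ (u+u)) := by group
      _ = p⁻¹ := by rw [h1, mul_one]
    have hpinv : p⁻¹ = b * a := by rw [hpdef, mul_inv_rev, inv_of_sq ha, inv_of_sq hb]
    have core1 : (p ^ u)⁻¹ * (b*a*b) * p ^ u = b := by
      calc (p ^ u)⁻¹ * (b*a*b) * p ^ u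
          = ((p ^ u)⁻¹ * b) * (a * (b * p ^ u)) := by group
      _ = (b * p ^ u) * (a * (b * p ^ u)) := by rw [hPb]
      _ = b * (p ^ u * a) * (b * p ^ u) := by group
      _ = b * (a * (p ^ u)⁻¹) * (b * p ^ u) := by rw [hPa]
      _ = b * a * ((p ^ u)⁻¹ * b) * p ^ u := by group
      _ = b * a * (b * p ^ u) * p ^ u := by rw [hPb]
      _ = (b * a * b) * (p ^ u * p ^ u) := by group
      _ = (b * a * b) * p⁻¹ := by rw [← pow_add, hp2u]
      _ = (b * a * b) * (b * a) := by rw [hpinv]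
      _ = b * a * (b * b) * a := by group
      _ = b * (a * a) := by rw [hb]; group
      _ = b := by rw [ha, mul_one]
    have core2 : (p ^ (u+1))⁻¹ * b * p ^ (u+1) = b * a * b := by
      have hQQ : p ^ (u+1) * p ^ (u+1) = p := by
        rw [← pow_add, show u+1+(u+1) = m + 1 from by omega, pow_succ, hm, one_mul]
      calc (p ^ (u+1))⁻¹ * b * p ^ (u+1) = (b * p ^ (u+1)) * p ^ (u+1) := by rw [hPb]
      _ = b * (p ^ (u+1) * p ^ (u+1)) := by group
      _ = b * p := by rw [hQQ]
      _ = b * a * b := by rw [hpdef]; group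
    rcases Nat.even_or_odd n with h | h
    · have hEv : ¬ Even (n + m) := by
        rw [Nat.even_iff] at h ⊢
        omega
      have hh := h
      rw [Nat.even_iff] at hh
      have hhalf : (n + m) / 2 = n / 2 + u := by omega
      rw [if_pos h, if_neg hEv, hhalf, pow_add, mul_inv_rev]
      calc (p ^ u)⁻¹ * (p ^ (n/2))⁻¹ * (b*a*b) * (p ^ (n/2) * p ^ u)
          = (p ^ (n/2))⁻¹ * ((p ^ u)⁻¹ * (b*a*b) * p ^ u) * p ^ (n/2) := by
            group
      _ = (p ^ (n/2))⁻¹ * b * p ^ (n/2) := by rw [core1]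
    · have hEv : Even (n + m) := by
        rw [Nat.odd_iff] at h
        rw [Nat.even_iff]
        omega
      have hh := h
      rw [Nat.odd_iff] at hh
      have hhalf : (n + m) / 2 = n / 2 + (u + 1) := by omega
      rw [if_neg (Nat.not_even_iff_odd.mpr h), if_pos hEv, hhalf, pow_add, mul_inv_rev]
      calc (p ^ (u+1))⁻¹ * (p ^ (n/2))⁻¹ * b * (p ^ (n/2) * p ^ (u+1))
          = (p ^ (n/2))⁻¹ * ((p ^ (u+1))⁻¹ * b * p ^ (u+1)) * p ^ (n/2) := by
            group
      _ = (p ^ (n/2))⁻¹ * (b*a*b) * p ^ (n/2) := by rw [core2]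
end grp

lemma seQ_form {G : Type*} [Group G] {a b p : G} (hb : b * b = 1) (n : ℕ) :
    ((if Even n then (1:G) else b) * p^(n/2))⁻¹ * (if Even n then b else a) *
      ((if Even n then (1:G) else b) * p^(n/2)) =
    (p^(n/2))⁻¹ * (if Even n then b else b*a*b) * p^(n/2) := by
  rcases Nat.even_or_odd n with h | h
  · simp only [if_pos h, one_mul]
  · simp only [if_neg (Nat.not_even_iff_odd.mpr h)]
    rw [mul_inv_rev, inv_of_sq hb]
    group

lemma ris_braid_pair (i i' : B) (j : ℕ) (hj : j < M i i') :
    (cs.rightInvSeq (alternatingWord i i' (2 * M i i'))).getD (j + M i i') 1 =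
    (cs.rightInvSeq (alternatingWord i i' (2 * M i i'))).getD j 1 := by
  obtain ⟨m, hm'⟩ : ∃ m, M i i' = m := ⟨_, rfl⟩
  rw [hm'] at hj ⊢
  have ha := cs.simple_mul_simple_self i
  have hb := cs.simple_mul_simple_self i'
  have hm := cs.simple_mul_simple_pow i i'
  rw [hm'] at hm
  set n := m - 1 - j with hndef
  rw [cs.getD_rightInvSeq, cs.getD_rightInvSeq, alt_drop i i' (2*m) (j + m + 1) (by omega),
    alt_drop i i' (2*m) (j + 1) (by omega), alt_get? i i' (2*m) (j + m) (by omega),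
    alt_get? i i' (2*m) j (by omega)]
  simp only [Option.map_some, Option.getD_some]
  have e1 : 2*m - (j+m+1) = n := by omega
  have e2 : 2*m - (j+1) = n + m := by omega
  have e3 : 2*m - (j+m) = n+1 := by omega
  have e4 : 2*m - j = n+m+1 := by omega
  rw [e1, e2, e3, e4, cs.prod_alternatingWord_eq_mul_pow, cs.prod_alternatingWord_eq_mul_pow]
  have hL : ∀ k : ℕ, (if Even (k+1) then cs.simple i else cs.simple i')
      = (if Even k then cs.simple i' else cs.simple i) := by
    intro k
    rcases Nat.even_or_odd k with h | h
    · rw [if_pos h, if_neg (by simp [Nat.even_add_one, h])]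
    · rw [if_neg (Nat.not_even_iff_odd.mpr h),
        if_pos (by simp [Nat.even_add_one, Nat.not_even_iff_odd.mpr h])]
  rw [apply_ite cs.simple, apply_ite cs.simple, hL n, show n+m+1 = (n+m)+1 from rfl, hL (n+m),
    seQ_form hb n, seQ_form hb (n+m)]
  exact (seCC_red ha hb rfl hm n).symm

lemma ris_braid_halves (i i' : B) :
    cs.rightInvSeq (alternatingWord i i' (2 * M i i')) =
      (cs.rightInvSeq (alternatingWord i i' (2 * M i i'))).take (M i i') ++
      (cs.rightInvSeq (alternatingWord i i' (2 * M i i'))).take (M i i') := by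
  have hlen : (cs.rightInvSeq (alternatingWord i i' (2 * M i i'))).length = 2 * M i i' := by
    rw [length_rightInvSeq, length_alternatingWord]
  conv_lhs => rw [← take_append_drop (M i i') (cs.rightInvSeq (alternatingWord i i' (2 * M i i')))]
  congr 1
  apply List.ext_getElem
  · rw [length_drop, length_take, hlen]
    omega
  · intro k h1 h2
    rw [getElem_drop, getElem_take]
    rw [← List.getD_eq_getElem _ 1, ← List.getD_eq_getElem _ 1]
    have hk : k < M i i' := by
      rw [length_take, hlen] at h2
      omega
    rw [show M i i' + k = k + M i i' from by omega]
    exact ris_braid_pair cs i i' k hk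

lemma sePow (i i' : B) (m : ℕ) :
    ⇑((sePerm cs i * sePerm cs i') ^ m) = sePhi cs (alternatingWord i i' (2 * m)) := by
  induction m with
  | zero => rfl
  | succ m ih =>
    rw [alt_two_mul_succ, pow_succ', Equiv.Perm.coe_mul, ih]
    rfl

lemma sePerm_liftable : M.IsLiftable (fun i => sePerm cs i) := by
  intro i i'
  apply Equiv.ext
  rintro ⟨w, e⟩
  have h1 := congrFun (sePow cs i i' (M i i')) (w, e)
  rw [h1, sePhi_eq]
  have hπ : cs.wordProd (alternatingWord i i' (2 * M i i')) = 1 := by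
    rw [cs.prod_alternatingWord_eq_mul_pow, if_pos ⟨M i i', by ring⟩,
      show 2 * M i i' / 2 = M i i' from by omega, one_mul, cs.simple_mul_simple_pow]
  have hsgn : seSgn w (cs.rightInvSeq (alternatingWord i i' (2 * M i i'))) = 1 := by
    rw [ris_braid_halves cs i i', seSgn_append, Int.units_mul_self]
  rw [hπ, hsgn]
  simp

/-- The sign representation. -/
noncomputable def seF : W →* Equiv.Perm (W × ℤˣ) :=
  cs.lift ⟨fun i => sePerm cs i, sePerm_liftable cs⟩

lemma seF_simple (i : B) : seF cs (cs.simple i) = sePerm cs i :=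
  cs.lift_apply_simple _ i

lemma seF_word (ω : List B) : ⇑(seF cs (cs.wordProd ω)) = sePhi cs ω := by
  induction ω with
  | nil => rw [wordProd_nil, map_one]; rfl
  | cons i ω ih =>
    rw [wordProd_cons, map_mul, Equiv.Perm.coe_mul, ih, seF_simple]
    rfl

lemma seF_eq (ω : List B) (w : W) (e : ℤˣ) :
    seF cs (cs.wordProd ω) (w, e) =
      (cs.wordProd ω * w * (cs.wordProd ω)⁻¹, seSgn w (cs.rightInvSeq ω) * e) := by
  rw [congrFun (seF_word cs ω) (w, e), sePhi_eq]

lemma seF_fst (u w : W) (e : ℤˣ) : (seF cs u (w, e)).1 = u * w * u⁻¹ := by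
  obtain ⟨ω, _, rfl⟩ := cs.exists_reduced_word' u
  rw [seF_eq]

lemma seF_snd_mul (u w : W) (e : ℤˣ) : (seF cs u (w, e)).2 = (seF cs u (w, 1)).2 * e := by
  obtain ⟨ω, _, rfl⟩ := cs.exists_reduced_word' u
  rw [seF_eq, seF_eq, mul_one]

lemma seF_ascent (t : W) (ht : cs.IsReflection t) :
    ∀ (n : ℕ) (w : W), cs.length w = n → cs.length w < cs.length (w * t) →
      (seF cs w (t, 1)).2 = 1 := by
  intro n
  induction n using Nat.strong_induction_on with
  | _ n ih =>
    intro w hn hlt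
    rcases eq_or_ne w 1 with rfl | hw
    · rw [map_one]
      rfl
    · obtain ⟨i, hi⟩ := cs.exists_leftDescent_of_ne_one hw
      have hid : cs.IsLeftDescent w i := hi
      unfold CoxeterSystem.IsLeftDescent at hid
      have hwd : w = cs.simple i * (cs.simple i * w) := by
        rw [← mul_assoc, cs.simple_mul_simple_self, one_mul]
      have hlen' : cs.length (cs.simple i * w) + 1 = cs.length w := by
        rcases cs.length_simple_mul w i with h | h
        · omega
        · exact h
      have hstep : seF cs w (t, 1) = seMap cs i (seF cs (cs.simple i * w) (t, 1)) := by
        conv_lhs => rw [hwd]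
        rw [map_mul, Equiv.Perm.mul_apply, seF_simple]
        rfl
      have hcond : (cs.simple i * w) * t * (cs.simple i * w)⁻¹ ≠ cs.simple i := by
        intro hc
        have h1 : w * t = cs.simple i * w := by
          have e2 : (cs.simple i * w) * t = cs.simple i * (cs.simple i * w) := by
            calc (cs.simple i * w) * t
                = ((cs.simple i * w) * t * (cs.simple i * w)⁻¹) * (cs.simple i * w) := by
                  group
              _ = cs.simple i * (cs.simple i * w) := by rw [hc]
          have e3 : cs.simple i * (w * t) = cs.simple i * (cs.simple i * w) := by
            rw [← e2]; group
          exact mul_left_cancel e3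
        rw [h1] at hlt
        omega
      have hasc : cs.length (cs.simple i * w) < cs.length ((cs.simple i * w) * t) := by
        have hne := ht.length_mul_left_ne (cs.simple i * w)
        by_contra hc
        have h2 : cs.length ((cs.simple i * w) * t) < cs.length (cs.simple i * w) :=
          lt_of_le_of_ne (not_lt.mp hc) hne
        have h3 : w * t = cs.simple i * ((cs.simple i * w) * t) := by
          conv_lhs => rw [hwd]
          group
        rcases cs.length_simple_mul ((cs.simple i * w) * t) i with h4 | h4 <;>
          rw [h3] at hlt <;> omega
      have hIH := ih (cs.length (cs.simple i * w)) (by omega) (cs.simple i * w) rfl hasc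
      have hpair : seF cs (cs.simple i * w) (t, 1) =
          ((cs.simple i * w) * t * (cs.simple i * w)⁻¹, 1) :=
        Prod.ext (seF_fst cs _ t 1) hIH
      rw [hstep, hpair, seMap_apply, if_neg hcond]

lemma seF_self (t : W) (ht : cs.IsReflection t) : (seF cs t (t, 1)).2 = -1 := by
  obtain ⟨u, i, htu⟩ := ht
  have h1 : seF cs t (t, 1) = seF cs u (seF cs (cs.simple i) (seF cs u⁻¹ (t, 1))) := by
    rw [htu, map_mul, map_mul, Equiv.Perm.mul_apply, Equiv.Perm.mul_apply]
  have hfst1 : (seF cs u⁻¹ (t, 1)).1 = cs.simple i := by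
    rw [seF_fst, htu]
    group
  have hpair1 : seF cs u⁻¹ (t, 1) = (cs.simple i, (seF cs u⁻¹ (t, 1)).2) :=
    Prod.ext hfst1 rfl
  have hsss : cs.simple i * cs.simple i * cs.simple i = cs.simple i := by
    rw [cs.simple_mul_simple_self, one_mul]
  have h2 : seF cs (cs.simple i) (seF cs u⁻¹ (t, 1)) =
      (cs.simple i, -(seF cs u⁻¹ (t, 1)).2) := by
    conv_lhs => rw [hpair1]
    rw [seF_simple, sePerm_apply, seMap_apply, if_pos rfl, hsss]
  have hid : seF cs u (seF cs u⁻¹ (t, 1)) = (t, 1) := by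
    rw [← Equiv.Perm.mul_apply, ← map_mul, mul_inv_cancel, map_one, Equiv.Perm.one_apply]
  have h4 : (seF cs u (cs.simple i, (seF cs u⁻¹ (t, 1)).2)).2 = 1 := by
    rw [← hpair1, hid]
  rw [seF_snd_mul] at h4
  rw [h1, h2, seF_snd_mul, mul_neg, h4]

lemma seF_descent {w t : W} (ht : cs.IsReflection t)
    (hlt : cs.length (w * t) < cs.length w) : (seF cs w (t, 1)).2 = -1 := by
  have hw : w = (w * t) * t := by
    rw [mul_assoc, ht.mul_self, mul_one]
  have hasc : cs.length (w * t) < cs.length ((w * t) * t) := by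
    rw [← hw]
    exact hlt
  have hA : (seF cs (w * t) (t, 1)).2 = 1 := seF_ascent cs t ht _ (w * t) rfl hasc
  have hpairt : seF cs t (t, 1) = (t, -1) := by
    refine Prod.ext ?_ (seF_self cs t ht)
    rw [seF_fst, ht.inv, mul_assoc, ht.mul_self, mul_one]
  have h1 : seF cs w (t, 1) = seF cs (w * t) (seF cs t (t, 1)) := by
    conv_lhs => rw [hw]
    rw [map_mul, Equiv.Perm.mul_apply]
  rw [h1, hpairt, seF_snd_mul, hA, one_mul]

lemma strong_exchange_right {w t : W} (ht : cs.IsReflection t)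
    (hlt : cs.length (w * t) < cs.length w) {ω : List B} (hπ : w = cs.wordProd ω) :
    t ∈ cs.rightInvSeq ω := by
  by_contra hmem
  have h1 : (seF cs w (t, 1)).2 = -1 := seF_descent cs ht hlt
  rw [hπ, seF_eq] at h1
  simp only [seSgn_of_not_mem hmem, one_mul, mul_one] at h1
  exact absurd h1 (by decide)

lemma strong_exchange_left {w t : W} (ht : cs.IsReflection t)
    (hlt : cs.length (t * w) < cs.length w) {ω : List B} (hπ : w = cs.wordProd ω) :
    ∃ j < ω.length, t * w = cs.wordProd (ω.eraseIdx j) := by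
  have hlt' : cs.length (w⁻¹ * t) < cs.length w⁻¹ := by
    have h1 : cs.length (w⁻¹ * t) = cs.length (t * w) := by
      rw [← cs.length_inv (w⁻¹ * t), mul_inv_rev, inv_inv, ht.inv]
    rw [h1, cs.length_inv]
    exact hlt
  have h2 : t ∈ cs.rightInvSeq ω.reverse :=
    strong_exchange_right cs ht hlt' (by rw [cs.wordProd_reverse, ← hπ])
  rw [cs.rightInvSeq_reverse, List.mem_reverse] at h2
  obtain ⟨j, hj, hget⟩ := List.mem_iff_getElem.mp h2
  have hjlen : j < ω.length := by
    rw [← cs.length_leftInvSeq ω]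
    exact hj
  refine ⟨j, hjlen, ?_⟩
  have h3 := cs.getD_leftInvSeq_mul_wordProd ω j
  rw [List.getD_eq_getElem _ 1 hj, hget, ← hπ] at h3
  exact h3

lemma length_mul_longest {w₀ : W} (hmax : ∀ w, cs.length w ≤ cs.length w₀) :
    ∀ u : W, cs.length (u * w₀) + cs.length u = cs.length w₀ := by
  suffices H : ∀ (n : ℕ) (u : W), cs.length u = n →
      cs.length (u * w₀) + cs.length u = cs.length w₀ by
    intro u
    exact H (cs.length u) u rfl
  intro n
  induction n using Nat.strong_induction_on with
  | _ n ih =>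
    intro u hn
    rcases eq_or_ne u 1 with rfl | hu
    · simp
    · obtain ⟨i, hi⟩ := cs.exists_rightDescent_of_ne_one hu
      have hdesc : cs.length (u * cs.simple i) < cs.length u := hi
      have hlenu' : cs.length (u * cs.simple i) + 1 = cs.length u := by
        rcases cs.length_mul_simple u i with h | h
        · omega
        · exact h
      have hIH := ih (cs.length (u * cs.simple i)) (by omega) (u * cs.simple i) rfl
      obtain ⟨ω₂, hω₂r, hω₂⟩ := cs.exists_reduced_word' (u * cs.simple i)⁻¹
      obtain ⟨ω₁, hω₁r, hω₁⟩ := cs.exists_reduced_word' ((u * cs.simple i) * w₀)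
      have hw0 : w₀ = cs.wordProd (ω₂ ++ ω₁) := by
        rw [cs.wordProd_append, ← hω₂, ← hω₁]
        group
      have hlen2 : ω₂.length = cs.length (u * cs.simple i) := by
        have h1 := hω₂r
        unfold CoxeterSystem.IsReduced at h1
        rw [← hω₂, cs.length_inv] at h1
        exact h1.symm
      have hlen1 : ω₁.length = cs.length ((u * cs.simple i) * w₀) := by
        have h1 := hω₁r
        unfold CoxeterSystem.IsReduced at h1
        rw [← hω₁] at h1
        exact h1.symm
      have hsi : cs.length (cs.simple i * w₀) < cs.length w₀ :=
        lt_of_le_of_ne (hmax _) (cs.length_simple_mul_ne w₀ i)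
      obtain ⟨j, hj, hjeq⟩ := strong_exchange_left cs (cs.isReflection_simple i) hsi hw0
      rcases lt_or_ge j ω₂.length with hcase | hcase
      · exfalso
        have he : (ω₂ ++ ω₁).eraseIdx j = ω₂.eraseIdx j ++ ω₁ := by
          rw [List.eraseIdx_eq_take_drop_succ, List.eraseIdx_eq_take_drop_succ,
            List.take_append, List.drop_append]
          rw [show j - ω₂.length = 0 from by omega, show j + 1 - ω₂.length = 0 from by omega]
          simp [List.append_assoc]
        rw [he, cs.wordProd_append] at hjeq
        have h5 : cs.wordProd (ω₂.eraseIdx j) = u⁻¹ := by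
          have h6 : cs.simple i * (u * cs.simple i)⁻¹ = u⁻¹ := by
            rw [mul_inv_rev, cs.inv_simple, ← mul_assoc, cs.simple_mul_simple_self, one_mul]
          calc cs.wordProd (ω₂.eraseIdx j)
              = (cs.wordProd (ω₂.eraseIdx j) * cs.wordProd ω₁) *
                ((u * cs.simple i) * w₀)⁻¹ := by rw [← hω₁]; group
            _ = (cs.simple i * w₀) * ((u * cs.simple i) * w₀)⁻¹ := by rw [← hjeq]
            _ = cs.simple i * (u * cs.simple i)⁻¹ := by group
            _ = u⁻¹ := h6
        have h7 : cs.length u ≤ (ω₂.eraseIdx j).length := by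
          calc cs.length u = cs.length u⁻¹ := (cs.length_inv u).symm
            _ = cs.length (cs.wordProd (ω₂.eraseIdx j)) := by rw [h5]
            _ ≤ (ω₂.eraseIdx j).length := cs.length_wordProd_le _
        have h8 := List.length_eraseIdx_add_one (show j < ω₂.length from hcase)
        omega
      · have hjlt : j - ω₂.length < ω₁.length := by
          rw [List.length_append] at hj
          omega
        have he : (ω₂ ++ ω₁).eraseIdx j = ω₂ ++ ω₁.eraseIdx (j - ω₂.length) := by
          rw [List.eraseIdx_eq_take_drop_succ, List.eraseIdx_eq_take_drop_succ,
            List.take_append, List.drop_append]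
          rw [List.take_of_length_le (by omega), List.drop_of_length_le (by omega),
            show j + 1 - ω₂.length = (j - ω₂.length) + 1 from by omega]
          simp [List.append_assoc]
        rw [he, cs.wordProd_append] at hjeq
        have h5 : u * w₀ = cs.wordProd (ω₁.eraseIdx (j - ω₂.length)) := by
          calc u * w₀ = (u * cs.simple i) * (cs.simple i * w₀) := by
                rw [show (u * cs.simple i) * (cs.simple i * w₀) =
                  u * (cs.simple i * cs.simple i) * w₀ from by group,
                  cs.simple_mul_simple_self, mul_one]
            _ = (u * cs.simple i) *
                (cs.wordProd ω₂ * cs.wordProd (ω₁.eraseIdx (j - ω₂.length))) := by rw [hjeq]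
            _ = (u * cs.simple i) *
                ((u * cs.simple i)⁻¹ * cs.wordProd (ω₁.eraseIdx (j - ω₂.length))) := by
                rw [← hω₂]
            _ = cs.wordProd (ω₁.eraseIdx (j - ω₂.length)) := by group
        have h8 := List.length_eraseIdx_add_one hjlt
        have h9 : cs.length (u * w₀) ≤ (ω₁.eraseIdx (j - ω₂.length)).length := by
          rw [h5]
          exact cs.length_wordProd_le _
        have h10 : cs.length w₀ ≤ cs.length u + cs.length (u * w₀) := by
          have h11 := cs.length_mul_le u⁻¹ (u * w₀)
          rw [show u⁻¹ * (u * w₀) = w₀ from by group, cs.length_inv] at h11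
          exact h11
        omega

lemma longest_sq {w₀ : W} (hmax : ∀ w, cs.length w ≤ cs.length w₀) : w₀ * w₀ = 1 := by
  have h := length_mul_longest cs hmax w₀
  exact cs.length_eq_zero_iff.mp (by omega)

lemma sum_range_even (c : ℕ) : ∀ k : ℕ,
    ∑ j ∈ Finset.range (k + k), (if Even j then c else 0) = k * c := by
  intro k
  induction k with
  | zero => simp
  | succ k ih =>
    have h : k + 1 + (k + 1) = (k + k) + 1 + 1 := by ring
    have hev : Even (k + k) := ⟨k, rfl⟩
    rw [h, Finset.sum_range_succ, Finset.sum_range_succ, ih,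
      if_pos hev, if_neg (by simp [Nat.even_add_one, hev]), add_zero]
    ring

end StrongExchangeDev

lemma pLen_mono {B' W' : Type*} [Group W'] {M' : CoxeterMatrix B'}
    (cs' : CoxeterSystem M' W') (l : ℕ) {u v : Fin l → W'}
    (h : PBruhatLE cs' l u v) : pLen cs' l u ≤ pLen cs' l v := by
  induction h with
  | refl => exact le_rfl
  | tail _ hstep ih =>
    obtain ⟨r, _, _, hlt⟩ := hstep
    exact le_trans ih (le_of_lt hlt)


/-- Let `(W', S')` be a finite Coxeter system with longest element `w₀'`, `τ` a
length-preserving automorphism of `W'`, `l` a positive even integer, and `W = (W')^l`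
with the automorphism `σ(w₁, …, w_l) = (τ(w_l), w₁, …, w_{l-1})`.  Let
`w₀ = (w₀', …, w₀')` and `O` its `σ`-conjugacy class.  Then `1 ∈ O` (so `ℓ_R(O) = 0`),
and `max {ℓ(x) : x ≤ σ(x) w₀} = ℓ(w₀) / 2`. -/
theorem statement11 {B' W' : Type*} [Group W'] [Finite W'] {M' : CoxeterMatrix B'}
    (cs' : CoxeterSystem M' W')
    (w₀' : W') (hw₀' : ∀ w, cs'.length w ≤ cs'.length w₀')
    (τ : W' ≃* W') (hτ : ∀ w, cs'.length (τ w) = cs'.length w)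
    (l : ℕ) [NeZero l] (hl : Even l) :
    (1 : Fin l → W') ∈
        {w | ∃ x : Fin l → W', w = x * (fun _ => w₀') * (cyclicShift l (⇑τ) x)⁻¹} ∧
    pReflLengthSet cs' l
        {w | ∃ x : Fin l → W', w = x * (fun _ => w₀') * (cyclicShift l (⇑τ) x)⁻¹} = 0 ∧
    sSup {n : ℕ | ∃ x : Fin l → W',
        PBruhatLE cs' l x (cyclicShift l (⇑τ) x * fun _ => w₀') ∧ pLen cs' l x = n} =
      pLen cs' l (fun _ => w₀') / 2 := by
  have KL : ∀ u, cs'.length (u * w₀') + cs'.length u = cs'.length w₀' :=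
    length_mul_longest cs' hw₀'
  have hsq : w₀' * w₀' = 1 := longest_sq cs' hw₀'
  have hl2 : 2 ≤ l := by
    obtain ⟨k, hk⟩ := hl
    have := NeZero.ne l
    omega
  set x : Fin l → W' := fun i => if Even ((i : Fin l) : ℕ) then w₀' else 1 with hxdef
  -- Fin arithmetic
  have hv0 : (((0 : Fin l) - 1 : Fin l) : ℕ) = l - 1 := by
    rw [Fin.sub_def]
    simp only [Fin.val_zero, Fin.val_one']
    rw [Nat.mod_eq_of_lt (show 1 < l from by omega), add_zero,
      Nat.mod_eq_of_lt (show l - 1 < l from by omega)]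
  have hv : ∀ i : Fin l, i ≠ 0 → ((i - 1 : Fin l) : ℕ) = (i : ℕ) - 1 := by
    intro i hi
    rw [Fin.sub_def]
    have h1 : (i : ℕ) ≠ 0 := fun hc => hi (Fin.ext (by simpa using hc))
    have h2 : (i : ℕ) < l := i.isLt
    simp only [Fin.val_one']
    rw [Nat.mod_eq_of_lt (show 1 < l from by omega)]
    have h3 : l - 1 + (i : ℕ) = ((i : ℕ) - 1) + l := by omega
    rw [h3, Nat.add_mod_right, Nat.mod_eq_of_lt (by omega)]
  -- the key computation : σ(x) = x * w₀vec
  have hx1 : cyclicShift l (⇑τ) x = x * (fun _ => w₀') := by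
    funext i
    show (if i = 0 then τ (x (i - 1)) else x (i - 1)) = x i * w₀'
    by_cases h0 : i = 0
    · subst h0
      rw [if_pos rfl]
      have hxm1 : x ((0 : Fin l) - 1) = 1 := by
        show (if Even ((((0 : Fin l) - 1 : Fin l)) : ℕ) then w₀' else 1) = 1
        rw [hv0, if_neg (by simp only [Nat.even_iff] at hl ⊢; omega)]
      have hx0 : x 0 = w₀' := by
        show (if Even (((0 : Fin l)) : ℕ) then w₀' else 1) = w₀'
        rw [if_pos (by simp)]
      rw [hxm1, map_one, hx0]
      exact hsq.symm
    · rw [if_neg h0]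
      have hval := hv i h0
      have h1 : (i : ℕ) ≠ 0 := fun hc => h0 (Fin.ext (by simpa using hc))
      show (if Even (((i - 1 : Fin l)) : ℕ) then w₀' else 1) =
        (if Even ((i : Fin l) : ℕ) then w₀' else 1) * w₀'
      rcases Nat.even_or_odd ((i : Fin l) : ℕ) with he | ho
      · rw [hval, if_neg (by rw [Nat.even_iff] at he ⊢; omega), if_pos he]
        exact hsq.symm
      · rw [hval, if_pos (by rw [Nat.odd_iff] at ho; rw [Nat.even_iff]; omega),
          if_neg (Nat.not_even_iff_odd.mpr ho), one_mul]
  have hx2 : cyclicShift l (⇑τ) x * (fun _ => w₀') = x := by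
    rw [hx1]
    funext i
    show (x i * w₀') * w₀' = x i
    rw [mul_assoc, hsq, mul_one]
  have hmem1 : (1 : Fin l → W') ∈
      {w | ∃ x : Fin l → W', w = x * (fun _ => w₀') * (cyclicShift l (⇑τ) x)⁻¹} := by
    refine ⟨x, ?_⟩
    rw [hx1]
    exact (mul_inv_cancel _).symm
  refine ⟨hmem1, ?_, ?_⟩
  · -- reflection length of the class is 0
    have hrl : pReflLength cs' l (1 : Fin l → W') = 0 := by
      apply Nat.sInf_eq_zero.mpr
      left
      exact ⟨[], fun r hr => absurd hr List.not_mem_nil, rfl, List.prod_nil⟩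
    apply Nat.sInf_eq_zero.mpr
    left
    exact ⟨1, hmem1, hrl⟩
  · -- the sup of lengths
    set S := {n : ℕ | ∃ y : Fin l → W',
        PBruhatLE cs' l y (cyclicShift l (⇑τ) y * fun _ => w₀') ∧ pLen cs' l y = n} with hSdef
    have hub : ∀ n ∈ S, n ≤ pLen cs' l (fun _ => w₀') / 2 := by
      rintro n ⟨y, hB, rfl⟩
      have hmono := pLen_mono cs' l hB
      have h2 : pLen cs' l (cyclicShift l (⇑τ) y * fun _ => w₀') +
          pLen cs' l (cyclicShift l (⇑τ) y) = pLen cs' l (fun _ => w₀') := by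
        unfold pLen
        rw [← Finset.sum_add_distrib]
        exact Finset.sum_congr rfl (fun i _ => KL _)
      have h3 : pLen cs' l (cyclicShift l (⇑τ) y) = pLen cs' l y := by
        unfold pLen
        have h4 : ∀ i : Fin l, cs'.length ((cyclicShift l (⇑τ) y) i) =
            cs'.length (y (i - 1)) := by
          intro i
          by_cases h : i = 0
          · simp [cyclicShift, h, hτ]
          · simp [cyclicShift, h]
        calc ∑ i, cs'.length (cyclicShift l (⇑τ) y i)
            = ∑ i, cs'.length (y (i - 1)) := Finset.sum_congr rfl (fun i _ => h4 i)
          _ = ∑ i, cs'.length (y i) :=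
            Fintype.sum_equiv (Equiv.subRight (1 : Fin l)) _ _ (fun i => rfl)
      rw [h3] at h2
      rw [Nat.le_div_iff_mul_le (by norm_num : 0 < 2)]
      omega
    have hmem : pLen cs' l (fun _ => w₀') / 2 ∈ S := by
      obtain ⟨k, hk⟩ := hl
      have hLval : pLen cs' l (fun _ => w₀') = l * cs'.length w₀' := by
        unfold pLen
        rw [Finset.sum_const, Finset.card_univ, Fintype.card_fin, smul_eq_mul]
      have hxL : pLen cs' l x = k * cs'.length w₀' := by
        unfold pLen
        have h1 : ∀ i : Fin l, cs'.length (x i) =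
            if Even ((i : Fin l) : ℕ) then cs'.length w₀' else 0 := by
          intro i
          by_cases h : Even ((i : Fin l) : ℕ)
          · simp only [hxdef, if_pos h]
          · simp only [hxdef, if_neg h, cs'.length_one]
        rw [Finset.sum_congr rfl (fun i _ => h1 i),
          Fin.sum_univ_eq_sum_range (fun j => if Even j then cs'.length w₀' else 0) l, hk]
        exact sum_range_even (cs'.length w₀') k
      have hL2 : pLen cs' l (fun _ => w₀') / 2 = k * cs'.length w₀' := by
        rw [hLval, hk, show (k + k) * cs'.length w₀' = 2 * (k * cs'.length w₀') from by ring]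
        exact Nat.mul_div_cancel_left _ (by norm_num)
      refine ⟨x, ?_, by rw [hxL, hL2]⟩
      rw [hx2]
      exact Relation.ReflTransGen.refl
    exact le_antisymm (csSup_le ⟨_, hmem⟩ hub)
      (le_csSup ⟨pLen cs' l (fun _ => w₀') / 2, fun n hn => hub n hn⟩ hmem)
end

section
/- Let (W', S') be a finite Coxeter system with longest element w₀', let τ be a length-preserving automorphism of W', let l be a positive odd integer, and let W = (W')^l with the automorphism σ(w₁, w₂, …, w_l) = (τ(w_l), w₁, …, w_{l−1}). Let O be the σ-conjugacy class of the longest element w₀ = (w₀', …, w₀') of W, and let O' be the τ-conjugacy class of w₀' in W'. Then ℓ_R(O) = ℓ_R(O'). -/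
namespace Statement12Aux

open CoxeterSystem

variable {B W : Type*} [Group W] {M : CoxeterMatrix B} (cs : CoxeterSystem M W)

noncomputable local instance : DecidableEq W := Classical.decEq W

local prefix:100 "s" => cs.simple
local prefix:100 "π" => cs.wordProd
local prefix:100 "ℓ" => cs.length

/-- The function underlying the reflection-cocycle permutation representation. -/
noncomputable def etaFun (i : B) : W × ZMod 2 → W × ZMod 2 :=
  fun p => (s i * p.1 * s i, p.2 + if p.1 = s i then 1 else 0)

lemma simple_conj_eq_iff (i : B) (t : W) : s i * t * s i = s i ↔ t = s i := by
  constructor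
  · intro h
    have h2 : s i * (t * s i) = s i * 1 := by rw [← mul_assoc, h, mul_one]
    have h3 := mul_left_cancel h2
    have h4 : t * s i * s i = 1 * s i := by rw [h3, one_mul]
    rw [cs.simple_mul_simple_cancel_right] at h4
    simpa using h4
  · rintro rfl
    rw [cs.simple_mul_simple_self, one_mul]

lemma etaFun_involutive (i : B) : Function.Involutive (etaFun cs i) := by
  rintro ⟨t, e⟩
  simp only [etaFun]
  refine Prod.ext ?_ ?_
  · show s i * (s i * t * s i) * s i = t
    rw [show  s i * (s i * t * s i) * s i = (s i * s i) * t * (s i * s i) by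
        simp [mul_assoc], cs.simple_mul_simple_self, one_mul, mul_one]
  · show e + (if t = s i then 1 else 0) + (if s i * t * s i = s i then 1 else 0) = e
    rw [if_congr (simple_conj_eq_iff cs i t) rfl rfl]
    by_cases ht : t = s i
    · rw [if_pos ht, add_assoc, show (1 : ZMod 2) + 1 = 0 by decide, add_zero]
    · simp [ht]

/-- The reflection-cocycle permutation. -/
noncomputable def eta (i : B) : Equiv.Perm (W × ZMod 2) := (etaFun_involutive cs i).toPerm

lemma eta_apply (i : B) (t : W) (e : ZMod 2) :
    eta cs i (t, e) = (s i * t * s i, e + if t = s i then 1 else 0) := rfl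

lemma conj_eq_iff (a u v : W) : a * u * a⁻¹ = v ↔ u = a⁻¹ * v * a :=
  ⟨fun h => by rw [← h]; group, fun h => by rw [h]; group⟩

lemma sum_range_two_mul {A : Type*} [AddCommMonoid A] (f : ℕ → A) (m : ℕ) :
    ∑ q ∈ Finset.range (2 * m), f q = ∑ r ∈ Finset.range m, (f (2 * r) + f (2 * r + 1)) := by
  induction m with
  | zero => simp
  | succ m ih =>
      rw [show 2 * (m + 1) = (2 * m) + 1 + 1 by ring, Finset.sum_range_succ,
        Finset.sum_range_succ, ih, Finset.sum_range_succ, add_assoc]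

lemma pow_conj_step (c t : W) (k : ℕ) :
    c ^ k * (c * t * c⁻¹) * (c ^ k)⁻¹ = c ^ (k + 1) * t * (c ^ (k + 1))⁻¹ := by
  rw [pow_succ, mul_inv_rev]
  simp [mul_assoc]

lemma eta_mul_pow_apply (i j : B) (k : ℕ) (t : W) (e : ZMod 2) :
    ((eta cs i * eta cs j) ^ k) (t, e) =
      ((s i * s j) ^ k * t * ((s i * s j) ^ k)⁻¹,
        e + ∑ r ∈ Finset.range k,
          ((if (s i * s j) ^ r * t * ((s i * s j) ^ r)⁻¹ = s j then (1 : ZMod 2) else 0)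
            + (if s j * ((s i * s j) ^ r * t * ((s i * s j) ^ r)⁻¹) * s j = s i then 1 else 0))) := by
  induction k generalizing t e with
  | zero => simp
  | succ k ih =>
      rw [pow_succ, Equiv.Perm.mul_apply]
      have h1 : (eta cs i * eta cs j) (t, e) =
          ((s i * s j) * t * (s i * s j)⁻¹,
            e + ((if t = s j then (1 : ZMod 2) else 0) + (if s j * t * s j = s i then 1 else 0))) := by
        rw [Equiv.Perm.mul_apply, eta_apply, eta_apply]
        refine Prod.ext ?_ ?_
        · show s i * (s j * t * s j) * s i = (s i * s j) * t * (s i * s j)⁻¹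
          rw [mul_inv_rev, cs.inv_simple, cs.inv_simple]
          simp [mul_assoc]
        · show e + _ + _ = e + _
          rw [add_assoc]
      rw [h1, ih]
      refine Prod.ext ?_ ?_
      · exact pow_conj_step _ t k
      · show _ + _ + _ = _ + _
        rw [Finset.sum_range_succ' (fun r =>
          (if (s i * s j) ^ r * t * ((s i * s j) ^ r)⁻¹ = s j then (1 : ZMod 2) else 0)
            + (if s j * ((s i * s j) ^ r * t * ((s i * s j) ^ r)⁻¹) * s j = s i then 1 else 0))]
        simp only [pow_zero, one_mul, inv_one, mul_one]
        rw [add_assoc, add_comm (∑ _ ∈ _, _)]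
        congr 2
        refine Finset.sum_congr rfl fun r _ => ?_
        rw [pow_conj_step]

lemma simple_conj_eq_iff' (j : B) (X v : W) : s j * X * s j = v ↔ X = s j * v * s j := by
  constructor
  · intro h
    rw [← h, show s j * (s j * X * s j) * s j = (s j * s j) * X * (s j * s j) by
      simp [mul_assoc], cs.simple_mul_simple_self, one_mul, mul_one]
  · intro h
    rw [h, show s j * (s j * v * s j) * s j = (s j * s j) * v * (s j * s j) by
      simp [mul_assoc], cs.simple_mul_simple_self, one_mul, mul_one]

lemma d_conj_pow (i j : B) (r : ℕ) :
    ((s i * s j) ^ r)⁻¹ * s j * (s i * s j) ^ r = (s j * s i) ^ (2 * r) * s j := by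
  have hc : (s i * s j)⁻¹ = s j * s i := by
    rw [mul_inv_rev, cs.inv_simple, cs.inv_simple]
  induction r with
  | zero => simp
  | succ r ih =>
      calc ((s i * s j) ^ (r + 1))⁻¹ * s j * (s i * s j) ^ (r + 1)
          = (s i * s j)⁻¹ * (((s i * s j) ^ r)⁻¹ * s j * (s i * s j) ^ r) * (s i * s j) := by
            rw [pow_succ, mul_inv_rev]; simp [mul_assoc]
        _ = (s j * s i) * ((s j * s i) ^ (2 * r) * s j) * (s i * s j) := by rw [ih, hc]
        _ = ((s j * s i) * (s j * s i) ^ (2 * r)) * (s j * (s i * s j)) := by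
            simp [mul_assoc]
        _ = ((s j * s i) ^ (2 * r) * (s j * s i)) * (s j * (s i * s j)) := by
            rw [pow_mul_comm']
        _ = (s j * s i) ^ (2 * r + 1 + 1) * s j := by simp [pow_succ, mul_assoc]
        _ = (s j * s i) ^ (2 * (r + 1)) * s j := by ring_nf

lemma d_conj_pow' (i j : B) (r : ℕ) :
    ((s i * s j) ^ r)⁻¹ * (s j * s i * s j) * (s i * s j) ^ r
      = (s j * s i) ^ (2 * r + 1) * s j := by
  have hc : (s i * s j)⁻¹ = s j * s i := by
    rw [mul_inv_rev, cs.inv_simple, cs.inv_simple]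
  have h1 : ∀ a u v : W, a⁻¹ * (u * v) * a = (a⁻¹ * u * a) * (a⁻¹ * v * a) := by
    intros; group
  have hcomm : (s i * s j)⁻¹ * (s i * s j) ^ r = (s i * s j) ^ r * (s i * s j)⁻¹ :=
    (((Commute.refl (s i * s j)).inv_left).pow_right r).eq
  have h2 : ((s i * s j) ^ r)⁻¹ * (s j * s i) * (s i * s j) ^ r = s j * s i := by
    rw [← hc, mul_assoc, hcomm, inv_mul_cancel_left]
  calc ((s i * s j) ^ r)⁻¹ * (s j * s i * s j) * (s i * s j) ^ r
      = (((s i * s j) ^ r)⁻¹ * (s j * s i) * (s i * s j) ^ r)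
          * (((s i * s j) ^ r)⁻¹ * s j * (s i * s j) ^ r) := h1 _ _ _
    _ = (s j * s i) * ((s j * s i) ^ (2 * r) * s j) := by rw [h2, d_conj_pow]
    _ = (s j * s i) ^ (2 * r + 1) * s j := by simp [pow_succ', mul_assoc]

lemma zmod2_add_self (a : ZMod 2) : a + a = 0 := by revert a; decide

lemma zmod2_eq_of_add_eq_zero {a b : ZMod 2} (h : a + b = 0) : a = b := by
  revert h; revert a b; decide

lemma eta_liftable : M.IsLiftable (fun i => eta cs i) := by
  intro i j
  apply Equiv.ext
  rintro ⟨t, e⟩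
  show ((eta cs i * eta cs j) ^ M.M i j) (t, e) = (t, e)
  rw [eta_mul_pow_apply, cs.simple_mul_simple_pow]
  have step : ∀ r : ℕ,
      ((if (s i * s j) ^ r * t * ((s i * s j) ^ r)⁻¹ = s j then (1 : ZMod 2) else 0)
        + (if s j * ((s i * s j) ^ r * t * ((s i * s j) ^ r)⁻¹) * s j = s i then 1 else 0))
      = ((if t = (s j * s i) ^ (2 * r) * s j then (1 : ZMod 2) else 0)
        + (if t = (s j * s i) ^ (2 * r + 1) * s j then 1 else 0)) := by
    intro r
    congr 1
    · apply if_congr _ rfl rfl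
      rw [conj_eq_iff, d_conj_pow]
    · apply if_congr _ rfl rfl
      rw [simple_conj_eq_iff' cs j _ (s i), conj_eq_iff, d_conj_pow']
  have hsum : ∑ r ∈ Finset.range (M.M i j),
      ((if (s i * s j) ^ r * t * ((s i * s j) ^ r)⁻¹ = s j then (1 : ZMod 2) else 0)
        + (if s j * ((s i * s j) ^ r * t * ((s i * s j) ^ r)⁻¹) * s j = s i then 1 else 0))
      = 0 := by
    rw [Finset.sum_congr rfl (fun r _ => step r),
      ← sum_range_two_mul (fun q => if t = (s j * s i) ^ q * s j then (1 : ZMod 2) else 0),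
      show 2 * M.M i j = M.M i j + M.M i j by ring,
      Finset.sum_range_add (fun q => if t = (s j * s i) ^ q * s j then (1 : ZMod 2) else 0)]
    have hper : ∀ q : ℕ, (s j * s i) ^ (M.M i j + q) = (s j * s i) ^ q := by
      intro q
      rw [pow_add, cs.simple_mul_simple_pow', one_mul]
    have e1 : ∑ q ∈ Finset.range (M.M i j),
        (if t = (s j * s i) ^ (M.M i j + q) * s j then (1 : ZMod 2) else 0)
        = ∑ q ∈ Finset.range (M.M i j),
          (if t = (s j * s i) ^ q * s j then (1 : ZMod 2) else 0) :=
      Finset.sum_congr rfl (fun q _ => by rw [hper q])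
    rw [e1, ← Finset.sum_add_distrib]
    exact Finset.sum_eq_zero fun q _ => zmod2_add_self _
  rw [hsum, add_zero]
  simp

/-- The reflection-cocycle representation `W →* Perm (W × ZMod 2)`. -/
noncomputable def mu : W →* Equiv.Perm (W × ZMod 2) :=
  cs.lift ⟨fun i => eta cs i, eta_liftable cs⟩

/-- The reflection cocycle. -/
noncomputable def nu (w t : W) : ZMod 2 := ((mu cs w) (t, 0)).2

lemma mu_simple (i : B) : mu cs (s i) = eta cs i := cs.lift_apply_simple _ i

lemma nu_one (t : W) : nu cs 1 t = 0 := by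
  show ((mu cs 1) (t, 0)).2 = 0
  rw [map_one]
  rfl

lemma mu_apply_wordProd (ω : List B) (t : W) (e : ZMod 2) :
    (mu cs (π ω)) (t, e) = ((π ω) * t * (π ω)⁻¹, e + nu cs (π ω) t) := by
  induction ω generalizing t e with
  | nil =>
      rw [cs.wordProd_nil, nu_one, map_one]
      simp
  | cons i ω ih =>
      rw [cs.wordProd_cons, map_mul, Equiv.Perm.mul_apply, ih t e, mu_simple, eta_apply]
      have h2 : nu cs (s i * π ω) t
          = nu cs (π ω) t + (if π ω * t * (π ω)⁻¹ = s i then 1 else 0) := by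
        show ((mu cs (s i * π ω)) (t, 0)).2 = _
        rw [map_mul, Equiv.Perm.mul_apply,
          show (mu cs (π ω)) (t, 0) = ((π ω) * t * (π ω)⁻¹, 0 + nu cs (π ω) t) from ih t 0,
          mu_simple, eta_apply]
        show 0 + nu cs (π ω) t + _ = _
        rw [zero_add]
      refine Prod.ext ?_ ?_
      · show s i * (π ω * t * (π ω)⁻¹) * s i = (s i * π ω) * t * ((s i * π ω))⁻¹
        rw [mul_inv_rev, cs.inv_simple]
        simp [mul_assoc]
      · show e + nu cs (π ω) t + _ = e + nu cs (s i * π ω) t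
        rw [h2, add_assoc]

lemma mu_apply (w t : W) (e : ZMod 2) :
    (mu cs w) (t, e) = (w * t * w⁻¹, e + nu cs w t) := by
  obtain ⟨ω, rfl⟩ := cs.wordProd_surjective w
  exact mu_apply_wordProd cs ω t e

lemma nu_mul (a b t : W) : nu cs (a * b) t = nu cs a (b * t * b⁻¹) + nu cs b t := by
  show ((mu cs (a * b)) (t, 0)).2 = _
  rw [map_mul, Equiv.Perm.mul_apply, mu_apply cs b t 0, mu_apply cs a _ _]
  show 0 + nu cs b t + nu cs a (b * t * b⁻¹) = _
  rw [zero_add, add_comm]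

lemma nu_simple (i : B) (t : W) : nu cs (s i) t = if t = s i then 1 else 0 := by
  show ((mu cs (s i)) (t, 0)).2 = _
  rw [mu_simple, eta_apply]
  show 0 + _ = _
  rw [zero_add]

lemma nu_inv (w t : W) : nu cs w⁻¹ (w * t * w⁻¹) = nu cs w t := by
  apply zmod2_eq_of_add_eq_zero
  rw [← nu_mul, inv_mul_cancel, nu_one]

lemma nu_refl_self {t : W} (ht : cs.IsReflection t) : nu cs t t = 1 := by
  obtain ⟨w, i, rfl⟩ := ht
  have e1 : nu cs ((w * s i) * w⁻¹) (w * s i * w⁻¹)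
      = nu cs (w * s i) (w⁻¹ * (w * s i * w⁻¹) * (w⁻¹)⁻¹) + nu cs w⁻¹ (w * s i * w⁻¹) :=
    nu_mul cs (w * s i) w⁻¹ (w * s i * w⁻¹)
  have h2 : w⁻¹ * (w * s i * w⁻¹) * (w⁻¹)⁻¹ = s i := by group
  have e3 : nu cs (w * s i) (s i) = nu cs w (s i * s i * (s i)⁻¹) + nu cs (s i) (s i) :=
    nu_mul cs w (s i) (s i)
  have h4 : s i * s i * (s i)⁻¹ = s i := by group
  have h5 : nu cs (s i) (s i) = 1 := by rw [nu_simple, if_pos rfl]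
  have h6 : nu cs w⁻¹ (w * s i * w⁻¹) = nu cs w (s i) := nu_inv cs w (s i)
  rw [h2] at e1
  rw [h4, h5] at e3
  rw [e3, h6] at e1
  have key : ∀ a : ZMod 2, a + 1 + a = 1 := by decide
  rw [e1]
  exact key _

lemma ris_cons (i : B) (ω : List B) :
    cs.rightInvSeq (i :: ω) = ((π ω)⁻¹ * s i * π ω) :: cs.rightInvSeq ω := rfl

lemma nu_wordProd (ω : List B) (t : W) :
    nu cs (π ω) t = (((cs.rightInvSeq ω).count t : ℕ) : ZMod 2) := by
  induction ω with
  | nil =>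
      rw [cs.wordProd_nil, nu_one]
      simp [rightInvSeq]
  | cons i ω ih =>
      rw [cs.wordProd_cons, nu_mul, nu_simple, ih, ris_cons, List.count_cons]
      have hiff : π ω * t * (π ω)⁻¹ = s i ↔ (π ω)⁻¹ * s i * π ω = t := by
        rw [conj_eq_iff, eq_comm]
      push_cast
      rw [if_congr hiff rfl rfl]
      by_cases h : (π ω)⁻¹ * s i * π ω = t
      · simp [h, add_comm]
      · simp [h]

lemma inversion_of_nu {w t : W} (ht : cs.IsReflection t) (h : nu cs w t = 1) :
    ℓ (w * t) < ℓ w := by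
  obtain ⟨ω, hred, hw⟩ := cs.exists_reduced_word' w
  subst hw
  rw [nu_wordProd] at h
  have hmem : t ∈ cs.rightInvSeq ω := by
    by_contra hmem
    rw [List.count_eq_zero_of_not_mem hmem] at h
    simp at h
  exact (cs.isRightInversion_of_mem_rightInvSeq hred hmem).2

lemma nu_of_inversion {w t : W} (ht : cs.IsReflection t) (h : ℓ (w * t) < ℓ w) :
    nu cs w t = 1 := by
  by_contra hnu
  have h0 : nu cs w t = 0 := by
    revert hnu; generalize nu cs w t = a; revert a; decide
  have h1 : nu cs (w * t) t = 1 := by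
    rw [nu_mul, show t * t * t⁻¹ = t by group, nu_refl_self cs ht, h0, zero_add]
  have h2 := inversion_of_nu cs ht h1
  rw [mul_assoc, ht.mul_self, mul_one] at h2
  omega

/-- Uniqueness of the element of maximal length. -/
lemma longest_unique {u v : W} (hu : ∀ w, ℓ w ≤ ℓ u) (hv : ∀ w, ℓ w ≤ ℓ v) : u = v := by
  have allnu : ∀ x : W, (∀ w, ℓ w ≤ ℓ x) → ∀ t : W, cs.IsReflection t → nu cs x t = 1 := by
    intro x hx t htr
    exact nu_of_inversion cs htr (lt_of_le_of_ne (hx _) (htr.length_mul_left_ne x))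
  by_contra hne
  have hx1 : v⁻¹ * u ≠ 1 := by
    intro h
    apply hne
    have hvu : v * (v⁻¹ * u) = v * 1 := by rw [h]
    rw [← mul_assoc, mul_inv_cancel, one_mul, mul_one] at hvu
    exact hvu
  obtain ⟨i, hdesc⟩ := cs.exists_rightDescent_of_ne_one hx1
  have h1 : nu cs (v⁻¹ * u) (s i) = 1 :=
    nu_of_inversion cs (cs.isReflection_simple i) hdesc
  have h2 : nu cs (v⁻¹ * u) (s i) = nu cs v⁻¹ (u * s i * u⁻¹) + nu cs u (s i) :=
    nu_mul cs v⁻¹ u (s i)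
  have h3 : nu cs v⁻¹ (u * s i * u⁻¹) = nu cs v (v⁻¹ * (u * s i * u⁻¹) * v) := by
    have h3' := nu_inv cs v (v⁻¹ * (u * s i * u⁻¹) * v)
    rw [show v * (v⁻¹ * (u * s i * u⁻¹) * v) * v⁻¹ = u * s i * u⁻¹ by group] at h3'
    exact h3'
  have h4 : nu cs v (v⁻¹ * (u * s i * u⁻¹) * v) = 1 := by
    apply allnu v hv
    have : v⁻¹ * (u * s i * u⁻¹) * v = (v⁻¹ * u) * s i * (v⁻¹ * u)⁻¹ := by group
    rw [this]
    exact (cs.isReflection_simple i).conj _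
  have h5 : nu cs u (s i) = 1 := allnu u hu _ (cs.isReflection_simple i)
  rw [h2, h3, h4, h5] at h1
  revert h1; decide

/-- The longest element is an involution. -/
lemma longest_mul_self {u : W} (hu : ∀ w, ℓ w ≤ ℓ u) : u * u = 1 := by
  have huinv : ∀ w, ℓ w ≤ ℓ u⁻¹ := by
    intro w
    rw [cs.length_inv]
    exact hu w
  have h := longest_unique cs huinv hu
  nth_rw 1 [← h]
  rw [inv_mul_cancel]


section ReflLength

lemma reflSet_nonempty (w : W) :
    {n | ∃ l : List W, (∀ t ∈ l, cs.IsReflection t) ∧ l.length = n ∧ l.prod = w}.Nonempty := by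
  obtain ⟨ω, hω⟩ := cs.wordProd_surjective w
  refine ⟨ω.length, ω.map cs.simple, ?_, by simp, hω⟩
  intro t ht
  obtain ⟨i, _, rfl⟩ := List.mem_map.mp ht
  exact cs.isReflection_simple i

lemma reflLength_exists (w : W) :
    ∃ l : List W, (∀ t ∈ l, cs.IsReflection t) ∧ l.length = reflLength cs w ∧ l.prod = w :=
  Nat.sInf_mem (reflSet_nonempty cs w)

lemma reflLength_le {w : W} {l : List W} (hl : ∀ t ∈ l, cs.IsReflection t)
    (hp : l.prod = w) : reflLength cs w ≤ l.length :=
  Nat.sInf_le ⟨l, hl, rfl, hp⟩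

lemma reflLength_one : reflLength cs 1 = 0 :=
  Nat.le_zero.mp (reflLength_le cs (l := []) (by simp) (by simp))

lemma reflLength_mul_le (a b : W) :
    reflLength cs (a * b) ≤ reflLength cs a + reflLength cs b := by
  obtain ⟨la, ha1, ha2, ha3⟩ := reflLength_exists cs a
  obtain ⟨lb, hb1, hb2, hb3⟩ := reflLength_exists cs b
  have h1 : ∀ t ∈ la ++ lb, cs.IsReflection t := by
    intro t ht
    rcases List.mem_append.mp ht with h | h
    · exact ha1 t h
    · exact hb1 t h
  have h2 : (la ++ lb).prod = a * b := by rw [List.prod_append, ha3, hb3]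
  have h3 := reflLength_le cs h1 h2
  rwa [List.length_append, ha2, hb2] at h3

lemma reflLength_listProd_le (L : List W) :
    reflLength cs L.prod ≤ (L.map (reflLength cs)).sum := by
  induction L with
  | nil => simp [reflLength_one]
  | cons a L ih =>
      rw [List.prod_cons, List.map_cons, List.sum_cons]
      exact le_trans (reflLength_mul_le cs a L.prod) (by omega)

end ReflLength


end Statement12Aux


namespace Statement12Aux

section Product

lemma ofFn_prod_single {n : ℕ} {G : Type*} [Monoid G] (v : Fin n → G) (j : Fin n)
    (hv : ∀ i, i ≠ j → v i = 1) : (List.ofFn v).prod = v j := by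
  induction n with
  | zero => exact absurd j.isLt (by omega)
  | succ n ih =>
      rw [List.ofFn_succ, List.prod_cons]
      by_cases h0 : j = 0
      · subst h0
        have htail : (List.ofFn fun i : Fin n => v i.succ).prod = 1 := by
          apply List.prod_eq_one
          intro a ha
          obtain ⟨i, rfl⟩ := List.mem_ofFn.mp ha
          exact hv i.succ (Fin.succ_ne_zero i)
        rw [htail, mul_one]
      · obtain ⟨j', rfl⟩ := Fin.exists_succ_eq.mpr h0
        rw [hv 0 (Ne.symm (Fin.succ_ne_zero j')), one_mul]
        exact ih (fun i => v i.succ) j' (fun i hi => hv i.succ (by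
          intro hc
          exact hi (Fin.succ_injective n hc)))

variable {B' W' : Type*} [Group W'] {M' : CoxeterMatrix B'} (cs' : CoxeterSystem M' W')
  (l : ℕ) [NeZero l]

lemma listProd_apply (L : List (Fin l → W')) (j : Fin l) :
    L.prod j = (L.map (fun r => r j)).prod := by
  induction L with
  | nil => rfl
  | cons a L ih => rw [List.prod_cons, List.map_cons, List.prod_cons, Pi.mul_apply, ih]

lemma mulSingle_listProd (j : Fin l) (L : List W') :
    (L.map (Pi.mulSingle (M := fun _ : Fin l => W') j)).prod = Pi.mulSingle j L.prod := by
  have := (MonoidHom.mulSingle (fun _ : Fin l => W') j).map_list_prod L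
  simpa using this.symm

lemma ofFn_mulSingle_prod (w : Fin l → W') :
    (List.ofFn (fun i => Pi.mulSingle i (w i))).prod = w := by
  funext j
  rw [listProd_apply, List.map_ofFn]
  simp only [Function.comp_def]
  have h2 := ofFn_prod_single (fun i : Fin l => Pi.mulSingle i (w i) j) j
    (fun i hi => Pi.mulSingle_eq_of_ne (Ne.symm hi) _)
  simpa using h2

lemma pReflSet_nonempty (w : Fin l → W') :
    {n | ∃ L : List (Fin l → W'),
      (∀ r ∈ L, PIsReflection cs' l r) ∧ L.length = n ∧ L.prod = w}.Nonempty := by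
  classical
  have h := fun i : Fin l => reflLength_exists cs' (w i)
  choose Ls h1 h2 h3 using h
  refine ⟨_, (List.ofFn (fun i => (Ls i).map (Pi.mulSingle i))).flatten, ?_, rfl, ?_⟩
  · intro r hr
    obtain ⟨Li, hLi, hrLi⟩ := List.mem_flatten.mp hr
    obtain ⟨i, rfl⟩ := List.mem_ofFn.mp hLi
    obtain ⟨t, htmem, rfl⟩ := List.mem_map.mp hrLi
    exact ⟨i, t, h1 i t htmem, rfl⟩
  · rw [List.prod_flatten, List.map_ofFn]
    have hfun : (List.prod ∘ fun i => (Ls i).map (Pi.mulSingle i))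
        = fun i => Pi.mulSingle i (w i) := by
      funext i
      simp only [Function.comp_apply]
      rw [mulSingle_listProd, h3 i]
    rw [hfun, ofFn_mulSingle_prod]

lemma pReflLength_exists (w : Fin l → W') :
    ∃ L : List (Fin l → W'), (∀ r ∈ L, PIsReflection cs' l r) ∧
      L.length = pReflLength cs' l w ∧ L.prod = w :=
  Nat.sInf_mem (pReflSet_nonempty cs' l w)

lemma pReflLength_le {w : Fin l → W'} {L : List (Fin l → W')}
    (hL : ∀ r ∈ L, PIsReflection cs' l r) (hp : L.prod = w) :
    pReflLength cs' l w ≤ L.length :=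
  Nat.sInf_le ⟨L, hL, rfl, hp⟩

lemma mulSingle_mul_eq_update (j : Fin l) (t : W') (p : Fin l → W') :
    Pi.mulSingle j t * p = Function.update p j (t * p j) := by
  classical
  funext i
  rw [Pi.mul_apply, Pi.mulSingle_apply, Function.update_apply]
  by_cases h : i = j
  · subst h; simp
  · simp [h]

lemma sum_reflLength_le (L : List (Fin l → W')) (hL : ∀ r ∈ L, PIsReflection cs' l r) :
    ∑ i, reflLength cs' (L.prod i) ≤ L.length := by
  classical
  induction L with
  | nil => simp [reflLength_one]
  | cons r L ih =>
      obtain ⟨j, t, ht, rfl⟩ := hL r List.mem_cons_self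
      have hLtail : ∀ r ∈ L, PIsReflection cs' l r :=
        fun r hr => hL r (List.mem_cons_of_mem _ hr)
      rw [List.prod_cons, mulSingle_mul_eq_update]
      have hcomp : ∀ i, reflLength cs' (Function.update L.prod j (t * L.prod j) i)
          = Function.update (fun i => reflLength cs' (L.prod i)) j
              (reflLength cs' (t * L.prod j)) i := by
        intro i
        by_cases h : i = j
        · subst h; simp
        · simp [Function.update_apply, h]
      rw [Finset.sum_congr rfl (fun i _ => hcomp i),
        Finset.sum_update_of_mem (Finset.mem_univ j)]
      have hb : reflLength cs' (t * L.prod j) ≤ 1 + reflLength cs' (L.prod j) := by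
        refine le_trans (reflLength_mul_le cs' t (L.prod j)) ?_
        have h1 : reflLength cs' t ≤ 1 :=
          reflLength_le cs' (l := [t]) (by simpa using ht) (by simp)
        omega
      have hsplit : ∑ i, reflLength cs' (L.prod i)
          = ∑ i ∈ Finset.univ \ {j}, reflLength cs' (L.prod i) + reflLength cs' (L.prod j) :=
        Finset.sum_eq_sum_sdiff_singleton_add (Finset.mem_univ j) _
      have hih := ih hLtail
      simp only [List.length_cons]
      omega

end Product

end Statement12Aux


namespace Statement12Aux

section Telescope

lemma fin_sub_one_val (l : ℕ) [NeZero l] (i : Fin l) :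
    ((i - 1 : Fin l)).val = if i.val = 0 then l - 1 else i.val - 1 := by
  have hl : 0 < l := Nat.pos_of_ne_zero (NeZero.ne l)
  have hi : i.val < l := i.isLt
  rw [Fin.sub_def]
  show (l - (1 : Fin l).val + i.val) % l = _
  rw [Fin.val_one']
  by_cases h1 : l = 1
  · subst h1
    have h0 : i.val = 0 := by omega
    rw [h0, if_pos rfl]
  · rw [Nat.mod_eq_of_lt (show 1 < l by omega)]
    by_cases h0 : i.val = 0
    · rw [h0, if_pos rfl, Nat.add_zero, Nat.mod_eq_of_lt (show l - 1 < l by omega)]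
    · rw [if_neg h0, show l - 1 + i.val = l + (i.val - 1) by omega,
        Nat.add_mod_left, Nat.mod_eq_of_lt (show i.val - 1 < l by omega)]

variable {W' : Type*} [Group W']

lemma telescope (l : ℕ) [NeZero l] (w₀' : W') (f : W' → W') (x : Fin l → W')
    (hsq : w₀' * w₀' = 1) :
    ∀ k : ℕ, ∀ hk : k < l,
    (((List.ofFn (fun i => x i * w₀' * (cyclicShift l f x i)⁻¹)).take (k + 1)).reverse).prod
      = x ⟨k, hk⟩ * w₀' ^ (k + 1) * (f (x (0 - 1)))⁻¹ := by
  set w : Fin l → W' := fun i => x i * w₀' * (cyclicShift l f x i)⁻¹ with hw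
  intro k
  induction k with
  | zero =>
      intro hk
      have htake : (List.ofFn w).take 1 = [w ⟨0, hk⟩] := by
        rw [show (1 : ℕ) = 0 + 1 from rfl, List.take_succ, List.getElem?_ofFn,
          dif_pos hk]
        rfl
      rw [htake, List.reverse_singleton, List.prod_singleton, pow_one]
      have h00 : (⟨0, hk⟩ : Fin l) = 0 := Fin.ext (by simp)
      have hval : w ⟨0, hk⟩ = x 0 * w₀' * (f (x (0 - 1)))⁻¹ := by
        rw [hw]
        show x ⟨0, hk⟩ * w₀' * (cyclicShift l f x ⟨0, hk⟩)⁻¹ = _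
        rw [h00, cyclicShift, if_pos rfl]
      rw [hval, h00]
  | succ k ih =>
      intro hk
      have hki : k < l := by omega
      have htake : (List.ofFn w).take (k + 1 + 1)
          = (List.ofFn w).take (k + 1) ++ [w ⟨k + 1, hk⟩] := by
        rw [List.take_succ, List.getElem?_ofFn, dif_pos hk]
        rfl
      rw [htake, List.reverse_append, List.reverse_singleton]
      have hsingle : ([w ⟨k + 1, hk⟩] ++ ((List.ofFn w).take (k + 1)).reverse).prod
          = w ⟨k + 1, hk⟩ * (((List.ofFn w).take (k + 1)).reverse).prod := by
        rw [List.prod_append, List.prod_singleton]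
      rw [hsingle, ih hki]
      have hne : (⟨k + 1, hk⟩ : Fin l) ≠ 0 := by
        intro hc
        have := congrArg Fin.val hc
        simp at this
      have hwk : w ⟨k + 1, hk⟩ = x ⟨k + 1, hk⟩ * w₀' * (x ⟨k, hki⟩)⁻¹ := by
        rw [hw]
        show x ⟨k + 1, hk⟩ * w₀' * (cyclicShift l f x ⟨k + 1, hk⟩)⁻¹ = _
        rw [cyclicShift, if_neg hne]
        refine congrArg (fun z => x ⟨k + 1, hk⟩ * w₀' * (x z)⁻¹) (Fin.ext ?_)
        rw [fin_sub_one_val]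
        rw [if_neg (show ¬ ((⟨k + 1, hk⟩ : Fin l).val = 0) from by
          show ¬ (k + 1 = 0); omega)]
        rfl
      rw [hwk]
      have hrearr : ∀ a b c d e : W', (a * b * c⁻¹) * (c * d * e) = a * (b * d) * e := by
        intros; group
      rw [hrearr, ← pow_succ']

end Telescope

end Statement12Aux

/-- Let `(W', S')` be a finite Coxeter system with longest element `w₀'`, `τ` a
length-preserving automorphism of `W'`, `l` a positive odd integer, and `W = (W')^l`
with the automorphism `σ(w₁, …, w_l) = (τ(w_l), w₁, …, w_{l-1})`.  Let `O` be the
`σ`-conjugacy class of `w₀ = (w₀', …, w₀')` in `W` and `O'` the `τ`-conjugacy class of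
`w₀'` in `W'`.  Then `ℓ_R(O) = ℓ_R(O')`. -/
theorem statement12 {B' W' : Type*} [Group W'] [Finite W'] {M' : CoxeterMatrix B'}
    (cs' : CoxeterSystem M' W')
    (w₀' : W') (hw₀' : ∀ w, cs'.length w ≤ cs'.length w₀')
    (τ : W' ≃* W') (hτ : ∀ w, cs'.length (τ w) = cs'.length w)
    (l : ℕ) [NeZero l] (hl : Odd l) :
    pReflLengthSet cs' l
        {w | ∃ x : Fin l → W', w = x * (fun _ => w₀') * (cyclicShift l (⇑τ) x)⁻¹} =
      reflLengthSet cs' {w | ∃ g : W', w = g * w₀' * (τ g)⁻¹} := by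
  classical
  have hsq : w₀' * w₀' = 1 := Statement12Aux.longest_mul_self cs' hw₀'
  obtain ⟨q, hq⟩ := hl
  have hl1 : 0 < l := Nat.pos_of_ne_zero (NeZero.ne l)
  have hw2 : w₀' ^ 2 = 1 := by rw [pow_two, hsq]
  have hweven : ∀ m : ℕ, w₀' ^ (2 * m) = 1 := by
    intro m; rw [pow_mul, hw2, one_pow]
  have hwl : w₀' ^ l = w₀' := by
    rw [hq, pow_succ, hweven, one_mul]
  have hwl1 : w₀' ^ (l - 1) = 1 := by
    rw [show l - 1 = 2 * q by omega, hweven]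
  show sInf (pReflLength cs' l '' {w | ∃ x, w = x * (fun _ => w₀') * (cyclicShift l (⇑τ) x)⁻¹})
    = sInf (reflLength cs' '' {w | ∃ g : W', w = g * w₀' * (τ g)⁻¹})
  apply le_antisymm
  · -- LHS ≤ RHS
    have hne' : (reflLength cs' '' {w | ∃ g : W', w = g * w₀' * (τ g)⁻¹}).Nonempty :=
      ⟨reflLength cs' (1 * w₀' * (τ 1)⁻¹), ⟨1 * w₀' * (τ 1)⁻¹, ⟨1, rfl⟩, rfl⟩⟩
    obtain ⟨u, hu_mem, hu_eq⟩ := Nat.sInf_mem hne'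
    obtain ⟨g, hg⟩ := hu_mem
    set x : Fin l → W' := fun i => g * w₀' ^ (i.val) with hx
    set pu : Fin l → W' := Pi.mulSingle 0 u with hpu
    have hmem : pu ∈ {w | ∃ x, w = x * (fun _ => w₀') * (cyclicShift l (⇑τ) x)⁻¹} := by
      refine ⟨x, ?_⟩
      funext i
      simp only [Pi.mul_apply, Pi.inv_apply]
      by_cases hi : i = 0
      · subst hi
        rw [cyclicShift, if_pos rfl]
        have hx0 : x (0 : Fin l) = g := by
          rw [hx]
          show g * w₀' ^ ((0 : Fin l)).val = g
          rw [Fin.val_zero, pow_zero, mul_one]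
        have hxlast : x ((0 : Fin l) - 1) = g := by
          rw [hx]
          show g * w₀' ^ (((0 : Fin l) - 1)).val = g
          rw [Statement12Aux.fin_sub_one_val, if_pos (Fin.val_zero l), hwl1, mul_one]
        rw [hx0, hxlast, hpu, Pi.mulSingle_eq_same, hg]
      · rw [cyclicShift, if_neg hi, hpu, Pi.mulSingle_eq_of_ne hi]
        have hvne : i.val ≠ 0 := by
          intro h
          exact hi (Fin.ext (by rw [h, Fin.val_zero]))
        have hprev : x (i - 1) = g * w₀' ^ (i.val - 1) := by
          rw [hx]
          show g * w₀' ^ ((i - 1 : Fin l)).val = _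
          rw [Statement12Aux.fin_sub_one_val, if_neg hvne]
        have key : w₀' ^ i.val * w₀' = w₀' ^ (i.val - 1) := by
          rw [← pow_succ, show i.val + 1 = (i.val - 1) + 2 by omega, pow_add, hw2, mul_one]
        rw [hprev]
        show (1 : W') = g * w₀' ^ i.val * w₀' * (g * w₀' ^ (i.val - 1))⁻¹
        have e : g * w₀' ^ i.val * w₀' * (g * w₀' ^ (i.val - 1))⁻¹
            = g * (w₀' ^ i.val * w₀') * (w₀' ^ (i.val - 1))⁻¹ * g⁻¹ := by group
        rw [e, key, mul_inv_cancel_right, mul_inv_cancel]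
    obtain ⟨Lu, hLu1, hLu2, hLu3⟩ := Statement12Aux.reflLength_exists cs' u
    have hlist : ∀ r ∈ Lu.map (Pi.mulSingle (0 : Fin l)), PIsReflection cs' l r := by
      intro r hr
      obtain ⟨t, htm, rfl⟩ := List.mem_map.mp hr
      exact ⟨0, t, hLu1 t htm, rfl⟩
    have hprod : (Lu.map (Pi.mulSingle (0 : Fin l))).prod = pu := by
      rw [Statement12Aux.mulSingle_listProd, hLu3]
    have h1 : pReflLength cs' l pu ≤ reflLength cs' u := by
      have h2 := Statement12Aux.pReflLength_le cs' l hlist hprod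
      rwa [List.length_map, hLu2] at h2
    calc sInf (pReflLength cs' l '' {w | ∃ x, w = x * (fun _ => w₀') * (cyclicShift l (⇑τ) x)⁻¹})
        ≤ pReflLength cs' l pu := Nat.sInf_le ⟨pu, hmem, rfl⟩
      _ ≤ reflLength cs' u := h1
      _ = _ := hu_eq
  · -- RHS ≤ LHS
    have hneO : (pReflLength cs' l ''
        {w | ∃ x, w = x * (fun _ => w₀') * (cyclicShift l (⇑τ) x)⁻¹}).Nonempty := by
      refine ⟨pReflLength cs' l (fun _ => w₀'), ⟨(fun _ => w₀'), ⟨1, ?_⟩, rfl⟩⟩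
      funext i
      show w₀' = (1 : Fin l → W') i * w₀' * (cyclicShift l (⇑τ) 1 i)⁻¹
      have hshift : cyclicShift l (⇑τ) 1 i = 1 := by
        rw [cyclicShift]
        by_cases hi : i = 0
        · rw [if_pos hi]
          show τ 1 = 1
          exact map_one τ
        · rw [if_neg hi]
          rfl
      rw [hshift, Pi.one_apply, one_mul, inv_one, mul_one]
    obtain ⟨w, hw_mem, hw_eq⟩ := Nat.sInf_mem hneO
    obtain ⟨x, hwx⟩ := hw_mem
    have hwi : w = fun i => x i * w₀' * (cyclicShift l (⇑τ) x i)⁻¹ := by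
      rw [hwx]
      funext i
      rfl
    have htel := Statement12Aux.telescope l w₀' (⇑τ) x hsq (l - 1) (by omega)
    have hfull : (List.ofFn (fun i => x i * w₀' * (cyclicShift l (⇑τ) x i)⁻¹)).take (l - 1 + 1)
        = List.ofFn (fun i => x i * w₀' * (cyclicShift l (⇑τ) x i)⁻¹) :=
      List.take_of_length_le (by rw [List.length_ofFn]; omega)
    rw [hfull, show l - 1 + 1 = l by omega, hwl] at htel
    have hfin0 : (⟨l - 1, by omega⟩ : Fin l) = (0 : Fin l) - 1 :=
      Fin.ext (by rw [Statement12Aux.fin_sub_one_val, if_pos (Fin.val_zero l)])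
    rw [hfin0] at htel
    set g := x ((0 : Fin l) - 1) with hgdef
    obtain ⟨L, hL1, hL2, hL3⟩ := Statement12Aux.pReflLength_exists cs' l w
    have hchain1 : reflLength cs' (g * w₀' * (τ g)⁻¹) ≤ ∑ i, reflLength cs' (w i) := by
      have h1 := Statement12Aux.reflLength_listProd_le cs'
        ((List.ofFn (fun i => x i * w₀' * (cyclicShift l (⇑τ) x i)⁻¹)).reverse)
      rw [htel] at h1
      refine le_trans h1 (le_of_eq ?_)
      rw [List.map_reverse, List.sum_reverse, List.map_ofFn, List.sum_ofFn]
      refine Finset.sum_congr rfl fun i _ => ?_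
      simp only [Function.comp_apply]
      rw [hwi]
    have hchain2 : ∑ i, reflLength cs' (w i) ≤ L.length := by
      have h2 := Statement12Aux.sum_reflLength_le cs' l L hL1
      rwa [hL3] at h2
    calc sInf (reflLength cs' '' {w | ∃ g : W', w = g * w₀' * (τ g)⁻¹})
        ≤ reflLength cs' (g * w₀' * (τ g)⁻¹) :=
          Nat.sInf_le ⟨g * w₀' * (τ g)⁻¹, ⟨g, rfl⟩, rfl⟩
      _ ≤ ∑ i, reflLength cs' (w i) := hchain1
      _ ≤ L.length := hchain2
      _ = pReflLength cs' l w := hL2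
      _ = _ := hw_eq
end

section
/- Let n ≥ 1 and let W = S_{n+1} be the symmetric group on {1, …, n+1} with its Coxeter system given by the adjacent transpositions s_i = (i, i+1), Coxeter length ℓ (the number of inversions), Bruhat order ≤, and longest element w₀ the order-reversing permutation i ↦ n+2−i. Then max{ℓ(x) : x ∈ S_{n+1}, x ≤ x w₀} = ⌊n²/4⌋. -/
set_option linter.unusedSectionVars false


open Equiv Finset

namespace Stmt13

variable {N : ℕ}

def invSet (w : Equiv.Perm (Fin N)) : Finset (Fin N × Fin N) :=
  Finset.univ.filter fun p => p.1 < p.2 ∧ w p.2 < w p.1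

def invCount (w : Equiv.Perm (Fin N)) : ℕ := (invSet w).card

lemma mem_invSet {w : Equiv.Perm (Fin N)} {p : Fin N × Fin N} :
    p ∈ invSet w ↔ p.1 < p.2 ∧ w p.2 < w p.1 := by simp [invSet]

/-- sorting map used in the bijection -/
def swsort (s : Equiv.Perm (Fin N)) (p : Fin N × Fin N) : Fin N × Fin N :=
  if s p.1 < s p.2 then (s p.1, s p.2) else p

lemma swsort_props {w : Equiv.Perm (Fin N)} {a b : Fin N} (hab : a < b)
    (hv : w a < w b) (hmid : ∀ c, a < c → c < b → w c < w a ∨ w b < w c)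
    (p : Fin N × Fin N) (hp : p.1 < p.2) (hpne : p ≠ (a, b)) :
    (swsort (Equiv.swap a b) p).1 < (swsort (Equiv.swap a b) p).2 ∧
    swsort (Equiv.swap a b) p ≠ (a, b) ∧
    swsort (Equiv.swap a b) (swsort (Equiv.swap a b) p) = p ∧
    (w (Equiv.swap a b p.2) < w (Equiv.swap a b p.1) ↔
      w (swsort (Equiv.swap a b) p).2 < w (swsort (Equiv.swap a b) p).1) := by
  obtain ⟨i, j⟩ := p
  simp only at hp
  set s := Equiv.swap a b with hs
  have hne_ab : a ≠ b := ne_of_lt hab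
  have esa : s a = b := Equiv.swap_apply_left a b
  have esb : s b = a := Equiv.swap_apply_right a b
  by_cases hia : i = a
  · by_cases hjb : j = b
    · exact absurd (by rw [hia, hjb]) hpne
    · have hja : j ≠ a := by rw [hia] at hp; exact ne_of_gt hp
      have esj : s j = j := Equiv.swap_apply_of_ne_of_ne hja hjb
      have esi : s i = b := by rw [hia, esa]
      by_cases hbj : b < j
      · have h1 : swsort s (i, j) = (b, j) := by
          simp only [swsort, esi, esj, if_pos hbj]
        refine ⟨by simpa [h1] using hbj, ?_, ?_, ?_⟩
        · rintro h; rw [h1, Prod.mk.injEq] at h; exact hne_ab h.1.symm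
        · have h2 : swsort s (b, j) = (a, j) := by
            simp only [swsort, esb, esj, if_pos (lt_trans hab hbj)]
          rw [h1, h2, hia]
        · simp only [h1, esi, esj]
      · have hjltb : j < b := lt_of_le_of_ne (not_lt.mp hbj) hjb
        have hajm : a < j := hia ▸ hp
        have h1 : swsort s (i, j) = (i, j) := by
          simp only [swsort, esi, esj, if_neg hbj]
        refine ⟨by simpa [h1] using hp, by rw [h1]; exact hpne, by rw [h1, h1], ?_⟩
        simp only [h1, esi, esj]
        rw [hia]
        rcases hmid j hajm hjltb with hc | hc
        · exact iff_of_true (lt_trans hc hv) hc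
        · exact iff_of_false (lt_asymm hc) (fun h => lt_asymm hc (lt_trans h hv))
  · by_cases hib : i = b
    · -- i = b, so j > b
      have hbj : b < j := hib ▸ hp
      have hja : j ≠ a := ne_of_gt (lt_trans hab hbj)
      have hjb : j ≠ b := ne_of_gt hbj
      have esj : s j = j := Equiv.swap_apply_of_ne_of_ne hja hjb
      have esi : s i = a := by rw [hib, esb]
      have haj : a < j := lt_trans hab hbj
      have h1 : swsort s (i, j) = (a, j) := by
        simp only [swsort, esi, esj, if_pos haj]
      refine ⟨by simpa [h1] using haj, ?_, ?_, by simp only [h1, esi, esj]⟩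
      · rintro h; rw [h1, Prod.mk.injEq] at h; exact hjb h.2
      · have h2 : swsort s (a, j) = (b, j) := by
          simp only [swsort, esa, esj, if_pos hbj]
        rw [h1, h2, hib]
    · have esi : s i = i := Equiv.swap_apply_of_ne_of_ne hia hib
      by_cases hja : j = a
      · -- j = a, i < a
        have hilta : i < a := hja ▸ hp
        have esj : s j = b := by rw [hja, esa]
        have hib2 : i < b := lt_trans hilta hab
        have h1 : swsort s (i, j) = (i, b) := by
          simp only [swsort, esi, esj, if_pos hib2]
        refine ⟨by simpa [h1] using hib2, ?_, ?_, by simp only [h1, esi, esj]⟩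
        · rintro h; rw [h1, Prod.mk.injEq] at h; exact hia h.1
        · have h2 : swsort s (i, b) = (i, a) := by
            simp only [swsort, esi, esb, if_pos hilta]
          rw [h1, h2, hja]
      · by_cases hjb : j = b
        · have esj : s j = a := by rw [hjb, esb]
          by_cases hialt : i < a
          · have h1 : swsort s (i, j) = (i, a) := by
              simp only [swsort, esi, esj, if_pos hialt]
            refine ⟨by simpa [h1] using hialt, ?_, ?_, by simp only [h1, esi, esj]⟩
            · rintro h; rw [h1, Prod.mk.injEq] at h; exact hia h.1
            · have h2 : swsort s (i, a) = (i, b) := by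
                simp only [swsort, esi, esa, if_pos (lt_trans hialt hab)]
              rw [h1, h2, hjb]
          · have hmida : a < i := lt_of_le_of_ne (not_lt.mp hialt) (Ne.symm hia)
            have hib3 : i < b := hjb ▸ hp
            have h1 : swsort s (i, j) = (i, j) := by
              simp only [swsort, esi, esj, if_neg hialt]
            refine ⟨by simpa [h1] using hp, by rw [h1]; exact hpne, by rw [h1, h1], ?_⟩
            simp only [h1, esi, esj]
            rw [hjb]
            rcases hmid i hmida hib3 with hc | hc
            · exact iff_of_false (lt_asymm hc) (fun h => lt_asymm hc (lt_trans hv h))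
            · exact iff_of_true (lt_trans hv hc) hc
        · have esj : s j = j := Equiv.swap_apply_of_ne_of_ne hja hjb
          have h1 : swsort s (i, j) = (i, j) := by
            simp only [swsort, esi, esj, if_pos hp]
          exact ⟨by simpa [h1] using hp, by rw [h1]; exact hpne, by rw [h1, h1],
            by simp only [h1, esi, esj]⟩

lemma invCount_mul_swap {w : Equiv.Perm (Fin N)} {a b : Fin N} (hab : a < b)
    (hv : w a < w b) (hmid : ∀ c, a < c → c < b → w c < w a ∨ w b < w c) :
    invCount (w * Equiv.swap a b) = invCount w + 1 := by
  set s := Equiv.swap a b with hs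
  have hvap : ∀ p : Fin N, (w * s) p = w (s p) := fun p => rfl
  have habv : (a, b) ∈ invSet (w * s) := by
    rw [mem_invSet]
    refine ⟨hab, ?_⟩
    simp only [hvap, hs, Equiv.swap_apply_left, Equiv.swap_apply_right]
    simpa only [Equiv.Perm.mul_apply, Equiv.swap_apply_left, Equiv.swap_apply_right] using hv
  have habw : (a, b) ∉ invSet w := by
    rw [mem_invSet]
    rintro ⟨-, h⟩
    exact absurd hv (lt_asymm h)
  have hcard : ((invSet (w * s)).erase (a, b)).card = ((invSet w).erase (a, b)).card := by
    apply Finset.card_bij' (fun p _ => swsort s p) (fun p _ => swsort s p)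
    · intro p hp
      rw [Finset.mem_erase] at hp ⊢
      obtain ⟨hpne, hpmem⟩ := hp
      rw [mem_invSet] at hpmem
      obtain ⟨h1, h2, h3, h4⟩ := swsort_props hab hv hmid p hpmem.1 hpne
      refine ⟨h2, mem_invSet.2 ⟨h1, ?_⟩⟩
      exact h4.mp hpmem.2
    · intro p hp
      rw [Finset.mem_erase] at hp ⊢
      obtain ⟨hpne, hpmem⟩ := hp
      rw [mem_invSet] at hpmem
      obtain ⟨h1, h2, h3, h4⟩ := swsort_props hab hv hmid p hpmem.1 hpne
      refine ⟨h2, mem_invSet.2 ⟨h1, ?_⟩⟩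
      obtain ⟨g1, g2, g3, g4⟩ := swsort_props hab hv hmid _ h1 h2
      rw [h3] at g4
      exact g4.mpr hpmem.2
    · intro p hp
      rw [Finset.mem_erase, mem_invSet] at hp
      exact (swsort_props hab hv hmid p hp.2.1 hp.1).2.2.1
    · intro p hp
      rw [Finset.mem_erase, mem_invSet] at hp
      exact (swsort_props hab hv hmid p hp.2.1 hp.1).2.2.1
  have h1 : invCount (w * s) = ((invSet (w * s)).erase (a, b)).card + 1 := by
    rw [invCount, ← Finset.card_erase_add_one habv]
  have h2 : ((invSet w).erase (a, b)).card = invCount w := by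
    rw [Finset.erase_eq_of_notMem habw]; rfl
  rw [h1, hcard, h2]

lemma invCount_mul_swap_consec {w : Equiv.Perm (Fin N)} {a b : Fin N} (hab : a < b)
    (hcons : (w b : ℕ) = (w a : ℕ) + 1) :
    invCount (w * Equiv.swap a b) = invCount w + 1 := by
  apply invCount_mul_swap hab (Fin.lt_def.2 (by omega))
  intro c hac hcb
  have h1 : w c ≠ w a := fun h => (ne_of_gt hac) (w.injective h)
  have h2 : w c ≠ w b := fun h => (ne_of_lt hcb) (w.injective h)
  rw [Fin.ne_iff_vne] at h1 h2
  rw [Fin.lt_def, Fin.lt_def]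
  omega

lemma invCount_mul_swap_adj_lt {n : ℕ} {w : Equiv.Perm (Fin (n + 1))} {i : Fin n}
    (h : w i.castSucc < w i.succ) :
    invCount (w * Equiv.swap i.castSucc i.succ) = invCount w + 1 := by
  apply invCount_mul_swap (Fin.castSucc_lt_succ (i := i)) h
  intro c hc1 hc2
  rw [Fin.lt_def] at hc1 hc2
  simp only [Fin.coe_castSucc, Fin.val_succ] at hc1 hc2
  omega

lemma invCount_mul_swap_adj_gt {n : ℕ} {w : Equiv.Perm (Fin (n + 1))} {i : Fin n}
    (h : w i.succ < w i.castSucc) :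
    invCount (w * Equiv.swap i.castSucc i.succ) + 1 = invCount w := by
  set u := w * Equiv.swap i.castSucc i.succ with hu
  have h1 : u i.castSucc = w i.succ := by
    simp [hu, Equiv.Perm.mul_apply, Equiv.swap_apply_left]
  have h2 : u i.succ = w i.castSucc := by
    simp [hu, Equiv.Perm.mul_apply, Equiv.swap_apply_right]
  have hlt : u i.castSucc < u i.succ := by rw [h1, h2]; exact h
  have := invCount_mul_swap_adj_lt hlt
  rw [hu, Equiv.mul_swap_mul_self] at this
  rw [hu]
  exact this.symm

lemma invCount_mul_simple_cases {n : ℕ} (w : Equiv.Perm (Fin (n + 1))) (i : Fin n) :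
    invCount (w * Equiv.swap i.castSucc i.succ) = invCount w + 1 ∨
    invCount (w * Equiv.swap i.castSucc i.succ) + 1 = invCount w := by
  rcases lt_or_gt_of_ne (fun h => (ne_of_lt (Fin.castSucc_lt_succ (i := i))) (w.injective h) :
      w i.castSucc ≠ w i.succ) with h | h
  · exact Or.inl (invCount_mul_swap_adj_lt h)
  · exact Or.inr (invCount_mul_swap_adj_gt h)

lemma eq_one_of_strictMono (w : Equiv.Perm (Fin N)) (h : StrictMono (w : Fin N → Fin N)) :
    w = 1 := by
  have key : ∀ (u : Equiv.Perm (Fin N)), StrictMono (u : Fin N → Fin N) → ∀ i, i ≤ u i := by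
    intro u hu i
    have himg : Finset.image u (Finset.Iic i) ⊆ Finset.Iic (u i) := by
      intro x hx
      rw [Finset.mem_image] at hx
      obtain ⟨y, hy, rfl⟩ := hx
      rw [Finset.mem_Iic] at hy ⊢
      exact hu.monotone hy
    have hc := Finset.card_le_card himg
    rw [Finset.card_image_of_injective _ u.injective, Fin.card_Iic, Fin.card_Iic] at hc
    exact Fin.le_def.2 (by omega)
  have hsymm : StrictMono (w.symm : Fin N → Fin N) := by
    intro x y hxy
    rcases lt_trichotomy (w.symm x) (w.symm y) with h1 | h1 | h1
    · exact h1
    · exact absurd (by rw [← w.apply_symm_apply x, ← w.apply_symm_apply y, h1]) (ne_of_lt hxy)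
    · exact absurd (by
        calc y = w (w.symm y) := (w.apply_symm_apply y).symm
        _ < w (w.symm x) := h h1
        _ = x := w.apply_symm_apply x) (not_lt.2 (le_of_lt hxy))
  ext i
  have h1 := key w h i
  have h2 := key w.symm hsymm (w i)
  rw [Equiv.symm_apply_apply] at h2
  have hwi : w i = i := le_antisymm h2 h1
  simp [hwi]

lemma exists_descent {n : ℕ} (w : Equiv.Perm (Fin (n + 1))) (hw : w ≠ 1) :
    ∃ i : Fin n, w i.succ < w i.castSucc := by
  by_contra hcon
  push_neg at hcon
  apply hw
  apply eq_one_of_strictMono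
  rw [Fin.strictMono_iff_lt_succ]
  intro i
  rcases lt_or_eq_of_le (hcon i) with h | h
  · exact h
  · exact absurd (w.injective h) (ne_of_lt (Fin.castSucc_lt_succ (i := i)))

lemma invCount_one : invCount (1 : Equiv.Perm (Fin N)) = 0 := by
  rw [invCount, Finset.card_eq_zero]
  ext p
  simp only [mem_invSet, Finset.notMem_empty, iff_false, not_and]
  intro h1 h2
  exact absurd h2 (not_lt.2 (le_of_lt h1))

section Cox

variable {n : ℕ} (cs : CoxeterSystem (CoxeterMatrix.Aₙ n) (Equiv.Perm (Fin (n + 1))))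
  (hsimple : ∀ i : Fin n, cs.simple i = Equiv.swap i.castSucc i.succ)

include hsimple

lemma invCount_wordProd_le (ω : List (Fin n)) : invCount (cs.wordProd ω) ≤ ω.length := by
  induction ω using List.reverseRecOn with
  | nil => rw [CoxeterSystem.wordProd_nil]; simp [invCount_one]
  | append_singleton ω i ih =>
    rw [CoxeterSystem.wordProd_append, CoxeterSystem.wordProd_singleton, hsimple,
      List.length_append, List.length_singleton]
    rcases invCount_mul_simple_cases (cs.wordProd ω) i with h | h <;> omega

lemma invCount_le_length (w : Equiv.Perm (Fin (n + 1))) : invCount w ≤ cs.length w := by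
  obtain ⟨ω, h1, h2⟩ := cs.exists_reduced_word w
  subst h2
  rw [show cs.length (cs.wordProd ω) = ω.length from h1]
  exact invCount_wordProd_le cs hsimple ω

lemma length_le_invCount (w : Equiv.Perm (Fin (n + 1))) : cs.length w ≤ invCount w := by
  generalize hm : invCount w = m
  induction m using Nat.strong_induction_on generalizing w with
  | _ m ih =>
    by_cases hw : w = 1
    · subst hw
      simp [CoxeterSystem.length_one]
    · obtain ⟨i, hi⟩ := exists_descent w hw
      have hdec := invCount_mul_swap_adj_gt hi
      have hw' : w = (w * Equiv.swap i.castSucc i.succ) * cs.simple i := by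
        rw [hsimple, mul_assoc, Equiv.swap_mul_self, mul_one]
      have hlen : cs.length w ≤ cs.length (w * Equiv.swap i.castSucc i.succ) + 1 := by
        nth_rewrite 1 [hw']
        calc cs.length _ ≤ cs.length (w * Equiv.swap i.castSucc i.succ) +
            cs.length (cs.simple i) := cs.length_mul_le _ _
        _ = cs.length (w * Equiv.swap i.castSucc i.succ) + 1 := by rw [cs.length_simple]
      have h2 : invCount (w * Equiv.swap i.castSucc i.succ) < m := by omega
      have h3 := ih _ h2 _ rfl
      omega

lemma length_eq_invCount (w : Equiv.Perm (Fin (n + 1))) : cs.length w = invCount w :=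
  le_antisymm (length_le_invCount cs hsimple w) (invCount_le_length cs hsimple w)

end Cox

/-- the set of sorted pairs -/
def allPairs (N : ℕ) : Finset (Fin N × Fin N) := Finset.univ.filter fun p => p.1 < p.2

lemma invCount_def (w : Equiv.Perm (Fin N)) : invCount w = (invSet w).card := rfl

lemma invSet_subset_allPairs {w : Equiv.Perm (Fin N)} : invSet w ⊆ allPairs N := by
  intro p hp
  rw [mem_invSet] at hp
  simp [allPairs, hp.1]

lemma invCount_add_rev {n : ℕ} (w : Equiv.Perm (Fin (n + 1))) :
    invCount (w * Fin.revPerm) + invCount w = (allPairs (n + 1)).card := by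
  have key : invCount (w * Fin.revPerm) = ((allPairs (n + 1)) \ invSet w).card := by
    refine Finset.card_bij' (fun p _ => (Fin.rev p.2, Fin.rev p.1))
      (fun p _ => (Fin.rev p.2, Fin.rev p.1)) ?_ ?_ ?_ ?_
    · intro p hp
      rw [mem_invSet] at hp
      obtain ⟨hlt, hval⟩ := hp
      simp only [Equiv.Perm.mul_apply, Fin.revPerm_apply] at hval
      rw [Finset.mem_sdiff, mem_invSet]
      constructor
      · simp only [allPairs, Finset.mem_filter, Finset.mem_univ, true_and]
        exact Fin.rev_lt_rev.2 hlt
      · rintro ⟨-, h⟩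
        exact lt_asymm hval h
    · intro p hp
      rw [Finset.mem_sdiff, mem_invSet] at hp
      obtain ⟨hall, hnot⟩ := hp
      simp only [allPairs, Finset.mem_filter, Finset.mem_univ, true_and] at hall
      rw [mem_invSet]
      refine ⟨Fin.rev_lt_rev.2 hall, ?_⟩
      simp only [Equiv.Perm.mul_apply, Fin.revPerm_apply, Fin.rev_rev]
      have hne : w p.1 ≠ w p.2 := fun h => (ne_of_lt hall) (w.injective h)
      rcases lt_or_gt_of_ne hne with h | h
      · exact h
      · exact absurd ⟨hall, h⟩ hnot
    · intro p _; simp [Fin.rev_rev]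
    · intro p _; simp [Fin.rev_rev]
  rw [key, invCount_def, Finset.card_sdiff_add_card_eq_card invSet_subset_allPairs]

lemma allPairs_card (N : ℕ) : 2 * (allPairs N).card + N = N * N := by
  classical
  have hsplit := Finset.card_filter_add_card_filter_not
    (s := (Finset.univ : Finset (Fin N × Fin N))) (p := fun p => p.1 < p.2)
  have huniv : (Finset.univ : Finset (Fin N × Fin N)).card = N * N := by
    rw [Finset.card_univ, Fintype.card_prod, Fintype.card_fin]
  have hneg : (Finset.univ.filter fun p : Fin N × Fin N => ¬p.1 < p.2) =
      (Finset.univ.filter fun p : Fin N × Fin N => p.2 < p.1) ∪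
      (Finset.univ.filter fun p : Fin N × Fin N => p.1 = p.2) := by
    ext p
    simp only [Finset.mem_filter, Finset.mem_union, Finset.mem_univ, true_and, not_lt]
    constructor
    · intro h
      rcases lt_or_eq_of_le h with h | h
      · exact Or.inl h
      · exact Or.inr h.symm
    · rintro (h | h)
      · exact le_of_lt h
      · exact le_of_eq h.symm
  have hdisj : Disjoint (Finset.univ.filter fun p : Fin N × Fin N => p.2 < p.1)
      (Finset.univ.filter fun p : Fin N × Fin N => p.1 = p.2) := by
    rw [Finset.disjoint_left]
    intro p hp hq
    simp only [Finset.mem_filter, Finset.mem_univ, true_and] at hp hq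
    exact absurd (hq ▸ hp) (lt_irrefl _)
  have hgt : (Finset.univ.filter fun p : Fin N × Fin N => p.2 < p.1).card =
      (allPairs N).card := by
    refine Finset.card_bij' (fun p _ => (p.2, p.1)) (fun p _ => (p.2, p.1)) ?_ ?_ ?_ ?_
    · intro p hp
      simp only [allPairs, Finset.mem_filter, Finset.mem_univ, true_and] at hp ⊢
      exact hp
    · intro p hp
      simp only [allPairs, Finset.mem_filter, Finset.mem_univ, true_and] at hp ⊢
      exact hp
    · intro p _; rfl
    · intro p _; rfl
  have hdiag : (Finset.univ.filter fun p : Fin N × Fin N => p.1 = p.2).card = N := by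
    have : (Finset.univ.filter fun p : Fin N × Fin N => p.1 = p.2) =
        Finset.univ.image (fun i : Fin N => (i, i)) := by
      ext p
      simp only [Finset.mem_filter, Finset.mem_univ, true_and, Finset.mem_image]
      constructor
      · intro h
        exact ⟨p.1, Prod.ext_iff.2 ⟨rfl, h⟩⟩
      · rintro ⟨i, rfl⟩
        rfl
    rw [this, Finset.card_image_of_injective _ (fun a b h => (Prod.ext_iff.1 h).1),
      Finset.card_univ, Fintype.card_fin]
  rw [hneg, Finset.card_union_of_disjoint hdisj, hgt, hdiag] at hsplit
  rw [huniv] at hsplit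
  have : (Finset.univ.filter fun p : Fin N × Fin N => p.1 < p.2).card = (allPairs N).card := rfl
  rw [this] at hsplit
  omega

section Refl

variable {n : ℕ} (cs : CoxeterSystem (CoxeterMatrix.Aₙ n) (Equiv.Perm (Fin (n + 1))))
  (hsimple : ∀ i : Fin n, cs.simple i = Equiv.swap i.castSucc i.succ)

include hsimple

lemma isReflection_swap (hn : 1 ≤ n) {a b : Fin (n + 1)} (hab : a ≠ b) :
    cs.IsReflection (Equiv.swap a b) := by
  set i0 : Fin n := ⟨0, hn⟩ with hi0
  set c0 : Fin (n + 1) := ⟨0, by omega⟩ with hc0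
  set c1 : Fin (n + 1) := ⟨1, by omega⟩ with hc1
  have hcc : i0.castSucc = c0 := rfl
  have hcs : i0.succ = c1 := rfl
  have hc01 : c0 ≠ c1 := by simp [hc0, hc1, Fin.ext_iff]
  set u := Equiv.swap c0 a with hu
  set d := u b with hd
  have hdc0 : d ≠ c0 := by
    intro h
    apply hab
    have h2 : u d = u c0 := congrArg u h
    rw [hd, Equiv.swap_apply_self, hu, Equiv.swap_apply_left] at h2
    exact h2.symm
  set w := u * Equiv.swap c1 d with hw
  have hw0 : w c0 = a := by
    rw [hw, Equiv.Perm.mul_apply, Equiv.swap_apply_of_ne_of_ne hc01 (Ne.symm hdc0), hu,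
      Equiv.swap_apply_left]
  have hw1 : w c1 = b := by
    rw [hw, Equiv.Perm.mul_apply, Equiv.swap_apply_left, hd, hu, Equiv.swap_apply_self]
  have key : w * Equiv.swap c0 c1 * w⁻¹ = Equiv.swap a b := by
    rw [← Equiv.swap_apply_apply, hw0, hw1]
  rw [← key, ← hcc, ← hcs, ← hsimple i0]
  exact (cs.isReflection_simple i0).conj w

lemma card_support_of_isReflection {t : Equiv.Perm (Fin (n + 1))} (ht : cs.IsReflection t) :
    t.support.card = 2 := by
  obtain ⟨w, i, rfl⟩ := ht
  rw [hsimple, ← Equiv.swap_apply_apply]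
  exact Equiv.Perm.card_support_swap
    (fun h => (ne_of_lt (Fin.castSucc_lt_succ (i := i))) (w.injective h))

end Refl

lemma card_support_list_prod_le {N : ℕ} (l : List (Equiv.Perm (Fin N)))
    (hl : ∀ t ∈ l, t.support.card ≤ 2) : l.prod.support.card ≤ 2 * l.length := by
  induction l with
  | nil => simp
  | cons a l ih =>
    have h1 : (a * l.prod).support ⊆ a.support ∪ l.prod.support :=
      Equiv.Perm.support_mul_le a l.prod
    have h2 := hl a (List.mem_cons_self)
    have h3 := ih (fun t ht => hl t (List.mem_cons_of_mem a ht))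
    calc (List.prod (a :: l)).support.card = (a * l.prod).support.card := by
          rw [List.prod_cons]
    _ ≤ (a.support ∪ l.prod.support).card := Finset.card_le_card h1
    _ ≤ a.support.card + l.prod.support.card := Finset.card_union_le _ _
    _ ≤ 2 * (a :: l).length := by rw [List.length_cons]; omega

lemma n_le_card_support_revPerm {n : ℕ} :
    n ≤ (Fin.revPerm : Equiv.Perm (Fin (n + 1))).support.card := by
  have h1 : ((Fin.revPerm : Equiv.Perm (Fin (n + 1))).supportᶜ).card ≤ 1 := by
    rw [Finset.card_le_one]
    intro a ha b hb
    rw [Finset.mem_compl, Equiv.Perm.notMem_support] at ha hb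
    have ha' : (Fin.rev a).val = a.val := by rw [show Fin.rev a = a from ha]
    have hb' : (Fin.rev b).val = b.val := by rw [show Fin.rev b = b from hb]
    rw [Fin.val_rev] at ha' hb'
    have h2 := a.isLt
    have h3 := b.isLt
    apply Fin.ext
    omega
  have h4 := Finset.card_add_card_compl (Fin.revPerm : Equiv.Perm (Fin (n + 1))).support
  rw [Fintype.card_fin] at h4
  omega

/-- The witness permutation: evens ascending, then odds descending. -/
def wit (n : ℕ) : Equiv.Perm (Fin (n + 1)) where
  toFun i := ⟨if 2 * i.val ≤ n then 2 * i.val else 2 * (n - i.val) + 1, by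
    have := i.isLt; split_ifs <;> omega⟩
  invFun v := ⟨if v.val % 2 = 0 then v.val / 2 else n - v.val / 2, by
    have := v.isLt; split_ifs <;> omega⟩
  left_inv := by
    intro i
    have hi := i.isLt
    apply Fin.ext
    simp only
    split_ifs <;> omega
  right_inv := by
    intro v
    have hv := v.isLt
    apply Fin.ext
    simp only
    split_ifs <;> omega

lemma wit_apply_val {n : ℕ} (i : Fin (n + 1)) :
    ((wit n) i).val = if 2 * i.val ≤ n then 2 * i.val else 2 * (n - i.val) + 1 := rfl

/-- `fm n m` is `m` as an element of `Fin (n+1)`, clamped. -/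
def fm (n m : ℕ) : Fin (n + 1) := ⟨min m n, by omega⟩

lemma fm_val {n m : ℕ} (h : m ≤ n) : (fm n m).val = m := by simp [fm, min_eq_left h]

/-- partial products of the disjoint transpositions `(j, n-j)`. -/
def PP (n : ℕ) : ℕ → Equiv.Perm (Fin (n + 1))
  | 0 => 1
  | j + 1 => PP n j * Equiv.swap (fm n j) (fm n (n - j))

lemma PP_apply {n : ℕ} : ∀ j, 2 * j ≤ n + 1 → ∀ p : Fin (n + 1),
    ((PP n j) p).val = if p.val < j ∨ n - j < p.val then n - p.val else p.val := by
  intro j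
  induction j with
  | zero =>
    intro _ p
    have hp := p.isLt
    rw [if_neg (by omega)]
    rfl
  | succ j ih =>
    intro hj p
    have hj' : 2 * j ≤ n + 1 := by omega
    have hjn : 2 * j < n := by omega
    have ha : (fm n j).val = j := fm_val (by omega)
    have hb : (fm n (n - j)).val = n - j := fm_val (by omega)
    have hp := p.isLt
    have hPP : PP n (j + 1) = PP n j * Equiv.swap (fm n j) (fm n (n - j)) := rfl
    rw [hPP, Equiv.Perm.mul_apply]
    by_cases hpa : p = fm n j
    · rw [hpa, Equiv.swap_apply_left, ih hj' _, ha, hb]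
      split_ifs <;> omega
    · by_cases hpb : p = fm n (n - j)
      · rw [hpb, Equiv.swap_apply_right, ih hj' _, ha, hb]
        split_ifs <;> omega
      · rw [Equiv.swap_apply_of_ne_of_ne hpa hpb, ih hj' _]
        have hva : p.val ≠ j := fun h => hpa (Fin.ext (by rw [ha, h]))
        have hvb : p.val ≠ n - j := fun h => hpb (Fin.ext (by rw [hb, h]))
        split_ifs <;> omega

lemma PP_final {n : ℕ} : PP n ((n + 1) / 2) = Fin.revPerm := by
  apply Equiv.ext
  intro p
  apply Fin.ext
  have h1 := PP_apply ((n + 1) / 2) (by omega) p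
  have hp := p.isLt
  rw [h1, Fin.revPerm_apply, Fin.val_rev]
  split_ifs <;> omega

section Main

variable {n : ℕ} (cs : CoxeterSystem (CoxeterMatrix.Aₙ n) (Equiv.Perm (Fin (n + 1))))
  (hsimple : ∀ i : Fin n, cs.simple i = Equiv.swap i.castSucc i.succ)

include hsimple

lemma chain (hn : 1 ≤ n) : ∀ j, 2 * j ≤ n + 1 →
    Relation.ReflTransGen (fun a b => ∃ t : Equiv.Perm (Fin (n + 1)),
      cs.IsReflection t ∧ b = a * t ∧ cs.length a < cs.length b) (wit n) (wit n * PP n j) ∧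
    invCount (wit n * PP n j) = invCount (wit n) + j := by
  intro j
  induction j with
  | zero =>
    intro _
    constructor
    · rw [show PP n 0 = 1 from rfl, mul_one]
    · rw [show PP n 0 = 1 from rfl, mul_one, add_zero]
  | succ j ih =>
    intro hj
    have hj' : 2 * j ≤ n + 1 := by omega
    obtain ⟨hchain, hinv⟩ := ih hj'
    have hjn : 2 * j < n := by omega
    have ha : (fm n j).val = j := fm_val (by omega)
    have hb : (fm n (n - j)).val = n - j := fm_val (by omega)
    have hab : fm n j < fm n (n - j) := by rw [Fin.lt_def, ha, hb]; omega
    have hPa : (PP n j) (fm n j) = fm n j := by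
      apply Fin.ext
      rw [PP_apply j hj' _, ha, if_neg (by omega)]
    have hPb : (PP n j) (fm n (n - j)) = fm n (n - j) := by
      apply Fin.ext
      rw [PP_apply j hj' _, hb, if_neg (by omega)]
    have hwa : ((wit n * PP n j) (fm n j)).val = 2 * j := by
      rw [Equiv.Perm.mul_apply, hPa, wit_apply_val, ha, if_pos (by omega)]
    have hwb : ((wit n * PP n j) (fm n (n - j))).val = 2 * j + 1 := by
      rw [Equiv.Perm.mul_apply, hPb, wit_apply_val, hb, if_neg (by omega)]
      omega
    have hstep : invCount ((wit n * PP n j) * Equiv.swap (fm n j) (fm n (n - j)))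
        = invCount (wit n * PP n j) + 1 :=
      invCount_mul_swap_consec hab (by rw [hwa, hwb])
    have hmul : wit n * PP n (j + 1) =
        (wit n * PP n j) * Equiv.swap (fm n j) (fm n (n - j)) := by
      rw [show PP n (j + 1) = PP n j * Equiv.swap (fm n j) (fm n (n - j)) from rfl, mul_assoc]
    constructor
    · apply hchain.tail
      refine ⟨Equiv.swap (fm n j) (fm n (n - j)),
        isReflection_swap cs hsimple hn (ne_of_lt hab), hmul, ?_⟩
      rw [length_eq_invCount cs hsimple, length_eq_invCount cs hsimple, hmul, hstep]
      omega
    · rw [hmul, hstep, hinv]; omega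

lemma bruhat_chain_decomp (x y : Equiv.Perm (Fin (n + 1)))
    (h : Relation.ReflTransGen (fun a b => ∃ t : Equiv.Perm (Fin (n + 1)),
      cs.IsReflection t ∧ b = a * t ∧ cs.length a < cs.length b) x y) :
    ∃ l : List (Equiv.Perm (Fin (n + 1))), (∀ t ∈ l, cs.IsReflection t) ∧
      y = x * l.prod ∧ cs.length x + l.length ≤ cs.length y := by
  induction h with
  | refl => exact ⟨[], by simp, by simp, by simp⟩
  | tail h1 h2 ih =>
    obtain ⟨l, hl, rfl, hle⟩ := ih
    obtain ⟨t, ht, rfl, hlt⟩ := h2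
    refine ⟨l ++ [t], ?_, by rw [List.prod_append, List.prod_singleton, mul_assoc], ?_⟩
    · intro u hu
      rcases List.mem_append.1 hu with h | h
      · exact hl u h
      · rw [List.mem_singleton.1 h]; exact ht
    · rw [List.length_append, List.length_singleton]
      omega

lemma main_result (hn : 1 ≤ n) :
    sSup {m : ℕ | ∃ x : Equiv.Perm (Fin (n + 1)),
        (Relation.ReflTransGen (fun a b => ∃ t : Equiv.Perm (Fin (n + 1)),
          cs.IsReflection t ∧ b = a * t ∧ cs.length a < cs.length b)) x (x * Fin.revPerm) ∧
        cs.length x = m} = n ^ 2 / 4 := by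
  classical
  have hlen : ∀ w, cs.length w = invCount w := length_eq_invCount cs hsimple
  have hAval : 2 * (allPairs (n + 1)).card + (n + 1) = (n + 1) * (n + 1) := allPairs_card (n + 1)
  have hA2 : (n + 1) * (n + 1) = n ^ 2 + 2 * n + 1 := by ring
  obtain ⟨hch, hwinv⟩ := chain cs hsimple hn ((n + 1) / 2) (by omega)
  rw [PP_final] at hch hwinv
  have hcomp := invCount_add_rev (wit n)
  have hk : invCount (wit n) = n ^ 2 / 4 := by
    rcases Nat.even_or_odd' n with ⟨c, hc | hc⟩
    · have hsq : n ^ 2 = 4 * (c * c) := by rw [hc]; ring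
      omega
    · have hsq : n ^ 2 = 4 * (c * c) + 4 * c + 1 := by rw [hc]; ring
      omega
  have hmem : n ^ 2 / 4 ∈ {m : ℕ | ∃ x : Equiv.Perm (Fin (n + 1)),
      (Relation.ReflTransGen (fun a b => ∃ t : Equiv.Perm (Fin (n + 1)),
        cs.IsReflection t ∧ b = a * t ∧ cs.length a < cs.length b)) x (x * Fin.revPerm) ∧
      cs.length x = m} := ⟨wit n, hch, by rw [hlen]; exact hk⟩
  have hub : ∀ m ∈ {m : ℕ | ∃ x : Equiv.Perm (Fin (n + 1)),
      (Relation.ReflTransGen (fun a b => ∃ t : Equiv.Perm (Fin (n + 1)),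
        cs.IsReflection t ∧ b = a * t ∧ cs.length a < cs.length b)) x (x * Fin.revPerm) ∧
      cs.length x = m}, m ≤ n ^ 2 / 4 := by
    rintro m ⟨x, hx, rfl⟩
    obtain ⟨l, hl, heq, hle⟩ := bruhat_chain_decomp cs hsimple x _ hx
    have hprod : l.prod = Fin.revPerm := mul_left_cancel heq.symm
    have h1 := card_support_list_prod_le l
      (fun t ht => le_of_eq (card_support_of_isReflection cs hsimple (hl t ht)))
    rw [hprod] at h1
    have h2 := n_le_card_support_revPerm (n := n)
    have hcomp2 := invCount_add_rev x
    rw [hlen, hlen] at hle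
    rw [hlen]
    omega
  exact le_antisymm (csSup_le ⟨_, hmem⟩ hub) (le_csSup ⟨n ^ 2 / 4, hub⟩ hmem)

end Main

end Stmt13

/-- Let `n ≥ 1` and let `W = S_{n+1}` be the symmetric group with its Coxeter system of
type `Aₙ` given by the adjacent transpositions `sᵢ = (i, i+1)`, with Bruhat order `≤`
and longest element `w₀` the order-reversing permutation.  Then
`max {ℓ(x) : x ∈ S_{n+1}, x ≤ x w₀} = ⌊n² / 4⌋`. -/
theorem statement13 (n : ℕ) (hn : 1 ≤ n)
    (cs : CoxeterSystem (CoxeterMatrix.Aₙ n) (Equiv.Perm (Fin (n + 1))))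
    (hsimple : ∀ i : Fin n, cs.simple i = Equiv.swap i.castSucc i.succ) :
    sSup {m : ℕ | ∃ x : Equiv.Perm (Fin (n + 1)),
        BruhatLE cs x (x * Fin.revPerm) ∧ cs.length x = m} = n ^ 2 / 4 := by
  exact Stmt13.main_result cs hsimple hn
end

section
/- Let m ≥ 2 and let (W, {s₁, s₂}) be the finite dihedral Coxeter system of type I₂(m), with Bruhat order ≤, length function ℓ, and longest element w₀ of length m. Then max{ℓ(x) : x ∈ W, x ≤ x w₀} = ⌈m/2⌉ − 1. -/
namespace Statement16Aux

open CoxeterSystem List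

/-- Splitting an alternating word into a prefix and a suffix. -/
theorem altSplit {B : Type*} (c d : B) (a n : ℕ) :
    alternatingWord c d (a + n) =
      (if Even n then alternatingWord c d a else alternatingWord d c a)
        ++ alternatingWord c d n := by
  induction n generalizing c d with
  | zero => simp [alternatingWord]
  | succ n ih =>
    rw [show a + (n + 1) = (a + n) + 1 from rfl, alternatingWord_succ c d,
      ih d c, alternatingWord_succ c d n]
    rcases Nat.even_or_odd n with h | h
    · have h1 : ¬ Even (n + 1) := by simp [Nat.even_add_one, h]
      simp [h, h1, List.concat_eq_append]
    · have h0 : ¬ Even n := by simpa [Nat.not_even_iff_odd] using h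
      have h1 : Even (n + 1) := by simpa [Nat.even_add_one] using h0
      simp [h0, h1, List.concat_eq_append]

variable {B W : Type*} [Group W] {M : CoxeterMatrix B} (cs : CoxeterSystem M W)

/-- Reduced words have no two adjacent equal letters. -/
theorem chain'_of_isReduced : ∀ ω : List B, cs.IsReduced ω → List.Chain' (· ≠ ·) ω
  | [], _ => List.isChain_nil
  | [x], _ => List.isChain_singleton x
  | x :: y :: ρ, h => by
    have htail : cs.IsReduced (y :: ρ) := by
      simpa using h.drop 1
    refine List.isChain_cons_cons.mpr ⟨?_, chain'_of_isReduced (y :: ρ) htail⟩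
    rintro rfl
    have hw : cs.wordProd (x :: x :: ρ) = cs.wordProd ρ := by
      rw [cs.wordProd_cons, cs.wordProd_cons, ← mul_assoc, cs.simple_mul_simple_self, one_mul]
    have h2 : cs.length (cs.wordProd (x :: x :: ρ)) ≤ ρ.length := by
      rw [hw]; exact cs.length_wordProd_le ρ
    unfold CoxeterSystem.IsReduced at h
    rw [h] at h2
    simp only [List.length_cons] at h2
    omega

/-- A word over `Fin 2` with no two adjacent equal letters is an alternating word. -/
theorem alt_of_chain' : ∀ ω : List (Fin 2), List.Chain' (· ≠ ·) ω →
    ∃ i i' : Fin 2, i ≠ i' ∧ ω = alternatingWord i i' ω.length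
  | [], _ => ⟨0, 1, by decide, rfl⟩
  | [x], _ => by
    refine ⟨x + 1, x, by fin_cases x <;> decide, ?_⟩
    simp [alternatingWord]
  | x :: y :: ρ, h => by
    obtain ⟨hxy, htail⟩ := List.isChain_cons_cons.mp h
    obtain ⟨i, i', hii, heq⟩ := alt_of_chain' (y :: ρ) htail
    have hlen : (y :: ρ).length = ρ.length + 1 := rfl
    rw [hlen] at heq
    have hy : y = if Even ρ.length then i' else i := by
      rw [alternatingWord_succ'] at heq
      exact (List.cons_eq_cons.mp heq).1
    have fact : ∀ a b c : Fin 2, a ≠ b → c ≠ b → a = c := by decide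
    refine ⟨i, i', hii, ?_⟩
    have : (x :: y :: ρ).length = (ρ.length + 1) + 1 := rfl
    rw [this, alternatingWord_succ' i i' (ρ.length + 1), ← heq]
    congr 1
    rcases Nat.even_or_odd ρ.length with he | ho
    · have h1 : ¬ Even (ρ.length + 1) := by simp [Nat.even_add_one, he]
      rw [if_neg h1]
      rw [if_pos he] at hy
      exact fact x i' i (hy ▸ hxy) hii
    · have h0 : ¬ Even ρ.length := by simpa [Nat.not_even_iff_odd] using ho
      have h1 : Even (ρ.length + 1) := by simpa [Nat.even_add_one] using h0
      rw [if_pos h1]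
      rw [if_neg h0] at hy
      exact fact x i i' (hy ▸ hxy) (Ne.symm hii)

/-- Every element of a rank-2 Coxeter group is the product of an alternating word
of length `ℓ w`. -/
theorem exists_alt {W : Type*} [Group W] {M : CoxeterMatrix (Fin 2)}
    (cs : CoxeterSystem M W) (w : W) :
    ∃ i i' : Fin 2, i ≠ i' ∧ w = cs.wordProd (alternatingWord i i' (cs.length w)) := by
  obtain ⟨ω, hred, hw⟩ := cs.exists_reduced_word' w
  obtain ⟨i, i', hii, heq⟩ := alt_of_chain' ω (chain'_of_isReduced cs ω hred)
  have hl : ω.length = cs.length w := by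
    unfold CoxeterSystem.IsReduced at hred
    rw [← hred, ← hw]
  refine ⟨i, i', hii, ?_⟩
  rw [← hl, ← heq]
  exact hw

/-- The product of an alternating word of odd length is a reflection. -/
theorem isReflection_alt : ∀ (j : ℕ) (i i' : B),
    cs.IsReflection (cs.wordProd (alternatingWord i i' (2 * j + 1)))
  | 0, i, i' => by
    have : alternatingWord i i' (2 * 0 + 1) = [i'] := by simp [alternatingWord]
    rw [this]
    simpa using cs.isReflection_simple i'
  | j + 1, i, i' => by
    have h : 2 * (j + 1) + 1 = (2 * j + 1 + 1) + 1 := by ring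
    rw [h, alternatingWord_succ' i i' (2 * j + 1 + 1), alternatingWord_succ i i' (2 * j + 1),
      cs.wordProd_cons, cs.wordProd_concat]
    rw [if_pos (by exact ⟨j + 1, by ring⟩)]
    have ht := isReflection_alt j i' i
    have h2 := ht.conj (cs.simple i')
    rw [cs.inv_simple] at h2
    simpa [mul_assoc] using h2

end Statement16Aux

/-- Let `m ≥ 2` and let `(W, {s₁, s₂})` be the finite dihedral Coxeter system of type
`I₂(m)` (the Coxeter matrix `CoxeterMatrix.I₂ₘ (m - 2)` has off-diagonal entry `m`),
with Bruhat order `≤`, length function `ℓ`, and longest element `w₀` of length `m`.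
Then `max {ℓ(x) : x ∈ W, x ≤ x w₀} = ⌈m / 2⌉ - 1`. -/
theorem statement16 {W : Type*} [Group W] (m : ℕ) (hm : 2 ≤ m)
    (cs : CoxeterSystem (CoxeterMatrix.I (m - 2)) W)
    (w₀ : W) (hw₀ : ∀ w, cs.length w ≤ cs.length w₀) (hlen : cs.length w₀ = m) :
    sSup {k : ℕ | ∃ x : W, BruhatLE cs x (x * w₀) ∧ cs.length x = k} =
      (m + 1) / 2 - 1 := by
  open CoxeterSystem Statement16Aux in
  -- the Coxeter matrix entries
  have hM : ∀ i i' : Fin 2, i ≠ i' → (CoxeterMatrix.I (m - 2)) i i' = m := by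
    intro i i' h
    simp only [CoxeterMatrix.I, Matrix.of_apply, if_neg h]
    omega
  -- w₀ is the product of either alternating word of length m
  have hW0 : ∀ i i' : Fin 2, i ≠ i' →
      w₀ = cs.wordProd (alternatingWord i i' m) := by
    obtain ⟨a, b, hab, hw⟩ := exists_alt cs w₀
    rw [hlen] at hw
    have hbraid := cs.wordProd_braidWord_eq a b
    unfold CoxeterSystem.braidWord at hbraid
    rw [hM a b hab, hM b a (Ne.symm hab)] at hbraid
    have two : ∀ a b i i' : Fin 2, a ≠ b → i ≠ i' →
        (i = a ∧ i' = b) ∨ (i = b ∧ i' = a) := by decide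
    intro i i' hii
    rcases two a b i i' hab hii with ⟨rfl, rfl⟩ | ⟨rfl, rfl⟩
    · exact hw
    · rw [hw, hbraid]
  -- every element of odd length is a reflection
  have hrefl : ∀ w : W, cs.length w % 2 = 1 → cs.IsReflection w := by
    intro w hodd
    obtain ⟨i, i', hii, hw⟩ := exists_alt cs w
    obtain ⟨j, hj⟩ : ∃ j, cs.length w = 2 * j + 1 := ⟨cs.length w / 2, by omega⟩
    rw [hw, hj]
    exact isReflection_alt cs j i i'
  -- the key length bound : ℓ(x w₀) ≤ m - ℓ(x)
  have hF2 : ∀ x : W, cs.length (x * w₀) ≤ m - cs.length x := by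
    intro x
    set k := cs.length x with hk
    have hkm : k ≤ m := by have := hw₀ x; rw [hk]; omega
    obtain ⟨α, hred, hx⟩ := cs.exists_reduced_word' x
    have hαlen : α.length = k := by
      unfold CoxeterSystem.IsReduced at hred
      rw [← hred, ← hx]
    have hrev : cs.IsReduced α.reverse := (cs.isReduced_reverse_iff α).mpr hred
    obtain ⟨c, d, hcd, heq⟩ := alt_of_chain' α.reverse (chain'_of_isReduced cs _ hrev)
    rw [List.length_reverse, hαlen] at heq
    -- choose the alternating word for w₀ whose first k letters are α.reverse
    have key : ∃ ρ : List (Fin 2), ρ.length = m - k ∧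
        w₀ = cs.wordProd (α.reverse ++ ρ) := by
      rcases Nat.even_or_odd (m - k) with he | ho
      · refine ⟨alternatingWord c d (m - k), by simp, ?_⟩
        have hsplit : alternatingWord c d m = α.reverse ++ alternatingWord c d (m - k) := by
          conv_lhs => rw [show m = k + (m - k) from by omega]
          rw [altSplit, if_pos he, heq]
        rw [hW0 c d hcd, hsplit]
      · refine ⟨alternatingWord d c (m - k), by simp, ?_⟩
        have hsplit : alternatingWord d c m = α.reverse ++ alternatingWord d c (m - k) := by
          conv_lhs => rw [show m = k + (m - k) from by omega]
          rw [altSplit, if_neg (by simpa [Nat.not_even_iff_odd] using ho), heq]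
        rw [hW0 d c (Ne.symm hcd), hsplit]
    obtain ⟨ρ, hρlen, hρ⟩ := key
    have : x * w₀ = cs.wordProd ρ := by
      rw [hρ, cs.wordProd_append, cs.wordProd_reverse, ← hx, ← mul_assoc,
        mul_inv_cancel, one_mul]
    rw [this]
    calc cs.length (cs.wordProd ρ) ≤ ρ.length := cs.length_wordProd_le ρ
      _ = m - k := hρlen
  -- abbreviation for the Bruhat step relation
  set r : W → W → Prop :=
    fun a b => ∃ t : W, cs.IsReflection t ∧ b = a * t ∧ cs.length a < cs.length b with hr
  -- a step between any two elements of suitable lengths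
  have hstep : ∀ a b : W, cs.length a < cs.length b →
      (cs.length a + cs.length b) % 2 = 1 → r a b := by
    intro a b hab hpar
    refine ⟨a⁻¹ * b, ?_, by group, hab⟩
    apply hrefl
    have := cs.length_mul_mod_two a⁻¹ b
    rw [cs.length_inv] at this
    omega
  set k₀ := (m + 1) / 2 - 1 with hk₀
  apply IsGreatest.csSup_eq
  constructor
  · -- k₀ is attained
    obtain ⟨ω₀, hred₀, hw₀eq⟩ := cs.exists_reduced_word' w₀
    have hω₀len : ω₀.length = m := by
      unfold CoxeterSystem.IsReduced at hred₀
      rw [← hred₀, ← hw₀eq, hlen]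
    set c : ℕ → W := fun j => cs.wordProd (ω₀.take j) with hc
    have hclen : ∀ j, j ≤ m → cs.length (c j) = j := by
      intro j hj
      have := hred₀.take j
      unfold CoxeterSystem.IsReduced at this
      rw [hc]
      simp only []
      rw [this, List.length_take, hω₀len]
      omega
    have hchain : ∀ dd : ℕ, k₀ + dd ≤ m →
        Relation.ReflTransGen r (c k₀) (c (k₀ + dd)) := by
      intro dd
      induction dd with
      | zero => intro _; exact Relation.ReflTransGen.refl
      | succ n ih =>
        intro hle
        refine Relation.ReflTransGen.tail (ih (by omega)) ?_
        apply hstep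
        · rw [hclen (k₀ + n) (by omega), hclen (k₀ + (n + 1)) (by omega)]; omega
        · rw [hclen (k₀ + n) (by omega), hclen (k₀ + (n + 1)) (by omega)]; omega
    set x := c k₀ with hx
    have hxlen : cs.length x = k₀ := hclen k₀ (by omega)
    refine ⟨x, ?_, hxlen⟩
    unfold BruhatLE
    rw [← hr]
    have h1 : Relation.ReflTransGen r (c k₀) (c (m - k₀ - 1)) := by
      have := hchain (m - k₀ - 1 - k₀) (by omega)
      rwa [show k₀ + (m - k₀ - 1 - k₀) = m - k₀ - 1 by omega] at this
    refine Relation.ReflTransGen.tail h1 ?_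
    have hxw : m - k₀ ≤ cs.length (x * w₀) := by
      have := cs.length_mul_ge_length_sub_length' x w₀
      rw [hlen, hxlen] at this
      omega
    have hxwpar : cs.length (x * w₀) % 2 = (k₀ + m) % 2 := by
      have := cs.length_mul_mod_two x w₀
      rw [hlen, hxlen] at this
      exact this
    apply hstep
    · rw [hclen (m - k₀ - 1) (by omega)]; omega
    · rw [hclen (m - k₀ - 1) (by omega)]; omega
  · -- upper bound
    rintro n ⟨x, hx, rfl⟩
    have mono : ∀ a b : W, Relation.ReflTransGen r a b →
        a = b ∨ cs.length a < cs.length b := by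
      intro a b h
      induction h with
      | refl => exact Or.inl rfl
      | tail h1 h2 ih =>
        obtain ⟨t, _, _, hlt⟩ := h2
        rcases ih with rfl | hlt' 
        · exact Or.inr hlt
        · exact Or.inr (lt_trans hlt' hlt)
    have hw₀ne : w₀ ≠ 1 := by
      intro h
      rw [h, cs.length_one] at hlen
      omega
    have : x ≠ x * w₀ := by
      intro h
      apply hw₀ne
      have := h.symm
      calc w₀ = x⁻¹ * (x * w₀) := by group
        _ = x⁻¹ * x := by rw [← h]
        _ = 1 := by group
    rcases mono x (x * w₀) hx with h | h
    · exact absurd h this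
    · have h2 := hF2 x
      have h3 : cs.length x ≤ m := by have := hw₀ x; omega
      omega
end
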